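/- arXiv:1405.5071 — 13 statements merged into one kernel-verified Lean document; each statement's English description precedes it below -/
import Mathlib

section
/- Let Γ be an additive abelian group and A a Γ-graded ring with grading 𝒜. If a ∈ A is a unit of A and a is homogeneous of degree γ (i.e. a ∈ 𝒜 γ), then its inverse is homogeneous of degree −γ, i.e. a⁻¹ ∈ 𝒜 (−γ). -/
/-- In a `Γ`-graded ring, the inverse of a homogeneous unit of degree `γ`
is homogeneous of degree `-γ`. -/
theorem inv_mem_neg_of_mem_graded {Γ : Type*} [AddCommGroup Γ] [DecidableEq Γ]
    {A : Type*} [Ring A] (𝒜 : Γ → AddSubgroup A) [GradedRing 𝒜]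
    (u : Aˣ) (γ : Γ) (h : (u : A) ∈ 𝒜 γ) :
    ((u⁻¹ : Aˣ) : A) ∈ 𝒜 (-γ) := by
  set b : A := ((u⁻¹ : Aˣ) : A) with hb
  set c : A := (DirectSum.decompose 𝒜 b (-γ) : A) with hc
  have hone : (DirectSum.decompose 𝒜 (1 : A) 0 : A) = 1 := by
    rw [DirectSum.decompose_of_mem_same 𝒜 (SetLike.one_mem_graded 𝒜)]
  have h1 : (u : A) * c = 1 := by
    have := DirectSum.coe_decompose_mul_add_of_left_mem 𝒜 (b := b) h (j := -γ)
    rw [Units.mul_inv, add_neg_cancel, hone] at this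
    exact this.symm
  have h2 : c * (u : A) = 1 := by
    have := DirectSum.coe_decompose_mul_add_of_right_mem 𝒜 (a := b) h (i := -γ)
    rw [Units.inv_mul, neg_add_cancel, hone] at this
    exact this.symm
  have hbc : b = c := by
    calc b = b * ((u : A) * c) := by rw [h1, mul_one]
    _ = (b * (u : A)) * c := by rw [mul_assoc]
    _ = c := by rw [hb, Units.inv_mul, one_mul]
  rw [hbc]
  exact (DirectSum.decompose 𝒜 b (-γ)).2
end

section
/- Let A be a graded simple Γ-graded ring with grading 𝒜, and let I be a (not necessarily graded) two-sided ideal of A. For x ∈ A write Γ_x = {γ ∈ Γ : x_γ ≠ 0} for the (finite) support of x, where x_γ is the degree-γ component of x. Let a ∈ I be nonzero, let γ₀ ∈ Γ_a, and let α ∈ Γ be such that 𝒜 α ≠ 0. Then there exists a nonzero b ∈ I with Γ_b ⊆ {γ − γ₀ + α : γ ∈ Γ_a}. -/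
open DirectSum

/-- In a graded simple ring, from a nonzero element `a` of a (not necessarily
graded) two-sided ideal `I`, with `γ₀` in the support of `a`, and `α` in the support of the ring,
one can produce a nonzero `b ∈ I` whose support is contained in `{γ - γ₀ + α : γ ∈ supp a}`. -/
theorem exists_mem_twoSidedIdeal_support_subset
    {Γ : Type*} [AddCommGroup Γ] [DecidableEq Γ]
    {A : Type*} [Ring A] (𝒜 : Γ → AddSubgroup A) [GradedRing 𝒜] [Nontrivial A]
    (hsimple : ∀ I : TwoSidedIdeal A,
      (∀ x ∈ I, ∀ γ : Γ, ((DirectSum.decompose 𝒜 x) γ : A) ∈ I) → I = ⊥ ∨ I = ⊤)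
    (I : TwoSidedIdeal A) (a : A) (haI : a ∈ I) (ha : a ≠ 0)
    (γ₀ : Γ) (hγ₀ : ((DirectSum.decompose 𝒜 a) γ₀ : A) ≠ 0)
    (α : Γ) (hα : 𝒜 α ≠ ⊥) :
    ∃ b ∈ I, b ≠ 0 ∧ ∀ δ : Γ, ((DirectSum.decompose 𝒜 b) δ : A) ≠ 0 →
      ∃ γ : Γ, ((DirectSum.decompose 𝒜 a) γ : A) ≠ 0 ∧ δ = γ - γ₀ + α := by
  classical
  set h : A := ((decompose 𝒜 a) γ₀ : A) with hh
  -- generating set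
  set T : Set A := {z | ∃ β δ : Γ, ∃ x y : A, x ∈ 𝒜 β ∧ y ∈ 𝒜 δ ∧ z = x * h * y} with hT
  set S := AddSubgroup.closure T with hS
  -- component of a finite sum
  have hdec_sum : ∀ (s : Finset Γ) (f : Γ → A) (μ : Γ),
      ((decompose 𝒜 (∑ i ∈ s, f i)) μ : A) = ∑ i ∈ s, ((decompose 𝒜 (f i)) μ : A) := by
    intro s f μ
    rw [decompose_sum, DFinsupp.finset_sum_apply, AddSubmonoidClass.coe_finset_sum]
  -- S is closed under left multiplication
  have hmul_left : ∀ (r : A) {z : A}, z ∈ S → r * z ∈ S := by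
    intro r z hz
    induction hz using AddSubgroup.closure_induction with
    | mem z hz =>
      obtain ⟨β, δ, x, y, hx, hy, rfl⟩ := hz
      rw [← DirectSum.sum_support_decompose 𝒜 r, Finset.sum_mul]
      refine AddSubgroup.sum_mem _ fun β' _ => AddSubgroup.subset_closure ?_
      refine ⟨β' + β, δ, ((decompose 𝒜 r) β' : A) * x, y,
        SetLike.mul_mem_graded ((decompose 𝒜 r) β').2 hx, hy, by simp [mul_assoc]⟩
    | zero => simpa using zero_mem S
    | add x y hx hy px py => simpa [mul_add] using add_mem px py
    | neg x hx px => simpa [mul_neg] using neg_mem px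
  -- S is closed under right multiplication
  have hmul_right : ∀ (r : A) {z : A}, z ∈ S → z * r ∈ S := by
    intro r z hz
    induction hz using AddSubgroup.closure_induction with
    | mem z hz =>
      obtain ⟨β, δ, x, y, hx, hy, rfl⟩ := hz
      rw [← DirectSum.sum_support_decompose 𝒜 r, Finset.mul_sum]
      refine AddSubgroup.sum_mem _ fun δ' _ => AddSubgroup.subset_closure ?_
      refine ⟨β, δ + δ', x, y * ((decompose 𝒜 r) δ' : A),
        hx, SetLike.mul_mem_graded hy ((decompose 𝒜 r) δ').2, by rw [mul_assoc]⟩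
    | zero => simpa using zero_mem S
    | add x y hx hy px py => simpa [add_mul] using add_mem px py
    | neg x hx px => simpa [neg_mul] using neg_mem px
  -- build the two-sided ideal
  let J : TwoSidedIdeal A := TwoSidedIdeal.mk' S (zero_mem S)
    (fun hx hy => add_mem hx hy) (fun hx => neg_mem hx)
    (fun hy => hmul_left _ hy) (fun hx => hmul_right _ hx)
  have hJ : ∀ x : A, x ∈ J ↔ x ∈ S := fun x => TwoSidedIdeal.mem_mk' _ _ _ _ _ _ x
  -- J is graded
  have hJ_graded : ∀ x ∈ J, ∀ γ : Γ, ((decompose 𝒜 x) γ : A) ∈ J := by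
    intro x hx γ
    rw [hJ] at hx ⊢
    induction hx using AddSubgroup.closure_induction with
    | mem z hz =>
      obtain ⟨β, δ, x, y, hxm, hym, rfl⟩ := hz
      have hmem : x * h * y ∈ 𝒜 (β + γ₀ + δ) :=
        SetLike.mul_mem_graded (SetLike.mul_mem_graded hxm ((decompose 𝒜 a) γ₀).2) hym
      by_cases hγ : β + γ₀ + δ = γ
      · rw [← hγ, decompose_of_mem_same 𝒜 hmem]
        exact AddSubgroup.subset_closure ⟨β, δ, x, y, hxm, hym, rfl⟩
      · rw [decompose_of_mem_ne 𝒜 hmem hγ]; exact zero_mem S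
    | zero => simpa using zero_mem S
    | add x y hx hy px py =>
      have : ((decompose 𝒜 (x + y)) γ : A)
          = ((decompose 𝒜 x) γ : A) + ((decompose 𝒜 y) γ : A) := by
        rw [decompose_add, DirectSum.add_apply, AddSubgroup.coe_add]
      rw [this]; exact add_mem px py
    | neg x hx px =>
      have : ((decompose 𝒜 (-x)) γ : A) = -((decompose 𝒜 x) γ : A) := by
        rw [decompose_neg, DFinsupp.neg_apply, AddSubgroup.coe_neg]
      rw [this]; exact neg_mem px
  -- J contains h ≠ 0, so J = ⊤
  have hhJ : h ∈ J := by
    rw [hJ]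
    exact AddSubgroup.subset_closure ⟨0, 0, 1, 1, SetLike.one_mem_graded 𝒜,
      SetLike.one_mem_graded 𝒜, by rw [one_mul, mul_one]⟩
  have hJtop : J = ⊤ := by
    rcases hsimple J hJ_graded with hbot | htop
    · exact absurd (by simpa [hbot] using hhJ) hγ₀
    · exact htop
  -- pick a nonzero c ∈ 𝒜 α
  obtain ⟨c, hcα, hc0⟩ : ∃ c : A, c ∈ 𝒜 α ∧ c ≠ 0 := by
    by_contra hcon
    push_neg at hcon
    refine hα ?_
    ext x
    simp only [AddSubgroup.mem_bot]
    exact ⟨fun hx => hcon x hx, fun hx => hx ▸ zero_mem _⟩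
  have hcS : c ∈ S := by rw [← hJ, hJtop]; trivial
  -- the key induction: from c ∈ S produce the required b
  have key : ∀ z ∈ S, ∃ b : A, b ∈ I ∧
      (∀ δ : Γ, ((decompose 𝒜 b) δ : A) ≠ 0 →
        ∃ γ : Γ, ((decompose 𝒜 a) γ : A) ≠ 0 ∧ δ = γ - γ₀ + α) ∧
      ((decompose 𝒜 b) α : A) = ((decompose 𝒜 z) α : A) := by
    intro z hz
    induction hz using AddSubgroup.closure_induction with
    | mem z hz =>
      obtain ⟨β, δ, x, y, hxm, hym, rfl⟩ := hz
      by_cases hd : β + γ₀ + δ = α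
      · refine ⟨x * a * y, I.mul_mem_right _ _ (I.mul_mem_left _ _ haI), ?_, ?_⟩
        · intro μ hμ
          have hrw : x * a * y
              = ∑ γ ∈ (decompose 𝒜 a).support, x * ((decompose 𝒜 a) γ : A) * y := by
            conv_lhs => rw [← DirectSum.sum_support_decompose 𝒜 a]
            rw [Finset.mul_sum, Finset.sum_mul]
          rw [hrw, hdec_sum] at hμ
          obtain ⟨γ, hγs, hγne⟩ := Finset.exists_ne_zero_of_sum_ne_zero hμ
          have hmem : x * ((decompose 𝒜 a) γ : A) * y ∈ 𝒜 (β + γ + δ) :=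
            SetLike.mul_mem_graded (SetLike.mul_mem_graded hxm ((decompose 𝒜 a) γ).2) hym
          have hγa : ((decompose 𝒜 a) γ : A) ≠ 0 :=
            fun hc => DFinsupp.mem_support_iff.mp hγs (ZeroMemClass.coe_eq_zero.mp hc)
          refine ⟨γ, hγa, ?_⟩
          have : β + γ + δ = μ := by
            by_contra hne
            exact hγne (decompose_of_mem_ne 𝒜 hmem hne)
          rw [← this, ← hd]; abel
        · have hrw : x * a * y
              = ∑ γ ∈ (decompose 𝒜 a).support, x * ((decompose 𝒜 a) γ : A) * y := by
            conv_lhs => rw [← DirectSum.sum_support_decompose 𝒜 a]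
            rw [Finset.mul_sum, Finset.sum_mul]
          have hγ₀s : γ₀ ∈ (decompose 𝒜 a).support :=
            DFinsupp.mem_support_iff.mpr fun hc => hγ₀ (by rw [hh, hc, ZeroMemClass.coe_zero])
          have hgenmem : x * h * y ∈ 𝒜 (β + γ₀ + δ) :=
            SetLike.mul_mem_graded (SetLike.mul_mem_graded hxm ((decompose 𝒜 a) γ₀).2) hym
          have hsum_eq : ∑ γ ∈ (decompose 𝒜 a).support,
              ((decompose 𝒜 (x * ((decompose 𝒜 a) γ : A) * y)) α : A) = x * h * y := by
            rw [Finset.sum_eq_single γ₀]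
            · exact decompose_of_mem_same 𝒜 (hd ▸ hgenmem)
            · intro γ hγs hγne
              have hmem : x * ((decompose 𝒜 a) γ : A) * y ∈ 𝒜 (β + γ + δ) :=
                SetLike.mul_mem_graded (SetLike.mul_mem_graded hxm ((decompose 𝒜 a) γ).2) hym
              refine decompose_of_mem_ne 𝒜 hmem ?_
              intro hcontra
              exact hγne (add_left_cancel (add_right_cancel (hcontra.trans hd.symm)))
            · intro hns; exact absurd hγ₀s hns
          rw [hrw, hdec_sum, hsum_eq, decompose_of_mem_same 𝒜 (hd ▸ hgenmem)]
      · refine ⟨0, zero_mem I, ?_, ?_⟩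
        · intro μ hμ; simp at hμ
        · have hgenmem : x * h * y ∈ 𝒜 (β + γ₀ + δ) :=
            SetLike.mul_mem_graded (SetLike.mul_mem_graded hxm ((decompose 𝒜 a) γ₀).2) hym
          rw [decompose_of_mem_ne 𝒜 hgenmem hd]
          simp
    | zero => exact ⟨0, zero_mem I, by intro μ hμ; simp at hμ, by simp⟩
    | add u v hu hv pu pv =>
      obtain ⟨b₁, hb₁I, hb₁s, hb₁α⟩ := pu
      obtain ⟨b₂, hb₂I, hb₂s, hb₂α⟩ := pv
      refine ⟨b₁ + b₂, add_mem hb₁I hb₂I, ?_, ?_⟩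
      · intro μ hμ
        have : ((decompose 𝒜 (b₁ + b₂)) μ : A)
            = ((decompose 𝒜 b₁) μ : A) + ((decompose 𝒜 b₂) μ : A) := by
          rw [decompose_add, DirectSum.add_apply, AddSubgroup.coe_add]
        rw [this] at hμ
        rcases (by by_contra hcon; push_neg at hcon; simp [hcon.1, hcon.2] at hμ :
            ((decompose 𝒜 b₁) μ : A) ≠ 0 ∨ ((decompose 𝒜 b₂) μ : A) ≠ 0) with h1 | h2
        · exact hb₁s μ h1
        · exact hb₂s μ h2
      · have h1 : ((decompose 𝒜 (b₁ + b₂)) α : A)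
            = ((decompose 𝒜 b₁) α : A) + ((decompose 𝒜 b₂) α : A) := by
          rw [decompose_add, DirectSum.add_apply, AddSubgroup.coe_add]
        have h2 : ((decompose 𝒜 (u + v)) α : A)
            = ((decompose 𝒜 u) α : A) + ((decompose 𝒜 v) α : A) := by
          rw [decompose_add, DirectSum.add_apply, AddSubgroup.coe_add]
        rw [h1, h2, hb₁α, hb₂α]
    | neg u hu pu =>
      obtain ⟨b, hbI, hbs, hbα⟩ := pu
      refine ⟨-b, neg_mem hbI, ?_, ?_⟩
      · intro μ hμ
        have : ((decompose 𝒜 (-b)) μ : A) = -((decompose 𝒜 b) μ : A) := by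
          rw [decompose_neg, DFinsupp.neg_apply, AddSubgroup.coe_neg]
        rw [this, neg_ne_zero] at hμ
        exact hbs μ hμ
      · have h1 : ((decompose 𝒜 (-b)) α : A) = -((decompose 𝒜 b) α : A) := by
          rw [decompose_neg, DFinsupp.neg_apply, AddSubgroup.coe_neg]
        have h2 : ((decompose 𝒜 (-u)) α : A) = -((decompose 𝒜 u) α : A) := by
          rw [decompose_neg, DFinsupp.neg_apply, AddSubgroup.coe_neg]
        rw [h1, h2, hbα]
  obtain ⟨b, hbI, hbs, hbα⟩ := key c hcS
  refine ⟨b, hbI, ?_, hbs⟩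
  intro hb0
  rw [decompose_of_mem_same 𝒜 hcα] at hbα
  exact hc0 (by rw [← hbα, hb0]; simp)
end

section
/- Let A be a Γ-graded ring with grading 𝒜, where Γ is an additive abelian group. Then A is a simple ring (i.e. A is nonzero and the only two-sided ideals of A are 0 and A) if and only if A is graded simple and the center of A is a field. -/
open DirectSum

section aux

variable {Γ : Type*} [AddCommGroup Γ] [DecidableEq Γ]
variable {A : Type*} [Ring A] (𝒜 : Γ → AddSubgroup A) [GradedRing 𝒜]

/-- The degree-`γ` projection as an additive monoid hom `A →+ A`. -/
noncomputable def gproj (γ : Γ) : A →+ A :=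
  ((𝒜 γ).subtype).comp ((DFinsupp.evalAddMonoidHom γ).comp (decomposeAddEquiv 𝒜).toAddMonoidHom)

lemma gproj_apply (γ : Γ) (u : A) : gproj 𝒜 γ u = ((decompose 𝒜 u) γ : A) := rfl

lemma gproj_add (γ : Γ) (u v : A) :
    ((decompose 𝒜 (u + v)) γ : A) = ((decompose 𝒜 u) γ : A) + ((decompose 𝒜 v) γ : A) :=
  map_add (gproj 𝒜 γ) u v

lemma gproj_neg (γ : Γ) (u : A) :
    ((decompose 𝒜 (-u)) γ : A) = -((decompose 𝒜 u) γ : A) :=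
  map_neg (gproj 𝒜 γ) u

lemma gproj_sub (γ : Γ) (u v : A) :
    ((decompose 𝒜 (u - v)) γ : A) = ((decompose 𝒜 u) γ : A) - ((decompose 𝒜 v) γ : A) :=
  map_sub (gproj 𝒜 γ) u v


lemma aux_comp_mul {α β : Γ} {a b : A} (ha : a ∈ 𝒜 α) (hb : b ∈ 𝒜 β) (x : A) (γ : Γ) :
    ((decompose 𝒜 (a * x * b)) γ : A) = a * (decompose 𝒜 x (γ - α - β) : A) * b := by
  classical
  conv_lhs => rw [← DirectSum.sum_support_decompose 𝒜 x]
  rw [Finset.mul_sum, Finset.sum_mul, DirectSum.decompose_sum,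
    DFinsupp.finset_sum_apply, AddSubmonoidClass.coe_finset_sum]
  have hterm : ∀ δ ∈ (decompose 𝒜 x).support,
      ((decompose 𝒜 (a * (decompose 𝒜 x δ : A) * b)) γ : A) =
        if δ = γ - α - β then a * (decompose 𝒜 x δ : A) * b else 0 := by
    intro δ _
    have hmem : a * (decompose 𝒜 x δ : A) * b ∈ 𝒜 (α + δ + β) :=
      SetLike.mul_mem_graded (SetLike.mul_mem_graded ha (decompose 𝒜 x δ).2) hb
    by_cases h : δ = γ - α - β
    · subst h
      rw [if_pos rfl]
      have heq : α + (γ - α - β) + β = γ := by abel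
      rw [heq] at hmem
      exact DirectSum.decompose_of_mem_same 𝒜 hmem
    · rw [if_neg h]
      refine DirectSum.decompose_of_mem_ne 𝒜 hmem fun hc => h ?_
      rw [← hc]; abel
  rw [Finset.sum_congr rfl hterm, Finset.sum_ite_eq' (decompose 𝒜 x).support]
  by_cases h : γ - α - β ∈ (decompose 𝒜 x).support
  · rw [if_pos h]
  · rw [if_neg h]
    rw [DFinsupp.notMem_support_iff] at h
    rw [h, ZeroMemClass.coe_zero, mul_zero, zero_mul]

lemma stepA {I : TwoSidedIdeal A}
    (hg : ∀ J : TwoSidedIdeal A,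
      (∀ z ∈ J, ∀ γ : Γ, ((DirectSum.decompose 𝒜 z) γ : A) ∈ J) → J = ⊥ ∨ J = ⊤)
    {x : A} (hx : x ∈ I) {γ₁ : Γ} (hγ₁ : ((decompose 𝒜 x) γ₁ : A) ≠ 0) :
    ∃ y ∈ I, ((decompose 𝒜 y) 0 : A) = 1 ∧
      ∀ γ : Γ, ((decompose 𝒜 x) (γ + γ₁) : A) = 0 → ((decompose 𝒜 y) γ : A) = 0 := by
  classical
  set x₁ : A := ((decompose 𝒜 x) γ₁ : A) with hx₁def
  have hx₁mem : x₁ ∈ 𝒜 γ₁ := ((decompose 𝒜 x) γ₁).2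
  set S : Set A := {z | ∃ α β a b, a ∈ 𝒜 α ∧ b ∈ 𝒜 β ∧ z = a * x₁ * b} with hS
  have hL : ∀ r z, z ∈ AddSubgroup.closure S → r * z ∈ AddSubgroup.closure S := by
    intro r z hz
    refine AddSubgroup.closure_induction (p := fun w _ => r * w ∈ AddSubgroup.closure S)
      (fun w hw => ?_) (by simpa using zero_mem _)
      (fun u v _ _ pu pv => by
        show r * (u + v) ∈ _; rw [mul_add]; exact add_mem pu pv)
      (fun u _ pu => by show r * (-u) ∈ _; rw [mul_neg]; exact neg_mem pu) hz
    obtain ⟨α, β, a, b, ha, hb, rfl⟩ := hw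
    show r * (a * x₁ * b) ∈ _
    rw [← DirectSum.sum_support_decompose 𝒜 r, Finset.sum_mul]
    refine AddSubgroup.sum_mem _ fun δ _ => AddSubgroup.subset_closure
      ⟨δ + α, β, ((decompose 𝒜 r) δ : A) * a, b,
        SetLike.mul_mem_graded ((decompose 𝒜 r) δ).2 ha, hb, by simp [mul_assoc]⟩
  have hR : ∀ r z, z ∈ AddSubgroup.closure S → z * r ∈ AddSubgroup.closure S := by
    intro r z hz
    refine AddSubgroup.closure_induction (p := fun w _ => w * r ∈ AddSubgroup.closure S)
      (fun w hw => ?_) (by simpa using zero_mem _)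
      (fun u v _ _ pu pv => by
        show (u + v) * r ∈ _; rw [add_mul]; exact add_mem pu pv)
      (fun u _ pu => by show (-u) * r ∈ _; rw [neg_mul]; exact neg_mem pu) hz
    obtain ⟨α, β, a, b, ha, hb, rfl⟩ := hw
    show (a * x₁ * b) * r ∈ _
    rw [← DirectSum.sum_support_decompose 𝒜 r, Finset.mul_sum]
    refine AddSubgroup.sum_mem _ fun δ _ => AddSubgroup.subset_closure
      ⟨α, β + δ, a, b * ((decompose 𝒜 r) δ : A),
        ha, SetLike.mul_mem_graded hb ((decompose 𝒜 r) δ).2, by simp [mul_assoc]⟩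
  set K : TwoSidedIdeal A := TwoSidedIdeal.mk' (AddSubgroup.closure S : Set A)
    (zero_mem _) (fun h1 h2 => add_mem h1 h2) (fun h => neg_mem h)
    (fun {u v} h => hL u v h) (fun {u v} h => hR v u h) with hK
  have memK : ∀ z : A, z ∈ K ↔ z ∈ AddSubgroup.closure S := fun z =>
    TwoSidedIdeal.mem_mk' _ _ _ _ _ _ z
  have hgraded : ∀ z ∈ K, ∀ γ : Γ, ((decompose 𝒜 z) γ : A) ∈ K := by
    intro z hz γ
    rw [memK] at hz ⊢
    revert γ
    refine AddSubgroup.closure_induction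
      (p := fun w _ => ∀ γ : Γ, ((decompose 𝒜 w) γ : A) ∈ AddSubgroup.closure S)
      (fun w hw γ => ?_) (fun γ => by simpa using zero_mem _)
      (fun u v _ _ pu pv γ => by
        rw [gproj_add]; exact add_mem (pu γ) (pv γ))
      (fun u _ pu γ => by
        rw [gproj_neg]; exact neg_mem (pu γ)) hz
    obtain ⟨α, β, a, b, ha, hb, rfl⟩ := hw
    have hmem : a * x₁ * b ∈ 𝒜 (α + γ₁ + β) :=
      SetLike.mul_mem_graded (SetLike.mul_mem_graded ha hx₁mem) hb
    by_cases h : α + γ₁ + β = γ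
    · subst h
      rw [DirectSum.decompose_of_mem_same 𝒜 hmem]
      exact AddSubgroup.subset_closure ⟨α, β, a, b, ha, hb, rfl⟩
    · rw [DirectSum.decompose_of_mem_ne 𝒜 hmem h]
      exact zero_mem _
  have hx₁K : x₁ ∈ K := by
    rw [memK]
    exact AddSubgroup.subset_closure
      ⟨0, 0, 1, 1, SetLike.one_mem_graded 𝒜, SetLike.one_mem_graded 𝒜, by simp⟩
  have hKtop : K = ⊤ := by
    rcases hg K hgraded with h | h
    · exact absurd (h ▸ hx₁K) (by simpa using hγ₁)
    · exact h
  have h1K : (1 : A) ∈ AddSubgroup.closure S := by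
    rw [← memK, hKtop]; trivial
  have hex : ∀ z ∈ AddSubgroup.closure S, ∃ y ∈ I,
      ((decompose 𝒜 y) 0 : A) = ((decompose 𝒜 z) 0 : A) ∧
      ∀ γ : Γ, ((decompose 𝒜 x) (γ + γ₁) : A) = 0 → ((decompose 𝒜 y) γ : A) = 0 := by
    intro z hz
    refine AddSubgroup.closure_induction
      (p := fun w _ => ∃ y ∈ I,
        ((decompose 𝒜 y) 0 : A) = ((decompose 𝒜 w) 0 : A) ∧
        ∀ γ : Γ, ((decompose 𝒜 x) (γ + γ₁) : A) = 0 → ((decompose 𝒜 y) γ : A) = 0)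
      (fun w hw => ?_) ⟨0, I.zero_mem, by simp, fun γ _ => by simp⟩
      (fun u v _ _ hu hv => ?_) (fun u _ hu => ?_) hz
    · obtain ⟨α, β, a, b, ha, hb, rfl⟩ := hw
      have hmem : a * x₁ * b ∈ 𝒜 (α + γ₁ + β) :=
        SetLike.mul_mem_graded (SetLike.mul_mem_graded ha hx₁mem) hb
      by_cases h : α + γ₁ + β = 0
      · have hγ₁' : γ₁ = 0 - α - β := by rw [← h]; abel
        refine ⟨a * x * b, I.mul_mem_right _ _ (I.mul_mem_left _ _ hx), ?_, ?_⟩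
        · rw [aux_comp_mul 𝒜 ha hb, ← hγ₁', ← hx₁def,
            DirectSum.decompose_of_mem_same 𝒜 (h ▸ hmem)]
        · intro γ hγ
          have hγ' : γ - α - β = γ + γ₁ := by rw [hγ₁']; abel
          rw [aux_comp_mul 𝒜 ha hb, hγ', hγ, mul_zero, zero_mul]
      · refine ⟨0, I.zero_mem, ?_, fun γ _ => by simp⟩
        rw [DirectSum.decompose_of_mem_ne 𝒜 hmem h]
        simp
    · obtain ⟨y₁, hy₁, e₁, c₁⟩ := hu
      obtain ⟨y₂, hy₂, e₂, c₂⟩ := hv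
      refine ⟨y₁ + y₂, I.add_mem hy₁ hy₂, ?_, fun γ hγ => ?_⟩
      · rw [gproj_add, gproj_add, e₁, e₂]
      · rw [gproj_add, c₁ γ hγ, c₂ γ hγ, add_zero]
    · obtain ⟨y₁, hy₁, e₁, c₁⟩ := hu
      refine ⟨-y₁, I.neg_mem hy₁, ?_, fun γ hγ => ?_⟩
      · rw [gproj_neg, gproj_neg, e₁]
      · rw [gproj_neg, c₁ γ hγ, neg_zero]
  obtain ⟨y, hyI, hy0, hycond⟩ := hex 1 h1K
  refine ⟨y, hyI, ?_, hycond⟩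
  rw [hy0, DirectSum.decompose_of_mem_same 𝒜 (SetLike.one_mem_graded 𝒜)]

lemma main_ind [∀ (i : Γ) (x : 𝒜 i), Decidable (x ≠ 0)] (hnt : Nontrivial A)
    (hg : ∀ J : TwoSidedIdeal A,
      (∀ z ∈ J, ∀ γ : Γ, ((DirectSum.decompose 𝒜 z) γ : A) ∈ J) → J = ⊥ ∨ J = ⊤)
    (hfield : IsField (Subring.center A)) (I : TwoSidedIdeal A) :
    ∀ n : ℕ, ∀ x : A, x ∈ I → x ≠ 0 → (decompose 𝒜 x).support.card ≤ n → I = ⊤ := by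
  classical
  intro n
  induction n with
  | zero =>
    intro x hx hx0 hcard
    exact absurd (by
      rw [← DirectSum.sum_support_decompose 𝒜 x,
        Finset.card_eq_zero.mp (Nat.le_zero.mp hcard), Finset.sum_empty]) hx0
  | succ n IH =>
    intro x hxI hx0 hcard
    have hsupp : (decompose 𝒜 x).support.Nonempty := by
      rw [Finset.nonempty_iff_ne_empty]
      intro h
      exact hx0 (by rw [← DirectSum.sum_support_decompose 𝒜 x, h, Finset.sum_empty])
    obtain ⟨γ₁, hγ₁mem⟩ := hsupp
    have hγ₁ : ((decompose 𝒜 x) γ₁ : A) ≠ 0 := fun h =>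
      DFinsupp.mem_support_iff.mp hγ₁mem (ZeroMemClass.coe_eq_zero.mp h)
    obtain ⟨y, hyI, hy0, hycond⟩ := stepA 𝒜 hg hxI hγ₁
    set Sy := (decompose 𝒜 y).support with hSy
    have h0Sy : (0 : Γ) ∈ Sy := by
      rw [hSy, DFinsupp.mem_support_iff]
      intro h
      have h1 : ((decompose 𝒜 y) 0 : A) = 0 := by rw [h]; rfl
      rw [hy0] at h1
      exact one_ne_zero h1
    have hSycard : Sy.card ≤ (decompose 𝒜 x).support.card := by
      refine Finset.card_le_card_of_injOn (fun γ => γ + γ₁) (fun γ hγ => ?_)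
        (fun γ _ γ' _ h => by simpa using h)
      show γ + γ₁ ∈ (decompose 𝒜 x).support
      rw [DFinsupp.mem_support_iff]
      intro h
      have h' : ((decompose 𝒜 x) (γ + γ₁) : A) = 0 := by rw [h]; rfl
      exact DFinsupp.mem_support_iff.mp hγ (ZeroMemClass.coe_eq_zero.mp (hycond γ h'))
    by_cases hc : ∀ (δ : Γ) (c : A), c ∈ 𝒜 δ → c * y - y * c = 0
    · -- y is central and nonzero, hence invertible, so I = ⊤
      have hcomm : ∀ g : A, g * y = y * g := by
        intro g
        conv_lhs => rw [← DirectSum.sum_support_decompose 𝒜 g]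
        conv_rhs => rw [← DirectSum.sum_support_decompose 𝒜 g]
        rw [Finset.sum_mul, Finset.mul_sum]
        exact Finset.sum_congr rfl fun δ _ =>
          sub_eq_zero.mp (hc δ _ ((decompose 𝒜 g) δ).2)
      have hyne : y ≠ 0 := by
        intro h
        rw [h] at hy0
        simp only [DirectSum.decompose_zero, DirectSum.zero_apply,
          ZeroMemClass.coe_zero] at hy0
        exact one_ne_zero hy0.symm
      have ycenter : y ∈ Subring.center A := Subring.mem_center_iff.mpr hcomm
      obtain ⟨z, hz⟩ := hfield.mul_inv_cancel
        (a := (⟨y, ycenter⟩ : Subring.center A))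
        (fun h => hyne (congrArg Subtype.val h))
      have hinv : y * (z : A) = 1 := congrArg Subtype.val hz
      exact I.eq_top (hinv ▸ I.mul_mem_right _ _ hyI)
    · push_neg at hc
      obtain ⟨δ, c, hcδ, hwne⟩ := hc
      set w := c * y - y * c with hw
      have hwI : w ∈ I := I.sub_mem (I.mul_mem_left _ _ hyI) (I.mul_mem_right _ _ hyI)
      have hwγ : ∀ γ : Γ, ((decompose 𝒜 w) γ : A) =
          c * ((decompose 𝒜 y) (γ - δ) : A) - ((decompose 𝒜 y) (γ - δ) : A) * c := by
        intro γ
        have h1 := aux_comp_mul 𝒜 hcδ (SetLike.one_mem_graded 𝒜) y γ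
        have h2 := aux_comp_mul 𝒜 (SetLike.one_mem_graded 𝒜) hcδ y γ
        simp only [mul_one, one_mul, sub_zero] at h1 h2
        rw [hw, gproj_sub, h1, h2, show γ - δ - 0 = γ - δ by abel,
          show γ - 0 - δ = γ - δ by abel]
      have hwsupp : (decompose 𝒜 w).support ⊆ (Sy.image (fun γ => γ + δ)).erase δ := by
        intro γ hγ
        have hne : ((decompose 𝒜 w) γ : A) ≠ 0 := fun h =>
          DFinsupp.mem_support_iff.mp hγ (ZeroMemClass.coe_eq_zero.mp h)
        rw [Finset.mem_erase]
        constructor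
        · intro h
          apply hne
          rw [hwγ, h, sub_self]
          have h0 : ((decompose 𝒜 y) (0 : Γ) : A) = 1 := hy0
          rw [h0, mul_one, one_mul, sub_self]
        · refine Finset.mem_image.mpr ⟨γ - δ, ?_, by abel⟩
          rw [hSy, DFinsupp.mem_support_iff]
          intro h
          apply hne
          rw [hwγ]
          have h' : ((decompose 𝒜 y) (γ - δ) : A) = 0 := by rw [h]; rfl
          rw [h', mul_zero, zero_mul, sub_self]
      have hδmem : δ ∈ Sy.image (fun γ => γ + δ) :=
        Finset.mem_image.mpr ⟨0, h0Sy, by abel⟩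
      have hcardw : (decompose 𝒜 w).support.card ≤ n := by
        have h1 := Finset.card_le_card hwsupp
        rw [Finset.card_erase_of_mem hδmem] at h1
        have h2 := Finset.card_image_le (s := Sy) (f := fun γ => γ + δ)
        have h3 : 1 ≤ Sy.card := Finset.card_pos.mpr ⟨0, h0Sy⟩
        omega
      exact IH w hwI hwne hcardw

end aux

/-- A `Γ`-graded ring `A` is a simple ring if and only if `A` is graded simple
(it is nonzero and its only graded two-sided ideals are `⊥` and `⊤`) and the center of `A` is
a field. -/
theorem isSimpleRing_iff_gradedSimple_and_isField_center
    {Γ : Type*} [AddCommGroup Γ] [DecidableEq Γ]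
    {A : Type*} [Ring A] (𝒜 : Γ → AddSubgroup A) [GradedRing 𝒜] :
    IsSimpleRing A ↔
      ((Nontrivial A ∧ ∀ I : TwoSidedIdeal A,
          (∀ x ∈ I, ∀ γ : Γ, ((DirectSum.decompose 𝒜 x) γ : A) ∈ I) → I = ⊥ ∨ I = ⊤) ∧
        IsField (Subring.center A)) := by
  constructor
  · intro h
    letI := h
    exact ⟨⟨inferInstance, fun I _ => h.simple.eq_bot_or_eq_top I⟩,
      IsSimpleRing.isField_center A⟩
  · rintro ⟨⟨hnt, hg⟩, hfield⟩
    classical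
    constructor
    haveI : Nontrivial (TwoSidedIdeal A) := ⟨⟨⊥, ⊤, fun h => by
      have h1 : (1 : A) ∈ (⊥ : TwoSidedIdeal A) := h ▸ TwoSidedIdeal.mem_top (R := A)
      exact one_ne_zero ((TwoSidedIdeal.mem_bot (R := A)).mp h1)⟩⟩
    refine ⟨fun I => ?_⟩
    by_cases hI : I = ⊥
    · exact Or.inl hI
    · refine Or.inr ?_
      have : ¬ ∀ x ∈ I, x = (0 : A) := by
        intro h
        exact hI (le_antisymm (fun x hx => (TwoSidedIdeal.mem_bot (R := A)).mpr (h x hx)) bot_le)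
      push_neg at this
      obtain ⟨x, hxI, hx0⟩ := this
      exact main_ind 𝒜 hnt hg hfield I _ x hxI hx0 le_rfl
end

section
/- Let A be a Γ-graded ring with grading 𝒜 and let A₀ denote the subring 𝒜 0. Then the two-sided ideal of A generated by the set of all non-invertible homogeneous elements of A is a proper ideal (i.e. A is a graded local ring) if and only if A₀ is a local ring (i.e. A₀ is nontrivial and for all a, b ∈ A₀ with a + b = 1, either a or b is a unit of A₀). -/
open DirectSum

section Aux
variable {Γ : Type*} [AddCommGroup Γ] [DecidableEq Γ]
  {A : Type*} [Ring A] (𝒜 : Γ → AddSubgroup A) [GradedRing 𝒜]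

/-- the inverse of a homogeneous unit is homogeneous of opposite degree -/
lemma aux_inv {γ : Γ} {u : A} (hu : u ∈ 𝒜 γ) (h : IsUnit u) :
    ∃ v ∈ 𝒜 (-γ), u * v = 1 ∧ v * u = 1 := by
  obtain ⟨U, rfl⟩ := h
  set w : A := ↑U⁻¹ with hw
  refine ⟨GradedRing.proj 𝒜 (-γ) w, by rw [GradedRing.proj_apply]; exact SetLike.coe_mem _, ?_, ?_⟩
  · have h1 : (U : A) * GradedRing.proj 𝒜 (-γ) w
        = (decompose 𝒜 ((U : A) * w) (γ + -γ) : A) := by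
      rw [GradedRing.proj_apply, DirectSum.coe_decompose_mul_add_of_left_mem 𝒜 hu]
    rw [h1]
    have : (U : A) * w = 1 := by rw [hw]; exact U.mul_inv
    rw [this, add_neg_cancel]
    exact DirectSum.decompose_of_mem_same 𝒜 (SetLike.one_mem_graded 𝒜)
  · have h1 : GradedRing.proj 𝒜 (-γ) w * (U : A)
        = (decompose 𝒜 (w * (U : A)) (-γ + γ) : A) := by
      rw [GradedRing.proj_apply, DirectSum.coe_decompose_mul_add_of_right_mem 𝒜 hu]
    rw [h1]
    have : w * (U : A) = 1 := by rw [hw]; exact U.inv_mul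
    rw [this, neg_add_cancel]
    exact DirectSum.decompose_of_mem_same 𝒜 (SetLike.one_mem_graded 𝒜)

lemma aux_coe_unit {c : 𝒜 0} (h : IsUnit c) : IsUnit (c : A) := by
  obtain ⟨U, rfl⟩ := h
  refine isUnit_iff_exists.2 ⟨((U⁻¹ : (𝒜 0)ˣ) : 𝒜 0), ?_, ?_⟩
  · exact_mod_cast congrArg (Subtype.val) U.mul_inv
  · exact_mod_cast congrArg (Subtype.val) U.inv_mul

lemma aux_unit_coe {a : A} (ha : a ∈ 𝒜 0) (h : IsUnit a) : IsUnit (⟨a, ha⟩ : 𝒜 0) := by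
  obtain ⟨v, hv, h1, h2⟩ := aux_inv 𝒜 ha h
  rw [neg_zero] at hv
  exact isUnit_iff_exists.2 ⟨⟨v, hv⟩, Subtype.ext h1, Subtype.ext h2⟩

variable [IsLocalRing (𝒜 0)]

include 𝒜 in
lemma aux_nontrivial : Nontrivial A := by
  refine ⟨0, 1, fun h => zero_ne_one (α := 𝒜 0) (Subtype.ext ?_)⟩
  exact h

/-- an idempotent of degree 0 is 0 or 1 -/
lemma aux_idem {e : A} (he : e ∈ 𝒜 0) (h : e * e = e) : e = 0 ∨ e = 1 := by
  set E : 𝒜 0 := ⟨e, he⟩ with hE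
  have hEE : E * E = E := Subtype.ext h
  rcases IsLocalRing.isUnit_or_isUnit_of_add_one (a := E) (b := 1 - E) (by abel) with hu | hu
  · right
    have : E * (1 - E) = E * 0 := by rw [mul_sub, hEE]; simp
    have := hu.mul_left_cancel this
    have : E = 1 := by rwa [sub_eq_zero, eq_comm] at this
    exact congrArg Subtype.val this
  · left
    have : (1 - E) * E = (1 - E) * 0 := by rw [sub_mul, hEE]; simp
    have := hu.mul_left_cancel this
    exact congrArg Subtype.val this

/-- left multiple of a homogeneous non-unit by a homogeneous element is a non-unit -/
lemma aux_left {α β : Γ} {x m : A} (hx : x ∈ 𝒜 α) (hm : m ∈ 𝒜 β)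
    (hnm : ¬ IsUnit m) : ¬ IsUnit (x * m) := by
  have := aux_nontrivial (𝒜 := 𝒜)
  intro h
  obtain ⟨v, hv, huv, hvu⟩ := aux_inv 𝒜 (SetLike.mul_mem_graded hx hm) h
  set e : A := m * (v * x) with he
  have he0 : e ∈ 𝒜 0 := by
    have hmem : m * (v * x) ∈ 𝒜 (β + (-(α + β) + α)) :=
      SetLike.mul_mem_graded hm (SetLike.mul_mem_graded hv hx)
    have : β + (-(α + β) + α) = 0 := by abel
    rwa [this] at hmem
  have hvxm : (v * x) * m = 1 := by rw [mul_assoc]; exact hvu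
  have hee : e * e = e := by
    have h1 : e * e = m * ((v * (x * m)) * (v * x)) := by rw [he]; noncomm_ring
    rw [h1, hvu, one_mul]
  rcases aux_idem 𝒜 he0 hee with h0 | h1
  · exfalso
    have : (v * x) = 0 := by
      have : ((v * x) * m) * (v * x) = (v * x) * e := by rw [he]; noncomm_ring
      rw [hvxm, one_mul, h0, mul_zero] at this
      exact this
    rw [this, zero_mul] at hvxm
    exact one_ne_zero hvxm.symm
  · exact hnm (isUnit_iff_exists.2 ⟨v * x, h1, hvxm⟩)

/-- right multiple of a homogeneous non-unit by a homogeneous element is a non-unit -/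
lemma aux_right {β γ : Γ} {m y : A} (hm : m ∈ 𝒜 β) (hy : y ∈ 𝒜 γ)
    (hnm : ¬ IsUnit m) : ¬ IsUnit (m * y) := by
  have := aux_nontrivial (𝒜 := 𝒜)
  intro h
  obtain ⟨v, hv, huv, hvu⟩ := aux_inv 𝒜 (SetLike.mul_mem_graded hm hy) h
  set e : A := (y * v) * m with he
  have he0 : e ∈ 𝒜 0 := by
    have hmem : (y * v) * m ∈ 𝒜 ((γ + -(β + γ)) + β) :=
      SetLike.mul_mem_graded (SetLike.mul_mem_graded hy hv) hm
    have : (γ + -(β + γ)) + β = 0 := by abel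
    rwa [this] at hmem
  have hmyv : m * (y * v) = 1 := by rw [← mul_assoc]; exact huv
  have hee : e * e = e := by
    have h1 : e * e = (y * v) * (((m * y) * v) * m) := by rw [he]; noncomm_ring
    rw [h1, huv, one_mul]
  rcases aux_idem 𝒜 he0 hee with h0 | h1
  · exfalso
    have : (1 : A) = 0 := by
      have : (m * (y * v)) * (m * (y * v)) = (m * e) * (y * v) := by rw [he]; noncomm_ring
      rw [hmyv, one_mul, h0, mul_zero, zero_mul] at this
      exact this
    exact one_ne_zero this
  · exact hnm (isUnit_iff_exists.2 ⟨y * v, hmyv, h1⟩)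

/-- sum of two same-degree homogeneous non-units is a non-unit -/
lemma aux_add {δ : Γ} {a b : A} (ha : a ∈ 𝒜 δ) (hb : b ∈ 𝒜 δ)
    (hna : ¬ IsUnit a) (hnb : ¬ IsUnit b) : ¬ IsUnit (a + b) := by
  intro h
  obtain ⟨v, hv, huv, hvu⟩ := aux_inv 𝒜 (add_mem ha hb) h
  have hva : v * a ∈ 𝒜 0 := by
    have := SetLike.mul_mem_graded hv ha
    rwa [neg_add_cancel] at this
  have hvb : v * b ∈ 𝒜 0 := by
    have := SetLike.mul_mem_graded hv hb
    rwa [neg_add_cancel] at this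
  have hsum : (⟨v * a, hva⟩ : 𝒜 0) + ⟨v * b, hvb⟩ = 1 := by
    refine Subtype.ext ?_
    show v * a + v * b = 1
    rw [← mul_add]; exact hvu
  rcases IsLocalRing.isUnit_or_isUnit_of_add_one hsum with hu | hu
  · refine hna ?_
    have h1 : IsUnit (v * a) := aux_coe_unit 𝒜 hu
    have h2 : a = (a + b) * (v * a) := by rw [← mul_assoc, huv, one_mul]
    rw [h2]; exact h.mul h1
  · refine hnb ?_
    have h1 : IsUnit (v * b) := aux_coe_unit 𝒜 hu
    have h2 : b = (a + b) * (v * b) := by rw [← mul_assoc, huv, one_mul]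
    rw [h2]; exact h.mul h1

/-- finite sums of same-degree homogeneous non-units are non-units -/
lemma aux_sum {ι : Type*} {δ : Γ} (s : Finset ι) (f : ι → A)
    (hmem : ∀ i ∈ s, f i ∈ 𝒜 δ) (hnu : ∀ i ∈ s, ¬ IsUnit (f i)) :
    ¬ IsUnit (∑ i ∈ s, f i) := by
  have := aux_nontrivial (𝒜 := 𝒜)
  induction s using Finset.cons_induction with
  | empty => simp only [Finset.sum_empty]; exact not_isUnit_zero
  | cons i s his ih =>
    rw [Finset.sum_cons]
    exact aux_add 𝒜 (hmem i (Finset.mem_cons_self _ _))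
      (AddSubgroup.sum_mem _ fun j hj => hmem j (Finset.mem_cons_of_mem hj))
      (hnu i (Finset.mem_cons_self _ _))
      (ih (fun j hj => hmem j (Finset.mem_cons_of_mem hj))
        (fun j hj => hnu j (Finset.mem_cons_of_mem hj)))

lemma aux_mul_left (x : A) {a : A} (ha : ∀ δ : Γ, ¬ IsUnit (GradedRing.proj 𝒜 δ a))
    (δ : Γ) : ¬ IsUnit (GradedRing.proj 𝒜 δ (x * a)) := by
  classical
  have hx : x = ∑ i ∈ (decompose 𝒜 x).support, ((decompose 𝒜 x i : A)) :=
    (DirectSum.sum_support_decompose 𝒜 x).symm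
  have hxa : x * a = ∑ i ∈ (decompose 𝒜 x).support, ((decompose 𝒜 x i : A) * a) := by
    rw [← Finset.sum_mul, ← hx]
  rw [hxa, map_sum]
  refine aux_sum 𝒜 (δ := δ) _ _ (fun i _ => ?_) (fun i _ => ?_)
  · rw [GradedRing.proj_apply]; exact SetLike.coe_mem _
  · have key : GradedRing.proj 𝒜 δ ((decompose 𝒜 x i : A) * a)
        = (decompose 𝒜 x i : A) * GradedRing.proj 𝒜 (-i + δ) a := by
      rw [GradedRing.proj_apply, GradedRing.proj_apply]
      have := DirectSum.coe_decompose_mul_add_of_left_mem 𝒜 (b := a)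
        (SetLike.coe_mem (decompose 𝒜 x i)) (j := -i + δ)
      rwa [add_neg_cancel_left] at this
    rw [key]
    exact aux_left 𝒜 (SetLike.coe_mem _)
      (by rw [GradedRing.proj_apply]; exact SetLike.coe_mem _) (ha (-i + δ))

lemma aux_mul_right (y : A) {a : A} (ha : ∀ δ : Γ, ¬ IsUnit (GradedRing.proj 𝒜 δ a))
    (δ : Γ) : ¬ IsUnit (GradedRing.proj 𝒜 δ (a * y)) := by
  classical
  have hy : y = ∑ i ∈ (decompose 𝒜 y).support, ((decompose 𝒜 y i : A)) :=
    (DirectSum.sum_support_decompose 𝒜 y).symm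
  have hay : a * y = ∑ i ∈ (decompose 𝒜 y).support, (a * (decompose 𝒜 y i : A)) := by
    rw [← Finset.mul_sum, ← hy]
  rw [hay, map_sum]
  refine aux_sum 𝒜 (δ := δ) _ _ (fun i _ => ?_) (fun i _ => ?_)
  · rw [GradedRing.proj_apply]; exact SetLike.coe_mem _
  · have key : GradedRing.proj 𝒜 δ (a * (decompose 𝒜 y i : A))
        = GradedRing.proj 𝒜 (δ - i) a * (decompose 𝒜 y i : A) := by
      rw [GradedRing.proj_apply, GradedRing.proj_apply]
      have := DirectSum.coe_decompose_mul_add_of_right_mem 𝒜 (a := a)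
        (SetLike.coe_mem (decompose 𝒜 y i)) (i := δ - i)
      rwa [sub_add_cancel] at this
    rw [key]
    exact aux_right 𝒜 (by rw [GradedRing.proj_apply]; exact SetLike.coe_mem _)
      (SetLike.coe_mem _) (ha (δ - i))

end Aux

/-- A graded ring `A` is a graded local ring (the two-sided ideal generated by
the non-invertible homogeneous elements is proper) if and only if its degree-zero component
`A₀ = 𝒜 0` is a local ring. -/
theorem gradedLocal_iff_isLocalRing_gradeZero
    {Γ : Type*} [AddCommGroup Γ] [DecidableEq Γ]
    {A : Type*} [Ring A] (𝒜 : Γ → AddSubgroup A) [GradedRing 𝒜] :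
    TwoSidedIdeal.span {a : A | (∃ γ : Γ, a ∈ 𝒜 γ) ∧ ¬IsUnit a} ≠ ⊤ ↔
      IsLocalRing (𝒜 0) := by
  constructor
  · intro hne
    have hnt : Nontrivial (𝒜 0) := by
      by_contra h
      rw [not_nontrivial_iff_subsingleton] at h
      have h10 : (1 : 𝒜 0) = 0 := Subsingleton.elim _ _
      have : (1 : A) = 0 := congrArg Subtype.val h10
      exact hne (TwoSidedIdeal.one_mem_iff _ |>.1 (this ▸ TwoSidedIdeal.zero_mem _))
    refine ⟨?_⟩
    intro a b hab
    by_contra hcon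
    push_neg at hcon
    obtain ⟨hna, hnb⟩ := hcon
    have hnaA : ¬ IsUnit (a : A) := fun h => hna (by simpa using aux_unit_coe 𝒜 a.2 h)
    have hnbA : ¬ IsUnit (b : A) := fun h => hnb (by simpa using aux_unit_coe 𝒜 b.2 h)
    have hmemA : (a : A) ∈ TwoSidedIdeal.span {a : A | (∃ γ : Γ, a ∈ 𝒜 γ) ∧ ¬IsUnit a} :=
      TwoSidedIdeal.subset_span ⟨⟨0, a.2⟩, hnaA⟩
    have hmemB : (b : A) ∈ TwoSidedIdeal.span {a : A | (∃ γ : Γ, a ∈ 𝒜 γ) ∧ ¬IsUnit a} :=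
      TwoSidedIdeal.subset_span ⟨⟨0, b.2⟩, hnbA⟩
    have h1 : (1 : A) ∈ TwoSidedIdeal.span {a : A | (∃ γ : Γ, a ∈ 𝒜 γ) ∧ ¬IsUnit a} := by
      have := TwoSidedIdeal.add_mem _ hmemA hmemB
      rwa [show (a : A) + b = 1 from by exact_mod_cast congrArg Subtype.val hab] at this
    exact hne (TwoSidedIdeal.one_mem_iff _ |>.1 h1)
  · intro hL
    have hnt := aux_nontrivial (𝒜 := 𝒜)
    set J : TwoSidedIdeal A := TwoSidedIdeal.mk'
      {a : A | ∀ δ : Γ, ¬ IsUnit (GradedRing.proj 𝒜 δ a)}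
      (fun δ => by rw [map_zero]; exact not_isUnit_zero)
      (fun {x y} hx hy δ => by
        rw [map_add]
        exact aux_add 𝒜 (by rw [GradedRing.proj_apply]; exact SetLike.coe_mem _)
          (by rw [GradedRing.proj_apply]; exact SetLike.coe_mem _) (hx δ) (hy δ))
      (fun {x} hx δ => by rw [map_neg, IsUnit.neg_iff]; exact hx δ)
      (fun {x y} hy => aux_mul_left 𝒜 x hy)
      (fun {x y} hx => aux_mul_right 𝒜 y hx)
      with hJ
    have hsub : {a : A | (∃ γ : Γ, a ∈ 𝒜 γ) ∧ ¬IsUnit a} ⊆ (J : Set A) := by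
      rintro a ⟨⟨γ, hγ⟩, hna⟩
      rw [hJ, TwoSidedIdeal.coe_mk']
      intro δ
      by_cases h : γ = δ
      · subst h
        rw [GradedRing.proj_apply, DirectSum.decompose_of_mem_same 𝒜 hγ]
        exact hna
      · rw [GradedRing.proj_apply, DirectSum.decompose_of_mem_ne 𝒜 hγ h]
        exact not_isUnit_zero
    intro htop
    have h1 : (1 : A) ∈ J := by
      have h1top : (1 : A) ∈ TwoSidedIdeal.span {a : A | (∃ γ : Γ, a ∈ 𝒜 γ) ∧ ¬IsUnit a} :=
        htop ▸ (TwoSidedIdeal.one_mem_iff (⊤ : TwoSidedIdeal A)).2 rfl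
      exact TwoSidedIdeal.mem_span_iff.1 h1top J hsub
    rw [hJ, TwoSidedIdeal.mem_mk'] at h1
    have := h1 0
    rw [GradedRing.proj_apply, DirectSum.decompose_of_mem_same 𝒜 (SetLike.one_mem_graded 𝒜)] at this
    exact this isUnit_one
end

section
/- Let A be a Γ-graded ring with grading 𝒜. Then A is graded von Neumann regular if and only if every finitely generated graded right ideal of A is generated by a homogeneous idempotent of degree zero; that is, for every finitely generated graded right ideal I of A there exists an idempotent e ∈ 𝒜 0 with I = eA = {e·x : x ∈ A}. -/
open DirectSum

/-- A graded ring is graded von Neumann regular if for every homogeneous `a` there is `b`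
with `a = a * b * a`. -/
def IsGradedVonNeumannRegular {Γ : Type*} [AddCommGroup Γ] {A : Type*} [Ring A]
    (𝒜 : Γ → AddSubgroup A) : Prop :=
  ∀ a : A, (∃ γ : Γ, a ∈ 𝒜 γ) → ∃ b : A, a = a * b * a


section Aux

variable {Γ : Type*} [AddCommGroup Γ] [DecidableEq Γ]
variable {A : Type*} [Ring A] (𝒜 : Γ → AddSubgroup A) [GradedRing 𝒜]

lemma aux_decompose_mul_left {a : A} {i : Γ} (ha : a ∈ 𝒜 i) (b : A) (j : Γ) :
    (decompose 𝒜 (a * b) (i + j) : A) = a * decompose 𝒜 b j := by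
  rw [decompose_mul, decompose_of_mem 𝒜 ha, DirectSum.coe_of_mul_apply_add]

lemma aux_decompose_mul_right {a : A} {i : Γ} (ha : a ∈ 𝒜 i) (b : A) (j : Γ) :
    (decompose 𝒜 (b * a) (j + i) : A) = (decompose 𝒜 b j : A) * a := by
  rw [decompose_mul, decompose_of_mem 𝒜 ha, DirectSum.coe_mul_of_apply_add]

lemma aux_span_singleton_homog (reg : IsGradedVonNeumannRegular 𝒜)
    {a : A} {γ : Γ} (ha : a ∈ 𝒜 γ) :
    ∃ e : A, e ∈ 𝒜 0 ∧ e * e = e ∧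
      Submodule.span Aᵐᵒᵖ {a} = Submodule.span Aᵐᵒᵖ {e} := by
  obtain ⟨b, hb⟩ := reg a ⟨γ, ha⟩
  set b' : A := (decompose 𝒜 b (-γ) : A) with hb'
  have h2 := aux_decompose_mul_right 𝒜 ha b (-γ)
  have h1 := aux_decompose_mul_left 𝒜 ha (b * a) (-γ + γ)
  rw [h2] at h1
  rw [show γ + (-γ + γ) = γ by abel] at h1
  have key : a = a * b' * a := by
    calc a = (decompose 𝒜 a γ : A) := (decompose_of_mem_same 𝒜 ha).symm
      _ = (decompose 𝒜 (a * (b * a)) γ : A) := by rw [← mul_assoc, ← hb]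
      _ = a * (b' * a) := h1
      _ = a * b' * a := (mul_assoc _ _ _).symm
  have he0 : a * b' ∈ 𝒜 0 := by
    have := SetLike.mul_mem_graded ha (decompose 𝒜 b (-γ)).2
    rwa [add_neg_cancel] at this
  have hee : (a * b') * (a * b') = a * b' := by
    rw [← mul_assoc, ← key]
  refine ⟨a * b', he0, hee, le_antisymm ?_ ?_⟩
  · rw [Submodule.span_singleton_le_iff_mem]
    exact Submodule.mem_span_singleton.2 ⟨MulOpposite.op a, by
      rw [op_smul_eq_mul, ← key]⟩
  · rw [Submodule.span_singleton_le_iff_mem]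
    exact Submodule.mem_span_singleton.2 ⟨MulOpposite.op b', by
      rw [op_smul_eq_mul]⟩

lemma aux_combine (reg : IsGradedVonNeumannRegular 𝒜)
    {e f : A} (he0 : e ∈ 𝒜 0) (hee : e * e = e) (hf0 : f ∈ 𝒜 0) (_hff : f * f = f) :
    ∃ h : A, h ∈ 𝒜 0 ∧ h * h = h ∧
      Submodule.span Aᵐᵒᵖ {e} ⊔ Submodule.span Aᵐᵒᵖ {f} = Submodule.span Aᵐᵒᵖ {h} := by
  set a : A := f - e * f with hadef
  have ha0 : a ∈ 𝒜 0 := by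
    refine sub_mem hf0 ?_
    have := SetLike.mul_mem_graded he0 hf0
    rwa [add_zero] at this
  obtain ⟨g, hg0, hgg, hspan⟩ := aux_span_singleton_homog 𝒜 reg ha0
  have hga : g ∈ Submodule.span Aᵐᵒᵖ {a} := by
    rw [hspan]; exact Submodule.mem_span_singleton_self g
  obtain ⟨c, hc⟩ := Submodule.mem_span_singleton.1 hga
  rw [MulOpposite.smul_eq_mul_unop] at hc
  have hea : e * a = 0 := by
    rw [hadef, mul_sub, ← mul_assoc, hee, sub_self]
  have heg : e * g = 0 := by
    rw [← hc, ← mul_assoc, hea, zero_mul]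
  set h : A := e + g - g * e with hhdef
  have hh0 : h ∈ 𝒜 0 := by
    refine sub_mem (add_mem he0 hg0) ?_
    have := SetLike.mul_mem_graded hg0 he0
    rwa [add_zero] at this
  have hhe : h * e = e := by
    rw [hhdef, sub_mul, add_mul, hee, mul_assoc, hee, add_sub_cancel_right]
  have hhg : h * g = g := by
    rw [hhdef, sub_mul, add_mul, heg, hgg, mul_assoc, heg, mul_zero, sub_zero, zero_add]
  have hhh : h * h = h := by
    conv_lhs => rw [show h * h = h * e + h * g - h * (g * e) by rw [hhdef]; noncomm_ring]
    rw [hhe, hhg, ← mul_assoc, hhg, ← hhdef]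
  refine ⟨h, hh0, hhh, le_antisymm (sup_le ?_ ?_) ?_⟩
  · rw [Submodule.span_singleton_le_iff_mem]
    exact Submodule.mem_span_singleton.2 ⟨MulOpposite.op e, by
      rw [op_smul_eq_mul, hhe]⟩
  · -- f = a + e * f, a = h * g * c, e * f ∈ span e ≤ span h? No: f ∈ span h directly.
    rw [Submodule.span_singleton_le_iff_mem]
    have hahg : a ∈ Submodule.span Aᵐᵒᵖ {h} := by
      have : a ∈ Submodule.span Aᵐᵒᵖ {g} := by
        rw [← hspan]; exact Submodule.mem_span_singleton_self a
      obtain ⟨d, hd⟩ := Submodule.mem_span_singleton.1 this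
      rw [MulOpposite.smul_eq_mul_unop] at hd
      exact Submodule.mem_span_singleton.2 ⟨MulOpposite.op (g * d.unop), by
        rw [op_smul_eq_mul, ← mul_assoc, hhg, hd]⟩
    have hefh : e * f ∈ Submodule.span Aᵐᵒᵖ {h} := by
      exact Submodule.mem_span_singleton.2 ⟨MulOpposite.op (e * f), by
        rw [op_smul_eq_mul, ← mul_assoc, hhe]⟩
    have : f = a + e * f := by rw [hadef]; abel
    rw [this]
    exact add_mem hahg hefh
  · rw [Submodule.span_singleton_le_iff_mem]
    have h1 : e ∈ Submodule.span Aᵐᵒᵖ {e} ⊔ Submodule.span Aᵐᵒᵖ {f} :=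
      le_sup_left (α := Submodule Aᵐᵒᵖ A) (Submodule.mem_span_singleton_self e)
    have hgmem : g ∈ Submodule.span Aᵐᵒᵖ {e} ⊔ Submodule.span Aᵐᵒᵖ {f} := by
      have hamem : a ∈ Submodule.span Aᵐᵒᵖ {e} ⊔ Submodule.span Aᵐᵒᵖ {f} := by
        have hfm : f ∈ Submodule.span Aᵐᵒᵖ {e} ⊔ Submodule.span Aᵐᵒᵖ {f} :=
          le_sup_right (α := Submodule Aᵐᵒᵖ A) (Submodule.mem_span_singleton_self f)
        have hefm : e * f ∈ Submodule.span Aᵐᵒᵖ {e} ⊔ Submodule.span Aᵐᵒᵖ {f} := by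
          refine le_sup_left (α := Submodule Aᵐᵒᵖ A) ?_
          exact Submodule.mem_span_singleton.2 ⟨MulOpposite.op f, rfl⟩
        exact sub_mem hfm hefm
      have := Submodule.smul_mem _ c hamem
      rw [MulOpposite.smul_eq_mul_unop, hc] at this
      exact this
    have hgem : g - g * e ∈ Submodule.span Aᵐᵒᵖ {e} ⊔ Submodule.span Aᵐᵒᵖ {f} := by
      have := Submodule.smul_mem _ (MulOpposite.op (1 - e)) hgmem
      rw [op_smul_eq_mul, mul_sub, mul_one] at this
      exact this
    rw [hhdef, add_sub_assoc]
    exact add_mem h1 hgem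

lemma aux_finset (reg : IsGradedVonNeumannRegular 𝒜) (s : Finset A)
    (hs : ∀ a ∈ s, ∃ γ : Γ, a ∈ 𝒜 γ) :
    ∃ e : A, e ∈ 𝒜 0 ∧ e * e = e ∧
      Submodule.span Aᵐᵒᵖ (s : Set A) = Submodule.span Aᵐᵒᵖ {e} := by
  classical
  induction s using Finset.induction_on with
  | empty =>
    exact ⟨0, zero_mem _, by rw [mul_zero], by
      simp [Submodule.span_zero_singleton]⟩
  | insert a s hnotmem ih =>
    obtain ⟨γ, haγ⟩ := hs a (Finset.mem_insert_self a s)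
    obtain ⟨e₂, he₂0, he₂e, hsp₂⟩ := ih fun x hx => hs x (Finset.mem_insert_of_mem hx)
    obtain ⟨e₁, he₁0, he₁e, hsp₁⟩ := aux_span_singleton_homog 𝒜 reg haγ
    obtain ⟨h, hh0, hhh, hsph⟩ := aux_combine 𝒜 reg he₁0 he₁e he₂0 he₂e
    refine ⟨h, hh0, hhh, ?_⟩
    rw [Finset.coe_insert, Submodule.span_insert, hsp₁, hsp₂, hsph]

end Aux

/-- A graded ring is graded von Neumann regular iff every finitely generated
graded right ideal is generated by a homogeneous idempotent of degree zero, i.e. equals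
`eA = {e * x : x ∈ A}` for some idempotent `e ∈ 𝒜 0`.  Right ideals of `A` are submodules of `A`
as a right `A`-module, i.e. `Aᵐᵒᵖ`-submodules of `A`. -/
theorem isGradedVonNeumannRegular_iff_fg_graded_right_ideals_idempotent
    {Γ : Type*} [AddCommGroup Γ] [DecidableEq Γ]
    {A : Type*} [Ring A] (𝒜 : Γ → AddSubgroup A) [GradedRing 𝒜] :
    IsGradedVonNeumannRegular 𝒜 ↔
      ∀ I : Submodule Aᵐᵒᵖ A, I.FG →
        (∀ x ∈ I, ∀ γ : Γ, ((DirectSum.decompose 𝒜 x) γ : A) ∈ I) →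
        ∃ e : A, e ∈ 𝒜 0 ∧ e * e = e ∧ (I : Set A) = {y : A | ∃ x : A, y = e * x} := by
  constructor
  · intro reg I hFG hgraded
    obtain ⟨T, hT⟩ := hFG
    classical
    set S : Finset A := T.biUnion fun t =>
      (decompose 𝒜 t).support.image fun γ => (decompose 𝒜 t γ : A) with hS
    have homog : ∀ x ∈ S, ∃ γ : Γ, x ∈ 𝒜 γ := by
      intro x hx
      simp only [hS, Finset.mem_biUnion, Finset.mem_image] at hx
      obtain ⟨t, _, γ, _, rfl⟩ := hx
      exact ⟨γ, (decompose 𝒜 t γ).2⟩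
    have hspanS : Submodule.span Aᵐᵒᵖ (S : Set A) = I := by
      apply le_antisymm
      · rw [Submodule.span_le]
        intro x hx
        simp only [hS, Finset.coe_biUnion, Set.mem_iUnion, Finset.mem_coe,
          Finset.mem_image] at hx
        obtain ⟨t, ht, γ, _, rfl⟩ := hx
        exact hgraded t (hT ▸ Submodule.subset_span ht) γ
      · rw [← hT, Submodule.span_le]
        intro t ht
        have := DirectSum.sum_support_decompose 𝒜 t
        rw [← this]
        refine Submodule.sum_mem _ fun γ hγ => Submodule.subset_span ?_
        simp only [hS, Finset.coe_biUnion, Set.mem_iUnion, Finset.mem_coe,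
          Finset.mem_image]
        exact ⟨t, ht, γ, hγ, rfl⟩
    obtain ⟨e, he0, hee, hsp⟩ := aux_finset 𝒜 reg S homog
    refine ⟨e, he0, hee, ?_⟩
    ext y
    constructor
    · intro hy
      have : y ∈ Submodule.span Aᵐᵒᵖ ({e} : Set A) := by
        rw [← hsp, hspanS]; exact hy
      obtain ⟨c, hc⟩ := Submodule.mem_span_singleton.1 this
      rw [MulOpposite.smul_eq_mul_unop] at hc
      exact ⟨c.unop, hc.symm⟩
    · rintro ⟨x, rfl⟩
      have : e * x ∈ Submodule.span Aᵐᵒᵖ ({e} : Set A) :=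
        Submodule.mem_span_singleton.2 ⟨MulOpposite.op x, rfl⟩
      rw [← hsp, hspanS] at this
      exact this
  · intro H a ha
    obtain ⟨γ, haγ⟩ := ha
    have hgraded : ∀ x ∈ Submodule.span Aᵐᵒᵖ ({a} : Set A), ∀ δ : Γ,
        ((DirectSum.decompose 𝒜 x) δ : A) ∈ Submodule.span Aᵐᵒᵖ ({a} : Set A) := by
      intro x hx δ
      obtain ⟨c, hc⟩ := Submodule.mem_span_singleton.1 hx
      rw [MulOpposite.smul_eq_mul_unop] at hc
      have h := aux_decompose_mul_left 𝒜 haγ c.unop (δ - γ)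
      have hδ : γ + (δ - γ) = δ := by abel
      rw [hδ, hc] at h
      rw [h]
      exact Submodule.mem_span_singleton.2 ⟨MulOpposite.op _, rfl⟩
    obtain ⟨e, _, hee, hset⟩ := H (Submodule.span Aᵐᵒᵖ {a})
      ⟨{a}, by simp⟩ hgraded
    have hemem : e ∈ Submodule.span Aᵐᵒᵖ ({a} : Set A) := by
      have : e ∈ {y : A | ∃ x : A, y = e * x} := ⟨1, (mul_one e).symm⟩
      rwa [← hset] at this
    obtain ⟨c, hc⟩ := Submodule.mem_span_singleton.1 hemem
    rw [MulOpposite.smul_eq_mul_unop] at hc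
    have hamem : a ∈ {y : A | ∃ x : A, y = e * x} := by
      rw [← hset]
      exact SetLike.mem_coe.2 (Submodule.mem_span_singleton_self a)
    obtain ⟨y, hy⟩ := hamem
    refine ⟨c.unop, ?_⟩
    have : e * a = a := by
      conv_lhs => rw [hy, ← mul_assoc, hee, ← hy]
    rw [← hc] at this
    rw [mul_assoc] at this ⊢
    exact this.symm
end

section
/- Let A be a graded von Neumann regular Γ-graded ring with grading 𝒜 and A₀ = 𝒜 0. Then the assignments I ↦ I ∩ A₀ and J ↦ J·A are mutually inverse, inclusion-preserving bijections between the set of graded right ideals of A and the set of right ideals of the ring A₀. Concretely: (a) every graded right ideal I of A is generated as a right ideal of A by I ∩ A₀, i.e. (I ∩ A₀)·A = I; and (b) for every right ideal J of A₀, (J·A) ∩ A₀ = J, where J·A denotes the right ideal of A generated by J. -/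
open DirectSum

/-- For a graded von Neumann regular ring `A`, the assignments `I ↦ I ∩ A₀` and
`J ↦ J·A` give mutually inverse bijections between graded right ideals of `A` and right ideals of
`A₀ = 𝒜 0`.  Concretely:
(a) every graded right ideal `I` of `A` satisfies `(I ∩ A₀)·A = I`, and
(b) every right ideal `J` of `A₀` satisfies `(J·A) ∩ A₀ = J`.
Right ideals of `A` are `Aᵐᵒᵖ`-submodules of `A`; a right ideal of `A₀` is presented as an additive
subgroup of `A` contained in `𝒜 0` and stable under right multiplication by elements of `𝒜 0`. -/
theorem graded_right_ideal_correspondence_of_gradedVonNeumannRegular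
    {Γ : Type*} [AddCommGroup Γ] [DecidableEq Γ]
    {A : Type*} [Ring A] (𝒜 : Γ → AddSubgroup A) [GradedRing 𝒜]
    (hreg : IsGradedVonNeumannRegular 𝒜) :
    (∀ I : Submodule Aᵐᵒᵖ A,
        (∀ x ∈ I, ∀ γ : Γ, ((DirectSum.decompose 𝒜 x) γ : A) ∈ I) →
        Submodule.span Aᵐᵒᵖ ((I : Set A) ∩ (𝒜 0 : Set A)) = I) ∧
      (∀ J : AddSubgroup A, (J : Set A) ⊆ (𝒜 0 : Set A) →
        (∀ x ∈ J, ∀ a ∈ 𝒜 0, x * a ∈ J) →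
        ((Submodule.span Aᵐᵒᵖ (J : Set A) : Submodule Aᵐᵒᵖ A) : Set A) ∩ (𝒜 0 : Set A)
          = (J : Set A)) := by
  classical
  constructor
  · -- part (a)
    intro I hI
    apply le_antisymm
    · rw [Submodule.span_le]
      exact fun x hx => hx.1
    · intro x hx
      -- claim: every homogeneous element of I is in the span
      have key : ∀ γ : Γ, ∀ a ∈ I, a ∈ 𝒜 γ → a ∈ Submodule.span Aᵐᵒᵖ ((I : Set A) ∩ (𝒜 0 : Set A)) := by
        intro γ a haI haγ
        obtain ⟨b, hb⟩ := hreg a ⟨γ, haγ⟩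
        have habI : a * b ∈ I := I.smul_mem (MulOpposite.op b) haI
        set c : A := (decompose 𝒜 (a * b) 0 : A) with hc
        have hcI : c ∈ I := hI _ habI 0
        have hc0 : c ∈ 𝒜 0 := SetLike.coe_mem _
        have hca : a = c * a := by
          conv_lhs => rw [← DirectSum.decompose_of_mem_same 𝒜 haγ]
          conv_lhs => rw [hb]
          have : (decompose 𝒜 (a * b * a) (0 + γ) : A) = decompose 𝒜 (a * b) 0 * a :=
            DirectSum.coe_decompose_mul_add_of_right_mem 𝒜 haγ
          rw [zero_add] at this
          rw [this]
        rw [hca]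
        exact Submodule.smul_mem _ (MulOpposite.op a) (Submodule.subset_span ⟨hcI, hc0⟩)
      rw [← DirectSum.sum_support_decompose 𝒜 x]
      exact Submodule.sum_mem _ fun γ _ => key γ _ (hI x hx γ) (SetLike.coe_mem _)
  · -- part (b)
    intro J hJ0 hJmul
    -- graded pieces of J·A
    set Jg : Γ → AddSubgroup A := fun γ =>
      AddSubgroup.closure {z | ∃ j ∈ J, ∃ c ∈ 𝒜 γ, z = j * c} with hJg
    have Jg_mul : ∀ (i δ : Γ) (z : A), z ∈ Jg i → ∀ c ∈ 𝒜 δ, z * c ∈ Jg (i + δ) := by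
      intro i δ z hz c hc
      induction hz using AddSubgroup.closure_induction with
      | mem w hw =>
          obtain ⟨j, hj, d, hd, rfl⟩ := hw
          exact AddSubgroup.subset_closure ⟨j, hj, d * c, SetLike.mul_mem_graded hd hc, mul_assoc _ _ _⟩
      | zero => simpa using (Jg (i + δ)).zero_mem
      | add x y _ _ hx hy => rw [add_mul]; exact (Jg (i + δ)).add_mem hx hy
      | neg x _ hx => rw [neg_mul]; exact (Jg (i + δ)).neg_mem hx
    -- the submodule of elements all of whose components lie in the Jg
    set S : Submodule Aᵐᵒᵖ A :=
      { carrier := {y | ∀ γ : Γ, (decompose 𝒜 y γ : A) ∈ Jg γ}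
        add_mem' := fun {y z} hy hz γ => by
          rw [DirectSum.decompose_add, DirectSum.add_apply, AddSubgroup.coe_add]
          exact (Jg γ).add_mem (hy γ) (hz γ)
        zero_mem' := fun γ => by
          rw [DirectSum.decompose_zero, DirectSum.zero_apply, ZeroMemClass.coe_zero]
          exact (Jg γ).zero_mem
        smul_mem' := fun r y hy γ => by
          have hry : (r • y : A) = y * r.unop := rfl
          have hsum : y * MulOpposite.unop r = ∑ δ ∈ (decompose 𝒜 (MulOpposite.unop r)).support,
              y * (decompose 𝒜 (MulOpposite.unop r) δ : A) := by
            rw [← Finset.mul_sum, DirectSum.sum_support_decompose]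
          rw [hry, hsum, DirectSum.decompose_sum]
          rw [DFinsupp.finset_sum_apply, AddSubmonoidClass.coe_finset_sum]
          refine AddSubgroup.sum_mem _ fun δ _ => ?_
          have hmem : ((decompose 𝒜 r.unop δ : A)) ∈ 𝒜 δ := SetLike.coe_mem _
          have h1 : (decompose 𝒜 (y * (decompose 𝒜 r.unop δ : A)) ((γ - δ) + δ) : A)
              = (decompose 𝒜 y (γ - δ) : A) * (decompose 𝒜 r.unop δ : A) :=
            DirectSum.coe_decompose_mul_add_of_right_mem 𝒜 hmem
          rw [sub_add_cancel] at h1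
          rw [h1]
          have := Jg_mul (γ - δ) δ _ (hy (γ - δ)) _ hmem
          rwa [sub_add_cancel] at this } with hS
    have hspan : Submodule.span Aᵐᵒᵖ (J : Set A) ≤ S := by
      rw [Submodule.span_le]
      intro j hj γ
      rcases eq_or_ne γ 0 with rfl | hγ
      · rw [DirectSum.decompose_of_mem_same 𝒜 (hJ0 hj)]
        exact AddSubgroup.subset_closure ⟨j, hj, 1, SetLike.one_mem_graded _, (mul_one _).symm⟩
      · rw [DirectSum.decompose_of_mem_ne 𝒜 (hJ0 hj) (Ne.symm hγ)]
        exact (Jg γ).zero_mem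
    have hJg0 : Jg 0 ≤ J := by
      rw [hJg]
      refine (AddSubgroup.closure_le _).mpr ?_
      rintro z ⟨j, hj, c, hc, rfl⟩
      exact hJmul j hj c hc
    apply Set.Subset.antisymm
    · rintro x ⟨hx, hx0⟩
      have : (decompose 𝒜 x 0 : A) ∈ Jg 0 := hspan hx 0
      rw [DirectSum.decompose_of_mem_same 𝒜 hx0] at this
      exact hJg0 this
    · intro x hx
      exact ⟨Submodule.subset_span hx, hJ0 hx⟩
end

section
/- Let A be a strongly Γ-graded ring with grading 𝒜 and A₀ = 𝒜 0. Then A is graded von Neumann regular if and only if A₀ is a von Neumann regular ring, i.e. for every a ∈ A₀ there exists b ∈ A₀ with a = a·b·a. -/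
/-- The additive subgroup generated by the set of products `{x * y : x ∈ 𝒜 γ, y ∈ 𝒜 δ}`. -/
def gradedMulSubgroup {Γ : Type*} [AddCommGroup Γ] {A : Type*} [Ring A]
    (𝒜 : Γ → AddSubgroup A) (γ δ : Γ) : AddSubgroup A :=
  AddSubgroup.closure {z : A | ∃ x ∈ 𝒜 γ, ∃ y ∈ 𝒜 δ, z = x * y}

lemma neg_sum_map_aux {A : Type*} [Ring A] (l : List (A × A)) :
    (l.map fun p => -(p.1 * p.2)).sum = -(l.map fun p => p.1 * p.2).sum := by
  induction l with
  | nil => simp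
  | cons q l ih => simp only [List.map_cons, List.sum_cons, ih, neg_add]

lemma exists_list_of_mem_gradedMulSubgroup {Γ : Type*} [AddCommGroup Γ] {A : Type*} [Ring A]
    (𝒜 : Γ → AddSubgroup A) (γ δ : Γ) {w : A} (hw : w ∈ gradedMulSubgroup 𝒜 γ δ) :
    ∃ l : List (A × A), (∀ p ∈ l, p.1 ∈ 𝒜 γ ∧ p.2 ∈ 𝒜 δ) ∧
      w = (l.map fun p => p.1 * p.2).sum := by
  refine AddSubgroup.closure_induction ?_ ?_ ?_ ?_ hw
  · rintro x ⟨c, hc, d, hd, rfl⟩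
    exact ⟨[(c, d)], by simpa using ⟨hc, hd⟩, by simp⟩
  · exact ⟨[], by simp, by simp⟩
  · rintro x y _ _ ⟨l₁, h₁, rfl⟩ ⟨l₂, h₂, rfl⟩
    refine ⟨l₁ ++ l₂, ?_, by simp⟩
    intro p hp
    rcases List.mem_append.mp hp with h | h
    · exact h₁ p h
    · exact h₂ p h
  · rintro x _ ⟨l, hl, rfl⟩
    refine ⟨l.map fun p => (-p.1, p.2), ?_, ?_⟩
    · rintro p hp
      obtain ⟨q, hq, rfl⟩ := List.mem_map.mp hp
      exact ⟨neg_mem (hl q hq).1, (hl q hq).2⟩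
    · rw [List.map_map]
      rw [show ((fun p : A × A => p.1 * p.2) ∘ fun p => (-p.1, p.2)) = fun p : A × A => -(p.1 * p.2)
        from funext fun p => by simp]
      exact (neg_sum_map_aux l).symm

lemma key_idem {R : Type*} [Ring R] (S : AddSubgroup R)
    (hmul : ∀ x ∈ S, ∀ y ∈ S, x * y ∈ S)
    (hreg : ∀ x ∈ S, ∃ y ∈ S, x = x * y * x) (a : R) :
    ∀ l : List R, (∀ x ∈ l, x ∈ S ∧ ∃ w, x = a * w) →
      ∃ e, e ∈ S ∧ (∃ w, e = a * w) ∧ e * e = e ∧ ∀ x ∈ l, e * x = x := by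
  intro l
  induction l with
  | nil => exact fun _ => ⟨0, zero_mem S, ⟨0, by simp⟩, by simp, by simp⟩
  | cons xj l ih =>
    intro hl
    obtain ⟨e, heS, ⟨we, hwe⟩, hee, habs⟩ := ih fun x hx => hl x (List.mem_cons_of_mem _ hx)
    obtain ⟨hxjS, wj, hwj⟩ := hl xj List.mem_cons_self
    set y : R := xj - e * xj with hy
    have hyS : y ∈ S := sub_mem hxjS (hmul e heS xj hxjS)
    obtain ⟨z, hzS, hz⟩ := hreg y hyS
    set f : R := y * z with hf
    have hey : e * y = 0 := by
      rw [hy, mul_sub, ← mul_assoc, hee, sub_self]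
    have hef : e * f = 0 := by rw [hf, ← mul_assoc, hey, zero_mul]
    have hz' : y = y * z * y := by rw [← hf]; exact hz
    have hff : f * f = f := by
      rw [hf, ← mul_assoc, ← hz']
    have hfy : f * y = y := hz.symm
    refine ⟨e + f - f * e, ?_, ?_, ?_, ?_⟩
    · exact sub_mem (add_mem heS (hmul y hyS z hzS)) (hmul f (hmul y hyS z hzS) e heS)
    · refine ⟨we + (wj - we * xj) * z - (wj - we * xj) * z * (a * we), ?_⟩
      have hya : y = a * (wj - we * xj) := by
        rw [hy, hwj, hwe, mul_assoc, ← mul_sub, ← hwj]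
      rw [hf, hya, hwe]
      noncomm_ring
    · have h1 : (e + f - f * e) * e = e := by
        rw [sub_mul, add_mul, mul_assoc f e e, hee]
        exact add_sub_cancel_right e (f * e)
      have h2 : (e + f - f * e) * f = f := by
        rw [sub_mul, add_mul, hef, hff, mul_assoc f e f, hef, mul_zero]
        simp
      rw [mul_sub (e + f - f * e), mul_add (e + f - f * e), ← mul_assoc (e + f - f * e) f e, h1, h2]
    · intro x hx
      rcases List.mem_cons.mp hx with rfl | hx
      · rw [sub_mul, add_mul, mul_assoc f e x]
        have : f * x - f * (e * x) = f * (x - e * x) := (mul_sub f x (e * x)).symm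
        calc e * x + f * x - f * (e * x) = e * x + (f * x - f * (e * x)) := by abel
          _ = e * x + f * (x - e * x) := by rw [this]
          _ = e * x + y := by rw [← hy, hfy]
          _ = x := by rw [hy]; abel
      · have hx' := habs x hx
        rw [sub_mul, add_mul, mul_assoc f e x, hx']
        abel

/-- A `Γ`-graded ring is strongly graded when `𝒜 γ · 𝒜 δ = 𝒜 (γ + δ)` for all `γ, δ`. -/
def IsStronglyGraded {Γ : Type*} [AddCommGroup Γ] {A : Type*} [Ring A]
    (𝒜 : Γ → AddSubgroup A) : Prop :=
  ∀ γ δ : Γ, gradedMulSubgroup 𝒜 γ δ = 𝒜 (γ + δ)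

/-- A strongly graded ring is graded von Neumann regular if and only if its
degree-zero component `A₀ = 𝒜 0` is a von Neumann regular ring. -/
theorem isGradedVonNeumannRegular_iff_gradeZero_regular
    {Γ : Type*} [AddCommGroup Γ] [DecidableEq Γ]
    {A : Type*} [Ring A] (𝒜 : Γ → AddSubgroup A) [GradedRing 𝒜]
    (hstrong : IsStronglyGraded 𝒜) :
    IsGradedVonNeumannRegular 𝒜 ↔ ∀ a ∈ 𝒜 0, ∃ b ∈ 𝒜 0, a = a * b * a := by
  constructor
  · intro h a ha
    obtain ⟨b, hb⟩ := h a ⟨0, ha⟩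
    refine ⟨(DirectSum.decompose 𝒜 b 0 : A), SetLike.coe_mem _, ?_⟩
    classical
    have expand : a * b * a
        = ∑ γ ∈ (DirectSum.decompose 𝒜 b).support, a * (DirectSum.decompose 𝒜 b γ : A) * a := by
      conv_lhs => rw [← DirectSum.sum_support_decompose 𝒜 b]
      rw [Finset.mul_sum, Finset.sum_mul]
    have hmemγ : ∀ γ : Γ, a * (DirectSum.decompose 𝒜 b γ : A) * a ∈ 𝒜 γ := fun γ => by
      simpa using SetLike.mul_mem_graded (SetLike.mul_mem_graded ha (SetLike.coe_mem _)) ha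
    have hproj : ∀ γ : Γ, GradedRing.proj 𝒜 0 (a * (DirectSum.decompose 𝒜 b γ : A) * a)
        = if γ = 0 then a * (DirectSum.decompose 𝒜 b γ : A) * a else 0 := by
      intro γ
      rw [GradedRing.proj_apply]
      split_ifs with hγ
      · subst hγ; exact DirectSum.decompose_of_mem_same 𝒜 (hmemγ 0)
      · exact DirectSum.decompose_of_mem_ne 𝒜 (hmemγ γ) hγ
    have key : a = ∑ γ ∈ (DirectSum.decompose 𝒜 b).support,
        GradedRing.proj 𝒜 0 (a * (DirectSum.decompose 𝒜 b γ : A) * a) := by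
      rw [← map_sum, ← expand, ← hb, GradedRing.proj_apply,
        DirectSum.decompose_of_mem_same 𝒜 ha]
    conv_lhs => rw [key]
    refine (Finset.sum_eq_single 0 ?_ ?_).trans ?_
    · intro γ _ hγ; rw [hproj γ, if_neg hγ]
    · intro h0
      rw [DFinsupp.notMem_support_iff] at h0
      rw [hproj 0, if_pos rfl, h0]
      simp
    · rw [hproj 0, if_pos rfl]
  · rintro hreg a ⟨γ, ha⟩
    have h1 : (1 : A) ∈ gradedMulSubgroup 𝒜 (-γ) γ := by
      rw [hstrong (-γ) γ, neg_add_cancel]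
      exact SetLike.one_mem_graded 𝒜
    obtain ⟨l, hl, hsum⟩ := exists_list_of_mem_gradedMulSubgroup 𝒜 (-γ) γ h1
    have hmul0 : ∀ x ∈ 𝒜 (0 : Γ), ∀ y ∈ 𝒜 (0 : Γ), x * y ∈ 𝒜 (0 : Γ) := fun x hx y hy => by
      simpa using SetLike.mul_mem_graded hx hy
    have hmem : ∀ x ∈ l.map fun p => a * p.1, x ∈ 𝒜 (0 : Γ) ∧ ∃ w, x = a * w := by
      intro x hx
      obtain ⟨p, hp, rfl⟩ := List.mem_map.mp hx
      refine ⟨?_, p.1, rfl⟩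
      simpa using SetLike.mul_mem_graded ha (hl p hp).1
    obtain ⟨e, -, ⟨w, hw⟩, -, habs⟩ := key_idem (𝒜 0) hmul0 hreg a _ hmem
    have ha2 : a = (l.map fun p => a * p.1 * p.2).sum := by
      conv_lhs => rw [← mul_one a, hsum]
      rw [← List.sum_map_mul_left]
      exact congrArg List.sum (List.map_congr_left fun p _ => (mul_assoc a p.1 p.2).symm)
    have hterm : ∀ p ∈ l, e * (a * p.1 * p.2) = a * p.1 * p.2 := by
      intro p hp
      rw [← mul_assoc e (a * p.1) p.2, habs (a * p.1) (List.mem_map.mpr ⟨p, hp, rfl⟩)]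
    have hea : e * a = a := by
      calc e * a = (l.map fun p => e * (a * p.1 * p.2)).sum := by
            conv_lhs => rw [ha2]
            rw [← List.sum_map_mul_left]
        _ = (l.map fun p => a * p.1 * p.2).sum := congrArg List.sum (List.map_congr_left hterm)
        _ = a := ha2.symm
    exact ⟨w, by calc a = e * a := hea.symm
      _ = a * w * a := by rw [hw]⟩
end

section
/- Let A be a Γ-graded ring with grading 𝒜 and let P, M, N be graded left A-modules with gradings 𝒫, ℳ, 𝒩. Let h : P → M and g : M → N be A-linear maps and suppose f = g ∘ h is a graded homomorphism. (i) If g is a graded homomorphism, then there exists a graded A-linear homomorphism h' : P → M with f = g ∘ h'. (ii) If h is a graded homomorphism, then there exists a graded A-linear homomorphism g' : M → N with f = g' ∘ h. -/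
open DirectSum

section Aux

variable {Γ : Type*} [AddCommGroup Γ] [DecidableEq Γ]
    {A : Type*} [Ring A] (𝒜 : Γ → AddSubgroup A) [GradedRing 𝒜]
    {M : Type*} [AddCommGroup M] [Module A M] (ℳ : Γ → AddSubgroup M)
    [DirectSum.Decomposition ℳ] [SetLike.GradedSMul 𝒜 ℳ]
    {N : Type*} [AddCommGroup N] [Module A N] (𝒩 : Γ → AddSubgroup N)
    [DirectSum.Decomposition 𝒩] [SetLike.GradedSMul 𝒜 𝒩]

lemma decompose_smul_of_mem {δ : Γ} {a : A} (ha : a ∈ 𝒜 δ) (n : N) (γ : Γ) :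
    (DirectSum.decompose 𝒩 (a • n) (δ + γ) : N) = a • (DirectSum.decompose 𝒩 n γ : N) := by
  induction n using DirectSum.Decomposition.inductionOn 𝒩 with
  | zero => simp
  | homogeneous x =>
    rename_i ε
    obtain ⟨n, hn⟩ := x
    by_cases hε : ε = γ
    · subst hε
      have h1 : a • n ∈ 𝒩 (δ + ε) := SetLike.GradedSMul.smul_mem ha hn
      rw [DirectSum.decompose_of_mem_same 𝒩 h1,
        DirectSum.decompose_of_mem_same 𝒩 hn]
    · have h1 : a • n ∈ 𝒩 (δ + ε) := SetLike.GradedSMul.smul_mem ha hn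
      rw [DirectSum.decompose_of_mem_ne 𝒩 h1
        (fun hc => hε (add_left_cancel hc)),
        DirectSum.decompose_of_mem_ne 𝒩 hn hε, smul_zero]
  | add n n' ihn ihn' =>
    rw [smul_add, DirectSum.decompose_add, DirectSum.decompose_add]
    simp only [DirectSum.add_apply, AddSubgroup.coe_add, ihn, ihn', smul_add]

set_option synthInstance.maxHeartbeats 400000 in
set_option maxHeartbeats 1000000 in
/-- The degree-preserving part of a linear map between graded modules. -/
noncomputable def gradedPart (φ : M →ₗ[A] N) : M →ₗ[A] N where
  toFun m := DirectSum.toAddMonoid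
      (fun γ => AddMonoidHom.mk' (fun x : ℳ γ => (DirectSum.decompose 𝒩 (φ x) γ : N))
        (by intro x y; simp [map_add]))
      (DirectSum.decompose ℳ m)
  map_add' m m' := by simp only [DirectSum.decompose_add, map_add]
  map_smul' a m := by
    simp only [RingHom.id_apply]
    induction a using DirectSum.Decomposition.inductionOn 𝒜 with
    | zero => simp
    | homogeneous x =>
      rename_i δ
      obtain ⟨a, ha⟩ := x
      induction m using DirectSum.Decomposition.inductionOn ℳ with
      | zero => simp
      | homogeneous y =>
        rename_i γ
        obtain ⟨m, hm⟩ := y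
        have h1 : a • m ∈ ℳ (δ + γ) := SetLike.GradedSMul.smul_mem ha hm
        rw [DirectSum.decompose_of_mem ℳ h1,
          DirectSum.decompose_of_mem ℳ hm, DirectSum.toAddMonoid_of,
          DirectSum.toAddMonoid_of]
        simp only [AddMonoidHom.mk'_apply]
        rw [map_smul, decompose_smul_of_mem 𝒜 𝒩 ha]
      | add m m' ihm ihm' =>
        rw [smul_add, DirectSum.decompose_add, map_add, ihm, ihm',
          DirectSum.decompose_add, map_add, smul_add]
    | add a a' iha iha' =>
      rw [add_smul, DirectSum.decompose_add, map_add, iha, iha', add_smul]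

lemma gradedPart_mem (φ : M →ₗ[A] N) {γ : Γ} {m : M} (hm : m ∈ ℳ γ) :
    gradedPart 𝒜 ℳ 𝒩 φ m ∈ 𝒩 γ ∧
      gradedPart 𝒜 ℳ 𝒩 φ m = (DirectSum.decompose 𝒩 (φ m) γ : N) := by
  have : gradedPart 𝒜 ℳ 𝒩 φ m = (DirectSum.decompose 𝒩 (φ m) γ : N) := by
    show DirectSum.toAddMonoid _ (DirectSum.decompose ℳ m) = _
    rw [DirectSum.decompose_of_mem ℳ hm, DirectSum.toAddMonoid_of]
    rfl
  exact ⟨this ▸ SetLike.coe_mem _, this⟩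

set_option synthInstance.maxHeartbeats 400000 in
set_option maxHeartbeats 1000000 in
lemma graded_map_decompose (g : M →ₗ[A] N) (hg : ∀ γ : Γ, ∀ m ∈ ℳ γ, g m ∈ 𝒩 γ)
    (m : M) (γ : Γ) :
    g (DirectSum.decompose ℳ m γ : M) = (DirectSum.decompose 𝒩 (g m) γ : N) := by
  induction m using DirectSum.Decomposition.inductionOn ℳ with
  | zero => simp
  | homogeneous x =>
    rename_i ε
    obtain ⟨m, hm⟩ := x
    by_cases hε : ε = γ
    · subst hε
      rw [DirectSum.decompose_of_mem_same ℳ hm,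
        DirectSum.decompose_of_mem_same 𝒩 (hg ε m hm)]
    · rw [DirectSum.decompose_of_mem_ne ℳ hm hε,
        DirectSum.decompose_of_mem_ne 𝒩 (hg ε m hm) hε, map_zero]
  | add m m' ihm ihm' =>
    rw [DirectSum.decompose_add, map_add, DirectSum.decompose_add]
    simp only [DirectSum.add_apply, AddSubgroup.coe_add, map_add, ihm, ihm']

end Aux

set_option synthInstance.maxHeartbeats 400000 in
set_option maxHeartbeats 1000000 in
/-- Let `h : P → M` and `g : M → N` be `A`-linear maps between graded left
`A`-modules such that `f = g ∘ h` is a graded homomorphism.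
(i) If `g` is graded, then `f` factors as `g ∘ h'` for some graded `A`-linear `h' : P → M`.
(ii) If `h` is graded, then `f` factors as `g' ∘ h` for some graded `A`-linear `g' : M → N`. -/
theorem graded_factorization_of_comp_graded
    {Γ : Type*} [AddCommGroup Γ] [DecidableEq Γ]
    {A : Type*} [Ring A] (𝒜 : Γ → AddSubgroup A) [GradedRing 𝒜]
    {P : Type*} [AddCommGroup P] [Module A P] (𝒬 : Γ → AddSubgroup P)
    [DirectSum.Decomposition 𝒬] [SetLike.GradedSMul 𝒜 𝒬]
    {M : Type*} [AddCommGroup M] [Module A M] (ℳ : Γ → AddSubgroup M)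
    [DirectSum.Decomposition ℳ] [SetLike.GradedSMul 𝒜 ℳ]
    {N : Type*} [AddCommGroup N] [Module A N] (𝒩 : Γ → AddSubgroup N)
    [DirectSum.Decomposition 𝒩] [SetLike.GradedSMul 𝒜 𝒩]
    (h : P →ₗ[A] M) (g : M →ₗ[A] N)
    (hf : ∀ γ : Γ, ∀ x ∈ 𝒬 γ, g (h x) ∈ 𝒩 γ) :
    ((∀ γ : Γ, ∀ m ∈ ℳ γ, g m ∈ 𝒩 γ) →
        ∃ h' : P →ₗ[A] M, (∀ γ : Γ, ∀ x ∈ 𝒬 γ, h' x ∈ ℳ γ) ∧ g.comp h' = g.comp h) ∧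
      ((∀ γ : Γ, ∀ x ∈ 𝒬 γ, h x ∈ ℳ γ) →
        ∃ g' : M →ₗ[A] N, (∀ γ : Γ, ∀ m ∈ ℳ γ, g' m ∈ 𝒩 γ) ∧ g'.comp h = g.comp h) := by
  constructor
  · intro hg
    refine ⟨gradedPart 𝒜 𝒬 ℳ h, fun γ x hx => (gradedPart_mem 𝒜 𝒬 ℳ h hx).1, ?_⟩
    ext x
    simp only [LinearMap.comp_apply]
    induction x using DirectSum.Decomposition.inductionOn 𝒬 with
    | zero => simp
    | homogeneous y =>
      rename_i γ
      obtain ⟨x, hx⟩ := y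
      rw [(gradedPart_mem 𝒜 𝒬 ℳ h hx).2, graded_map_decompose ℳ 𝒩 g hg,
        DirectSum.decompose_of_mem_same 𝒩 (hf γ x hx)]
    | add x x' ihx ihx' => simp only [map_add, ihx, ihx']
  · intro hh
    refine ⟨gradedPart 𝒜 ℳ 𝒩 g, fun γ m hm => (gradedPart_mem 𝒜 ℳ 𝒩 g hm).1, ?_⟩
    ext x
    simp only [LinearMap.comp_apply]
    induction x using DirectSum.Decomposition.inductionOn 𝒬 with
    | zero => simp
    | homogeneous y =>
      rename_i γ
      obtain ⟨x, hx⟩ := y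
      rw [(gradedPart_mem 𝒜 ℳ 𝒩 g (hh γ x hx)).2,
        DirectSum.decompose_of_mem_same 𝒩 (hf γ x hx)]
    | add x x' ihx ihx' => simp only [map_add, ihx, ihx']
end

section
/- Let A be a Γ-graded ring with grading 𝒜 and let P be a graded left A-module that is projective as an A-module. Then P is graded projective: for every surjective graded homomorphism g : M → N of graded left A-modules and every graded homomorphism j : P → N, there exists a graded homomorphism h : P → M with g ∘ h = j. -/
universe v w

open DirectSum
set_option synthInstance.maxHeartbeats 1000000
set_option maxHeartbeats 1000000

/-- A graded left `A`-module `P` which is projective as an `A`-module is graded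
projective: every graded homomorphism from `P` lifts along surjective graded homomorphisms. -/
theorem graded_projective_of_projective
    {Γ : Type*} [AddCommGroup Γ] [DecidableEq Γ]
    {A : Type*} [Ring A] (𝒜 : Γ → AddSubgroup A) [GradedRing 𝒜]
    {P : Type*} [AddCommGroup P] [Module A P] (𝒬 : Γ → AddSubgroup P)
    [DirectSum.Decomposition 𝒬] [SetLike.GradedSMul 𝒜 𝒬]
    (hP : Module.Projective A P) :
    ∀ (M : Type v) [AddCommGroup M] [Module A M] (ℳ : Γ → AddSubgroup M)
      [DirectSum.Decomposition ℳ] [SetLike.GradedSMul 𝒜 ℳ]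
      (N : Type w) [AddCommGroup N] [Module A N] (𝒩 : Γ → AddSubgroup N)
      [DirectSum.Decomposition 𝒩] [SetLike.GradedSMul 𝒜 𝒩]
      (g : M →ₗ[A] N) (_ : Function.Surjective g) (_ : ∀ γ : Γ, ∀ m ∈ ℳ γ, g m ∈ 𝒩 γ)
      (j : P →ₗ[A] N) (_ : ∀ γ : Γ, ∀ x ∈ 𝒬 γ, j x ∈ 𝒩 γ),
      ∃ h : P →ₗ[A] M, (∀ γ : Γ, ∀ x ∈ 𝒬 γ, h x ∈ ℳ γ) ∧ g.comp h = j := by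
  intro M _ _ ℳ _ _ N _ _ 𝒩 _ _ g hg hgγ j hjγ
  haveI := hP
  obtain ⟨h₀, hh₀⟩ := Module.projective_lifting_property g j hg
  -- the graded part of `h₀`
  let F : ∀ γ : Γ, 𝒬 γ →+ M := fun γ =>
    { toFun := fun x => (DirectSum.decompose ℳ (h₀ x) γ : M)
      map_zero' := by simp
      map_add' := by
        intro x y
        simp only [map_add, DirectSum.decompose_add, DirectSum.add_apply, AddSubgroup.coe_add] }
  let h' : P →+ M :=
    (DirectSum.toAddMonoid F).comp (DirectSum.decomposeAddEquiv 𝒬).toAddMonoidHom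
  have h'_apply : ∀ {γ : Γ} (x : P) (hx : x ∈ 𝒬 γ),
      h' x = (DirectSum.decompose ℳ (h₀ x) γ : M) := by
    intro γ x hx
    show DirectSum.toAddMonoid F (DirectSum.decompose 𝒬 x) = _
    rw [DirectSum.decompose_of_mem 𝒬 hx, DirectSum.toAddMonoid_of]
    rfl
  -- key commutation lemma for the grading of `M`
  have L1 : ∀ (δ : Γ) (a : A), a ∈ 𝒜 δ → ∀ (m : M) (γ : Γ),
      (DirectSum.decompose ℳ (a • m) (δ + γ) : M) = a • (DirectSum.decompose ℳ m γ : M) := by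
    intro δ a ha m γ
    induction m using DirectSum.Decomposition.inductionOn ℳ with
    | zero => simp
    | @homogeneous μ m =>
      have hm : (m : M) ∈ ℳ μ := m.2
      have hsm : a • (m : M) ∈ ℳ (δ + μ) := SetLike.GradedSMul.smul_mem ha hm
      rcases eq_or_ne μ γ with rfl | hne
      · rw [DirectSum.decompose_of_mem_same ℳ hsm, DirectSum.decompose_of_mem_same ℳ hm]
      · rw [DirectSum.decompose_of_mem_ne ℳ hsm (by simpa using hne),
          DirectSum.decompose_of_mem_ne ℳ hm hne, smul_zero]
    | add m m' hm hm' =>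
      simp only [smul_add, DirectSum.decompose_add, DirectSum.add_apply, AddSubgroup.coe_add, hm, hm']
  -- `h'` is `A`-linear
  have key : ∀ (a : A) (x : P), h' (a • x) = a • h' x := by
    intro a x
    induction x using DirectSum.Decomposition.inductionOn 𝒬 with
    | zero => simp
    | @homogeneous γ xh =>
      induction a using DirectSum.Decomposition.inductionOn 𝒜 with
      | zero => simp
      | @homogeneous δ ah =>
        have hx : (xh : P) ∈ 𝒬 γ := xh.2
        have hsx : (ah : A) • (xh : P) ∈ 𝒬 (δ + γ) := SetLike.GradedSMul.smul_mem ah.2 hx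
        rw [h'_apply _ hsx, h'_apply _ hx, map_smul, L1 δ ah ah.2]
      | add a a' ha ha' =>
        rw [add_smul, map_add, ha, ha', add_smul]
    | add x x' hx hx' =>
      rw [smul_add, map_add, hx, hx', map_add, smul_add]
  refine ⟨{ toFun := h', map_add' := h'.map_add, map_smul' := key }, ?_, ?_⟩
  · intro γ x hx
    show h' x ∈ ℳ γ
    rw [h'_apply x hx]
    exact (DirectSum.decompose ℳ (h₀ x) γ).2
  · ext x
    show g (h' x) = j x
    induction x using DirectSum.Decomposition.inductionOn 𝒬 with
    | zero => simp
    | @homogeneous γ xh =>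
      have hx : (xh : P) ∈ 𝒬 γ := xh.2
      rw [h'_apply _ hx]
      -- `g` commutes with taking components
      have L2 : ∀ m : M, g (DirectSum.decompose ℳ m γ : M)
          = (DirectSum.decompose 𝒩 (g m) γ : N) := by
        intro m
        induction m using DirectSum.Decomposition.inductionOn ℳ with
        | zero => simp
        | @homogeneous μ m =>
          have hm : (m : M) ∈ ℳ μ := m.2
          have hgm : g (m : M) ∈ 𝒩 μ := hgγ μ m hm
          rcases eq_or_ne μ γ with rfl | hne
          · rw [DirectSum.decompose_of_mem_same ℳ hm, DirectSum.decompose_of_mem_same 𝒩 hgm]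
          · rw [DirectSum.decompose_of_mem_ne ℳ hm hne,
              DirectSum.decompose_of_mem_ne 𝒩 hgm hne, map_zero]
        | add m m' hm hm' =>
          simp only [DirectSum.decompose_add, DirectSum.add_apply, AddSubgroup.coe_add, map_add, hm, hm']
      have : g (h₀ (xh : P)) = j (xh : P) := by
        have := congrArg (fun f : P →ₗ[A] N => f (xh : P)) hh₀
        simpa using this
      rw [L2, this, DirectSum.decompose_of_mem_same 𝒩 (hjγ γ xh hx)]
    | add x x' hx hx' =>
      rw [map_add, map_add, hx, hx', map_add]
end

section
/- Let A be a Γ-graded ring with grading 𝒜, and let M and N be graded left A-modules with gradings ℳ and 𝒩; assume M is finitely generated as an A-module. For δ ∈ Γ let Hom_A(M,N)_δ be the additive subgroup of the group Hom_A(M,N) of A-linear maps consisting of those f with f(ℳ γ) ⊆ 𝒩 (γ+δ) for all γ ∈ Γ. Then Hom_A(M,N) is the internal direct sum ⊕_{δ∈Γ} Hom_A(M,N)_δ of these subgroups. Moreover, for N = M the composition of maps satisfies End_A(M)_γ ∘ End_A(M)_δ ⊆ End_A(M)_{γ+δ}, so this decomposition makes the endomorphism ring End_A(M) a Γ-graded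 ring. -/
set_option linter.unusedSectionVars false
set_option maxHeartbeats 1000000

/-- The additive subgroup of `Hom_A(M, N)` of graded homomorphisms of degree `δ`, i.e. of those
`A`-linear maps `f` with `f (ℳ γ) ⊆ 𝒩 (γ + δ)` for all `γ`. -/
def homDegree {Γ : Type*} [AddCommGroup Γ] {A : Type*} [Ring A]
    {M : Type*} [AddCommGroup M] [Module A M] (ℳ : Γ → AddSubgroup M)
    {N : Type*} [AddCommGroup N] [Module A N] (𝒩 : Γ → AddSubgroup N)
    (δ : Γ) : AddSubgroup (M →ₗ[A] N) where
  carrier := {f : M →ₗ[A] N | ∀ γ : Γ, ∀ m ∈ ℳ γ, f m ∈ 𝒩 (γ + δ)}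
  zero_mem' := fun γ m _ => by
    simpa using (𝒩 (γ + δ)).zero_mem
  add_mem' := fun {f g} hf hg γ m hm => by
    simpa using (𝒩 (γ + δ)).add_mem (hf γ m hm) (hg γ m hm)
  neg_mem' := fun {f} hf γ m hm => by
    simpa using (𝒩 (γ + δ)).neg_mem (hf γ m hm)

section aux

open DirectSum

variable {Γ : Type*} [AddCommGroup Γ] [DecidableEq Γ]
variable {A : Type*} [Ring A]
variable {M : Type*} [AddCommGroup M] [Module A M]
variable {N : Type*} [AddCommGroup N] [Module A N]

/-- Projection onto the degree-`ε` component, as an additive map `N →+ N`. -/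
noncomputable def projHom (𝒩 : Γ → AddSubgroup N) [DirectSum.Decomposition 𝒩] (ε : Γ) : N →+ N :=
  AddMonoidHom.mk' (fun n => (DirectSum.decompose 𝒩 n ε : N)) (fun a b => by
    show ((DirectSum.decompose 𝒩 (a + b) ε : N)) = _
    rw [DirectSum.decompose_add, DirectSum.add_apply, AddSubgroup.coe_add])

lemma smul_mem_graded' {𝒩 : Γ → AddSubgroup N} (𝒜 : Γ → AddSubgroup A)
    [SetLike.GradedSMul 𝒜 𝒩] {α ε : Γ} {a : A} {n : N} (ha : a ∈ 𝒜 α) (hn : n ∈ 𝒩 ε) :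
    a • n ∈ 𝒩 (α + ε) :=
  SetLike.GradedSMul.smul_mem ha hn

variable (𝒩 : Γ → AddSubgroup N) [DirectSum.Decomposition 𝒩]

lemma projHom_apply (ε : Γ) (n : N) : projHom 𝒩 ε n = (decompose 𝒩 n ε : N) := rfl

lemma projHom_mem (ε : Γ) (n : N) : projHom 𝒩 ε n ∈ 𝒩 ε := (decompose 𝒩 n ε).2

lemma projHom_of_mem_same {ε : Γ} {n : N} (h : n ∈ 𝒩 ε) : projHom 𝒩 ε n = n :=
  decompose_of_mem_same 𝒩 h

lemma projHom_of_mem_ne {ε ε' : Γ} {n : N} (h : n ∈ 𝒩 ε') (hne : ε' ≠ ε) : projHom 𝒩 ε n = 0 :=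
  decompose_of_mem_ne 𝒩 h hne

lemma sum_projHom [∀ (i) (x : 𝒩 i), Decidable (x ≠ 0)] (n : N) (T : Finset Γ)
    (hT : (decompose 𝒩 n).support ⊆ T) : ∑ ε ∈ T, projHom 𝒩 ε n = n := by
  rw [← Finset.sum_subset hT (fun ε _ hε => by
    rw [projHom_apply, DFinsupp.notMem_support_iff.mp hε, ZeroMemClass.coe_zero])]
  simpa only [projHom_apply] using sum_support_decompose 𝒩 n

variable (𝒜 : Γ → AddSubgroup A) [GradedRing 𝒜] [SetLike.GradedSMul 𝒜 𝒩]

lemma projHom_smul {α : Γ} {a : A} (ha : a ∈ 𝒜 α) (ε : Γ) (n : N) :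
    projHom 𝒩 (α + ε) (a • n) = a • projHom 𝒩 ε n := by
  induction n using DirectSum.Decomposition.inductionOn 𝒩 with
  | zero => simp
  | @homogeneous ε' n =>
      rcases eq_or_ne ε' ε with rfl | hne
      · rw [projHom_of_mem_same 𝒩 n.2,
          projHom_of_mem_same 𝒩 (smul_mem_graded' 𝒜 ha n.2)]
      · rw [projHom_of_mem_ne 𝒩 n.2 hne, smul_zero,
          projHom_of_mem_ne 𝒩 (smul_mem_graded' 𝒜 ha n.2)
            (by simpa using hne)]
  | add n n' hn hn' => rw [smul_add, map_add, hn, hn', map_add, smul_add]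

variable (ℳ : Γ → AddSubgroup M) [DirectSum.Decomposition ℳ] [SetLike.GradedSMul 𝒜 ℳ]

/-- The degree-`δ` component of a linear map, as an additive map. -/
noncomputable def homComponentHom (f : M →ₗ[A] N) (δ : Γ) : M →+ N :=
  AddMonoidHom.mk' (fun m => DFinsupp.sumAddHom (fun γ : Γ =>
      (projHom 𝒩 (γ + δ)).comp (f.toAddMonoidHom.comp (ℳ γ).subtype))
      (DirectSum.decompose ℳ m)) (fun a b => by
    show DFinsupp.sumAddHom _ (DirectSum.decompose ℳ (a + b)) = _
    rw [DirectSum.decompose_add, map_add])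

lemma homComponentHom_of_mem (f : M →ₗ[A] N) (δ : Γ) {γ : Γ} {m : M} (hm : m ∈ ℳ γ) :
    homComponentHom 𝒩 ℳ f δ m = projHom 𝒩 (γ + δ) (f m) := by
  show DFinsupp.sumAddHom _ (DirectSum.decompose ℳ m) = _
  rw [DirectSum.decompose_of_mem ℳ hm]
  exact DFinsupp.sumAddHom_single _ _ _

/-- The degree-`δ` component of a linear map. -/
noncomputable def homComponent (f : M →ₗ[A] N) (δ : Γ) : M →ₗ[A] N where
  toFun := homComponentHom 𝒩 ℳ f δ
  map_add' := map_add _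
  map_smul' := by
    intro a m
    simp only [RingHom.id_apply]
    induction m using DirectSum.Decomposition.inductionOn ℳ with
    | zero => rw [smul_zero, map_zero, smul_zero]
    | @homogeneous γ m =>
        induction a using DirectSum.Decomposition.inductionOn 𝒜 with
        | zero => rw [zero_smul, map_zero, zero_smul]
        | @homogeneous α a =>
            rw [homComponentHom_of_mem 𝒩 ℳ f δ (smul_mem_graded' 𝒜 a.2 m.2),
              homComponentHom_of_mem 𝒩 ℳ f δ m.2, map_smul, add_assoc,
              projHom_smul 𝒩 𝒜 a.2]
        | add a a' ha ha' => rw [add_smul, map_add, ha, ha', add_smul]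
    | add m m' hm hm' => rw [smul_add, map_add, hm, hm', map_add, smul_add]

lemma homComponent_apply_of_mem (f : M →ₗ[A] N) (δ : Γ) {γ : Γ} {m : M} (hm : m ∈ ℳ γ) :
    homComponent 𝒩 𝒜 ℳ f δ m = projHom 𝒩 (γ + δ) (f m) :=
  homComponentHom_of_mem 𝒩 ℳ f δ hm

lemma homComponent_mem (f : M →ₗ[A] N) (δ : Γ) :
    homComponent 𝒩 𝒜 ℳ f δ ∈ homDegree (A := A) ℳ 𝒩 δ := fun γ m hm => by
  rw [homComponent_apply_of_mem 𝒩 𝒜 ℳ f δ hm]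
  exact projHom_mem 𝒩 _ _

end aux

/-- For graded left modules `M` and `N` over a graded ring `A`, with `M`
finitely generated, `Hom_A(M, N)` is the internal direct sum of the subgroups `Hom_A(M, N)_δ` of
graded homomorphisms of degree `δ`.  Moreover, composition of endomorphisms satisfies
`End_A(M)_γ ∘ End_A(M)_δ ⊆ End_A(M)_{γ+δ}`, making `End_A(M)` a `Γ`-graded ring. -/
theorem hom_isInternal_and_end_gradedMul
    {Γ : Type*} [AddCommGroup Γ] [DecidableEq Γ]
    {A : Type*} [Ring A] (𝒜 : Γ → AddSubgroup A) [GradedRing 𝒜]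
    {M : Type*} [AddCommGroup M] [Module A M] (ℳ : Γ → AddSubgroup M)
    [DirectSum.Decomposition ℳ] [SetLike.GradedSMul 𝒜 ℳ]
    {N : Type*} [AddCommGroup N] [Module A N] (𝒩 : Γ → AddSubgroup N)
    [DirectSum.Decomposition 𝒩] [SetLike.GradedSMul 𝒜 𝒩]
    [Module.Finite A M] :
    DirectSum.IsInternal (homDegree (A := A) ℳ 𝒩) ∧
      ∀ (γ δ : Γ) (f g : M →ₗ[A] M), f ∈ homDegree (A := A) ℳ ℳ γ → g ∈ homDegree (A := A) ℳ ℳ δ →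
        f ∘ₗ g ∈ homDegree (A := A) ℳ ℳ (γ + δ) := by
  classical
  constructor
  · constructor
    · -- injectivity
      rw [injective_iff_map_eq_zero]
      intro x hx
      have hx' : ∑ δ ∈ DFinsupp.support x, ((x δ : M →ₗ[A] N)) = 0 := by
        have h := congrArg (DirectSum.coeAddMonoidHom (homDegree (A := A) ℳ 𝒩))
          (DirectSum.sum_support_of x)
        rw [map_sum] at h
        simp only [DirectSum.coeAddMonoidHom_of] at h
        rw [h, hx]
      refine DFinsupp.ext fun δ₀ => ?_
      show x δ₀ = 0
      by_cases hδ₀ : δ₀ ∈ DFinsupp.support x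
      · rw [← ZeroMemClass.coe_eq_zero]
        refine LinearMap.ext fun m => ?_
        rw [LinearMap.zero_apply]
        induction m using DirectSum.Decomposition.inductionOn ℳ with
        | zero => rw [map_zero]
        | @homogeneous γ m =>
            have h1 : ∑ δ ∈ DFinsupp.support x, (x δ : M →ₗ[A] N) (m : M) = 0 := by
              rw [← LinearMap.sum_apply, hx', LinearMap.zero_apply]
            have h2 := congrArg (projHom 𝒩 (γ + δ₀)) h1
            rw [map_sum, map_zero] at h2
            rwa [Finset.sum_eq_single_of_mem δ₀ hδ₀ (fun δ _ hne =>
                projHom_of_mem_ne 𝒩 ((x δ).2 γ m m.2) fun h => hne (add_left_cancel h)),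
              projHom_of_mem_same 𝒩 ((x δ₀).2 γ m m.2)] at h2
        | add m m' hm hm' => rw [map_add, hm, hm', add_zero]
      · exact DFinsupp.notMem_support_iff.mp hδ₀
    · -- surjectivity
      intro f
      obtain ⟨s, hs⟩ : (⊤ : Submodule A M).FG := Module.finite_def.mp ‹Module.Finite A M›
      set T : M → Finset Γ := fun y => (DirectSum.decompose ℳ y).support.biUnion fun γ =>
        ((DirectSum.decompose 𝒩 (f (DirectSum.decompose ℳ y γ : M))).support.image
          fun ε => ε - γ) with hT
      set S : Finset Γ := s.biUnion T with hSdef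
      refine ⟨∑ δ ∈ S, DirectSum.of (fun δ => homDegree (A := A) ℳ 𝒩 δ) δ
        ⟨homComponent 𝒩 𝒜 ℳ f δ, homComponent_mem 𝒩 𝒜 ℳ f δ⟩, ?_⟩
      rw [map_sum]
      simp only [DirectSum.coeAddMonoidHom_of]
      refine LinearMap.ext_on hs fun y hy => ?_
      have hysum : ∀ g : M →ₗ[A] N, g y =
          ∑ γ ∈ (DirectSum.decompose ℳ y).support, g (DirectSum.decompose ℳ y γ : M) := by
        intro g
        conv_lhs => rw [← DirectSum.sum_support_decompose ℳ y]
        rw [map_sum]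
      calc (∑ δ ∈ S, homComponent 𝒩 𝒜 ℳ f δ) y
          = ∑ δ ∈ S, ∑ γ ∈ (DirectSum.decompose ℳ y).support,
              projHom 𝒩 (γ + δ) (f (DirectSum.decompose ℳ y γ : M)) := by
            rw [LinearMap.sum_apply]
            exact Finset.sum_congr rfl fun δ _ => by
              rw [hysum (homComponent 𝒩 𝒜 ℳ f δ)]
              exact Finset.sum_congr rfl fun γ _ =>
                homComponent_apply_of_mem 𝒩 𝒜 ℳ f δ (DirectSum.decompose ℳ y γ).2
        _ = ∑ γ ∈ (DirectSum.decompose ℳ y).support, ∑ δ ∈ S,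
              projHom 𝒩 (γ + δ) (f (DirectSum.decompose ℳ y γ : M)) := Finset.sum_comm
        _ = ∑ γ ∈ (DirectSum.decompose ℳ y).support,
              f (DirectSum.decompose ℳ y γ : M) := by
            refine Finset.sum_congr rfl fun γ hγ => ?_
            have hinj : ∀ δ1 ∈ S, ∀ δ2 ∈ S, γ + δ1 = γ + δ2 → δ1 = δ2 :=
              fun _ _ _ _ h => add_left_cancel h
            rw [show (∑ δ ∈ S, projHom 𝒩 (γ + δ) (f (DirectSum.decompose ℳ y γ : M)))
                = ∑ ε ∈ S.image (fun δ => γ + δ),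
                    projHom 𝒩 ε (f (DirectSum.decompose ℳ y γ : M)) from
              (Finset.sum_image (f := fun ε => projHom 𝒩 ε (f (DirectSum.decompose ℳ y γ : M))) (g := fun δ => γ + δ) hinj).symm]
            refine sum_projHom 𝒩 _ _ fun ε hε => ?_
            rw [Finset.mem_image]
            refine ⟨ε - γ, ?_, by abel⟩
            exact Finset.mem_biUnion.mpr ⟨y, hy, Finset.mem_biUnion.mpr
              ⟨γ, hγ, Finset.mem_image.mpr ⟨ε, hε, rfl⟩⟩⟩
        _ = f y := (hysum f).symm
  · intro γ δ f g hf hg γ' m hm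
    have h := hf (γ' + δ) (g m) (hg γ' m hm)
    rw [show γ' + (γ + δ) = γ' + δ + γ by abel]
    exact h
end

section
/- Let R be a commutative ring, M an R-module, and Q a quadratic form on M. Assume there exist x, y ∈ M with polar(Q)(x, y) = 1, where polar(Q)(x, y) = Q(x+y) − Q(x) − Q(y) (this holds, for example, when M ≠ 0 and Q is a quadratic form over a field with nondegenerate associated bilinear form). Then the Clifford algebra of Q is strongly ℤ/2ℤ-graded with respect to its even–odd grading: for all i, j ∈ ℤ/2ℤ one has the equality of submodules evenOdd Q i * evenOdd Q j = evenOdd Q (i + j). -/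
/-- If `Q` is a quadratic form whose polar form takes the value `1` somewhere,
then the Clifford algebra of `Q` is strongly `ℤ/2ℤ`-graded for its even–odd grading:
`evenOdd Q i * evenOdd Q j = evenOdd Q (i + j)` for all `i j : ZMod 2`. -/
theorem cliffordAlgebra_evenOdd_stronglyGraded
    {R : Type*} [CommRing R] {M : Type*} [AddCommGroup M] [Module R M]
    (Q : QuadraticForm R M) (h : ∃ x y : M, QuadraticMap.polar (⇑Q) x y = 1) :
    ∀ i j : ZMod 2,
      CliffordAlgebra.evenOdd Q i * CliffordAlgebra.evenOdd Q j
        = CliffordAlgebra.evenOdd Q (i + j) := by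
  classical
  obtain ⟨x, y, hxy⟩ := h
  intro i j
  refine le_antisymm (Submodule.mul_le.2 fun a ha b hb => SetLike.mul_mem_graded ha hb) ?_
  intro z hz
  have h1 : (1 : CliffordAlgebra Q) ∈ CliffordAlgebra.evenOdd Q 0 :=
    SetLike.one_mem_graded _
  have hxmem : CliffordAlgebra.ι Q x ∈ CliffordAlgebra.evenOdd Q 1 :=
    CliffordAlgebra.ι_mem_evenOdd_one Q x
  have hymem : CliffordAlgebra.ι Q y ∈ CliffordAlgebra.evenOdd Q 1 :=
    CliffordAlgebra.ι_mem_evenOdd_one Q y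
  fin_cases i <;> fin_cases j
  · -- 0, 0
    have hm := Submodule.mul_mem_mul h1 hz
    rw [one_mul] at hm
    exact hm
  · -- 0, 1
    have hm := Submodule.mul_mem_mul h1 hz
    rw [one_mul] at hm
    exact hm
  · -- 1, 0
    have hm := Submodule.mul_mem_mul hz h1
    rw [mul_one] at hm
    exact hm
  · -- 1, 1
    have hpolar : CliffordAlgebra.ι Q x * CliffordAlgebra.ι Q y
        + CliffordAlgebra.ι Q y * CliffordAlgebra.ι Q x = 1 := by
      rw [CliffordAlgebra.ι_mul_ι_add_swap, hxy, map_one]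
    have hz0 : z ∈ CliffordAlgebra.evenOdd Q 0 := by exact hz
    have hzx : z * CliffordAlgebra.ι Q x ∈ CliffordAlgebra.evenOdd Q 1 := by
      simpa using SetLike.mul_mem_graded hz0 hxmem
    have hzy : z * CliffordAlgebra.ι Q y ∈ CliffordAlgebra.evenOdd Q 1 := by
      simpa using SetLike.mul_mem_graded hz0 hymem
    have : z = z * CliffordAlgebra.ι Q x * CliffordAlgebra.ι Q y
        + z * CliffordAlgebra.ι Q y * CliffordAlgebra.ι Q x := by
      rw [mul_assoc, mul_assoc, ← mul_add, hpolar, mul_one]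
    rw [this]
    exact add_mem (Submodule.mul_mem_mul hzx hymem) (Submodule.mul_mem_mul hzy hxmem)
end

section
/- Let Γ be an additive abelian group and let R be a commutative Γ-graded ring (with grading ℛ) which is a graded field: R is nontrivial and every nonzero homogeneous element of R is a unit. Let A be an R-algebra which is finitely generated as an R-module, equipped with a Γ-grading 𝒜 making A a Γ-graded ring, such that the structure map algebraMap R A sends ℛ γ into 𝒜 γ for every γ ∈ Γ. Assume that A is graded simple and that the center of A equals the image of algebraMap R A. Then A is an Azumaya algebra over R: A is a faithful, finitely generated projective R-module and the natural R-algebra homomorphism A ⊗_R A^op → End_R(A) sending a ⊗ b to the R-linear map x ↦ a·x·b is bijective. -/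
open DirectSum TensorProduct

/-- The natural `R`-linear map `A ⊗[R] Aᵐᵒᵖ → End_R(A)` sending `a ⊗ b` to `x ↦ a * x * b`. -/
noncomputable def mulLeftRightHom (R A : Type*) [CommRing R] [Ring A] [Algebra R A] :
    A ⊗[R] Aᵐᵒᵖ →ₗ[R] Module.End R A :=
  TensorProduct.lift <|
    LinearMap.mk₂ R
      (fun a b => (LinearMap.mulLeft R a) ∘ₗ (LinearMap.mulRight R (MulOpposite.unop b)))
      (fun a₁ a₂ b => by ext x; simp [add_mul])
      (fun r a b => by ext x; simp [smul_mul_assoc])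
      (fun a b₁ b₂ => by ext x; simp [mul_add])
      (fun r a b => by ext x; simp [mul_smul_comm])


section GCSAHelpers

variable {Γ : Type*} [AddCommGroup Γ] [DecidableEq Γ]
variable {A : Type*} [Ring A] (𝒜 : Γ → AddSubgroup A) [GradedRing 𝒜]

lemma gcsa_comp_finsetSum {β : Type*} (t : Finset β) (f : β → A) (γ : Γ) :
    ((DirectSum.decompose 𝒜 (∑ x ∈ t, f x)) γ : A) = ∑ x ∈ t, ((DirectSum.decompose 𝒜 (f x)) γ : A) := by
  rw [DirectSum.decompose_sum, DFinsupp.finset_sum_apply, AddSubmonoidClass.coe_finset_sum]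

lemma gcsa_comp_sum_homog (c γ : Γ) (t : Finset Γ) (g : Γ → A)
    (hg : ∀ μ ∈ t, g μ ∈ 𝒜 (μ + c)) (hg0 : ∀ μ, μ ∉ t → g μ = 0) :
    ((DirectSum.decompose 𝒜 (∑ μ ∈ t, g μ)) γ : A) = g (γ - c) := by
  classical
  rw [gcsa_comp_finsetSum]
  have h1 : ∀ μ ∈ t, ((DirectSum.decompose 𝒜 (g μ)) γ : A) = if μ = γ - c then g (γ - c) else 0 := by
    intro μ hμ
    by_cases h : μ = γ - c
    · subst h
      rw [if_pos rfl]
      exact DirectSum.decompose_of_mem_same 𝒜 (by simpa [sub_add_cancel] using hg _ hμ)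
    · rw [if_neg h]
      exact DirectSum.decompose_of_mem_ne 𝒜 (hg _ hμ) fun hc => h (eq_sub_of_add_eq hc)
  rw [Finset.sum_congr rfl h1, Finset.sum_ite_eq' t (γ - c) fun _ => g (γ - c)]
  split
  · rfl
  · exact (hg0 _ ‹_›).symm

lemma gcsa_comp_mul_left (γ τ : Γ) {z : A} (hz : z ∈ 𝒜 τ) (y : A) :
    ((DirectSum.decompose 𝒜 (z * y)) γ : A) = z * ((DirectSum.decompose 𝒜 y) (γ - τ) : A) := by
  classical
  conv_lhs => rw [← DirectSum.sum_support_decompose 𝒜 y, Finset.mul_sum]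
  exact gcsa_comp_sum_homog 𝒜 τ γ (DirectSum.decompose 𝒜 y).support
    (fun μ => z * ((DirectSum.decompose 𝒜 y) μ : A))
    (fun μ _ => by
      simpa [add_comm] using SetLike.mul_mem_graded hz (SetLike.coe_mem ((DirectSum.decompose 𝒜 y) μ)))
    (fun μ hμ => by
      simp [DFinsupp.notMem_support_iff.mp hμ])

lemma gcsa_comp_mul_right (γ τ : Γ) (z : A) {y : A} (hy : y ∈ 𝒜 τ) :
    ((DirectSum.decompose 𝒜 (z * y)) γ : A) = ((DirectSum.decompose 𝒜 z) (γ - τ) : A) * y := by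
  classical
  conv_lhs => rw [← DirectSum.sum_support_decompose 𝒜 z, Finset.sum_mul]
  exact gcsa_comp_sum_homog 𝒜 τ γ (DirectSum.decompose 𝒜 z).support
    (fun μ => ((DirectSum.decompose 𝒜 z) μ : A) * y)
    (fun μ _ =>
      SetLike.mul_mem_graded (SetLike.coe_mem ((DirectSum.decompose 𝒜 z) μ)) hy)
    (fun μ hμ => by
      simp [DFinsupp.notMem_support_iff.mp hμ])

variable {R : Type*} [CommRing R] (ℛ : Γ → AddSubgroup R) [GradedRing ℛ] [Algebra R A]
variable (hmap : ∀ γ : Γ, ∀ r ∈ ℛ γ, algebraMap R A r ∈ 𝒜 γ)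

include hmap

lemma gcsa_comp_algebraMap (r : R) (γ : Γ) :
    ((DirectSum.decompose 𝒜 (algebraMap R A r)) γ : A)
      = algebraMap R A ((DirectSum.decompose ℛ r) γ : R) := by
  classical
  conv_lhs => rw [← DirectSum.sum_support_decompose ℛ r, map_sum]
  rw [gcsa_comp_sum_homog 𝒜 0 γ (DirectSum.decompose ℛ r).support
    (fun μ => algebraMap R A ((DirectSum.decompose ℛ r) μ : R))
    (fun μ _ => by
      simpa using hmap μ _ (SetLike.coe_mem ((DirectSum.decompose ℛ r) μ)))
    (fun μ hμ => by simp [DFinsupp.notMem_support_iff.mp hμ])]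
  rw [sub_zero]

lemma gcsa_comp_smul_homog {r : R} {μ : Γ} (hr : r ∈ ℛ μ) (y : A) (γ : Γ) :
    ((DirectSum.decompose 𝒜 (r • y)) γ : A) = r • ((DirectSum.decompose 𝒜 y) (γ - μ) : A) := by
  rw [Algebra.smul_def, Algebra.smul_def, gcsa_comp_mul_left 𝒜 γ μ (hmap μ r hr) y]

lemma gcsa_comp_smul_right (r : R) {τ : Γ} {y : A} (hy : y ∈ 𝒜 τ) (γ : Γ) :
    ((DirectSum.decompose 𝒜 (r • y)) γ : A) = ((DirectSum.decompose ℛ r) (γ - τ) : R) • y := by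
  rw [Algebra.smul_def, gcsa_comp_mul_right 𝒜 γ τ _ hy, gcsa_comp_algebraMap 𝒜 ℛ hmap,
    ← Algebra.smul_def]

lemma gcsa_comp_smul_sum [∀ (i : Γ) (x : ℛ i), Decidable (x ≠ 0)] (r : R) (y : A) (γ : Γ) :
    ((DirectSum.decompose 𝒜 (r • y)) γ : A)
      = ∑ μ ∈ (DirectSum.decompose ℛ r).support,
          ((DirectSum.decompose ℛ r) μ : R) • ((DirectSum.decompose 𝒜 y) (γ - μ) : A) := by
  conv_lhs => rw [← DirectSum.sum_support_decompose ℛ r, Finset.sum_smul, gcsa_comp_finsetSum]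
  exact Finset.sum_congr rfl fun μ _ =>
    gcsa_comp_smul_homog 𝒜 ℛ hmap (SetLike.coe_mem ((DirectSum.decompose ℛ r) μ)) y γ

end GCSAHelpers

set_option linter.unusedSectionVars false

section GCSABasis

variable {Γ : Type*} [AddCommGroup Γ] [DecidableEq Γ]
variable {R : Type*} [CommRing R] (ℛ : Γ → AddSubgroup R) [GradedRing ℛ]
variable {A : Type*} [Ring A] [Algebra R A] (𝒜 : Γ → AddSubgroup A) [GradedRing 𝒜]

lemma gcsa_exists_homog_basis [Module.Finite R A]
    (hfield : Nontrivial R ∧ ∀ r : R, r ≠ 0 → (∃ γ : Γ, r ∈ ℛ γ) → IsUnit r)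
    (hmap : ∀ γ : Γ, ∀ r ∈ ℛ γ, algebraMap R A r ∈ 𝒜 γ) :
    ∃ (n : ℕ) (b : Module.Basis (Fin n) R A) (d : Fin n → Γ), ∀ i, b i ∈ 𝒜 (d i) := by
  classical
  -- a finite homogeneous spanning set
  obtain ⟨s0, hs0⟩ : ∃ s0 : Finset A, Submodule.span R (s0 : Set A) = ⊤ :=
    Module.Finite.fg_top (R := R) (M := A)
  set S : Finset A := s0.biUnion (fun a =>
    (DirectSum.decompose 𝒜 a).support.image fun γ => ((DirectSum.decompose 𝒜 a) γ : A)) with hS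
  have hShom : ∀ x ∈ S, ∃ γ, x ∈ 𝒜 γ := by
    intro x hx
    rw [hS, Finset.mem_biUnion] at hx
    obtain ⟨a, -, hx⟩ := hx
    rw [Finset.mem_image] at hx
    obtain ⟨γ, -, rfl⟩ := hx
    exact ⟨γ, SetLike.coe_mem _⟩
  have hSspan : Submodule.span R (S : Set A) = ⊤ := by
    rw [eq_top_iff, ← hs0, Submodule.span_le]
    intro a ha
    rw [SetLike.mem_coe, ← DirectSum.sum_support_decompose 𝒜 a]
    refine Submodule.sum_mem _ fun γ hγ => Submodule.subset_span ?_
    rw [hS]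
    exact Finset.mem_coe.mpr (Finset.mem_biUnion.mpr ⟨a, ha, Finset.mem_image_of_mem _ hγ⟩)
  -- extract an independent spanning subset
  suffices h : ∀ (n : ℕ) (S : Finset A), S.card ≤ n → (∀ x ∈ S, ∃ γ, x ∈ 𝒜 γ) →
      Submodule.span R (S : Set A) = ⊤ →
      ∃ T : Finset A, T ⊆ S ∧ Submodule.span R (T : Set A) = ⊤ ∧
        LinearIndependent R (fun x : {y // y ∈ T} => (x : A)) by
    obtain ⟨T, hTS, hTspan, hTind⟩ := h S.card S le_rfl hShom hSspan
    have hrange : Set.range (fun x : {y // y ∈ T} => (x : A)) = (T : Set A) := by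
      ext x; simp [Set.mem_range]
    let b0 : Module.Basis {y // y ∈ T} R A := Module.Basis.mk hTind (by rw [hrange, hTspan])
    let eqv : {y // y ∈ T} ≃ Fin T.card := T.equivFin
    refine ⟨T.card, b0.reindex eqv, fun i => Classical.choose (hShom _ (hTS (eqv.symm i).2)), ?_⟩
    intro i
    have : b0.reindex eqv i = b0 (eqv.symm i) := b0.reindex_apply eqv i
    rw [this]
    have hb0 : b0 (eqv.symm i) = ((eqv.symm i : A)) := Module.Basis.mk_apply _ _ _
    rw [hb0]
    exact Classical.choose_spec (hShom _ (hTS (eqv.symm i).2))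
  intro n
  induction n with
  | zero =>
    intro S hcard hhom hspan
    refine ⟨S, le_refl S, hspan, ?_⟩
    have : S = ∅ := Finset.card_eq_zero.mp (Nat.le_zero.mp hcard)
    subst this
    have : IsEmpty {y // y ∈ (∅ : Finset A)} := by
      constructor; rintro ⟨x, hx⟩; simp at hx
    exact linearIndependent_empty_type
  | succ n ih =>
    intro S hcard hhom hspan
    by_cases hind : LinearIndependent R (fun x : {y // y ∈ S} => (x : A))
    · exact ⟨S, le_refl S, hspan, hind⟩
    · obtain ⟨g, hrel, i₀, hi₀⟩ := Fintype.not_linearIndependent_iff.mp hind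
      -- choose degrees
      have hd : ∀ i : {y // y ∈ S}, (i : A) ∈ 𝒜 (Classical.choose (hhom _ i.2)) :=
        fun i => Classical.choose_spec (hhom _ i.2)
      set dS : {y // y ∈ S} → Γ := fun i => Classical.choose (hhom _ i.2) with hdS
      -- choose a degree where g i₀ has a nonzero component
      have hγ₀ : ∃ γ₀, ((DirectSum.decompose ℛ (g i₀)) γ₀ : R) ≠ 0 := by
        by_contra hcon
        push_neg at hcon
        apply hi₀
        conv_lhs => rw [← DirectSum.sum_support_decompose ℛ (g i₀)]
        rw [Finset.sum_congr rfl fun γ _ => hcon γ, Finset.sum_const_zero]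
      obtain ⟨γ₀, hγ₀⟩ := hγ₀
      set γ : Γ := γ₀ + dS i₀ with hγ
      -- project the relation to degree γ
      set c : {y // y ∈ S} → R := fun i => ((DirectSum.decompose ℛ (g i)) (γ - dS i) : R) with hc
      have hcrel : ∑ i, c i • (i : A) = 0 := by
        have h0 := congrArg (fun z => ((DirectSum.decompose 𝒜 z) γ : A)) hrel
        simp only at h0
        rw [gcsa_comp_finsetSum 𝒜] at h0
        rw [Finset.sum_congr rfl fun i _ => (gcsa_comp_smul_right 𝒜 ℛ hmap (g i) (hd i) γ).symm]
        rw [h0]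
        simp
      have hc₀ : c i₀ ≠ 0 := by
        have hγγ : γ - dS i₀ = γ₀ := by rw [hγ]; abel
        show ((DirectSum.decompose ℛ (g i₀)) (γ - dS i₀) : R) ≠ 0
        rw [hγγ]
        exact hγ₀
      -- c i₀ is a homogeneous unit
      obtain ⟨u, hu⟩ := hfield.2 (c i₀) hc₀ ⟨γ - dS i₀, SetLike.coe_mem _⟩
      -- i₀ lies in the span of the rest
      have hmem : (i₀ : A) ∈ Submodule.span R ((S.erase (i₀ : A)) : Set A) := by
        have hsum : ∑ i ∈ Finset.univ.erase i₀, c i • (i : A) ∈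
            Submodule.span R ((S.erase (i₀ : A)) : Set A) := by
          refine Submodule.sum_mem _ fun i hi => Submodule.smul_mem _ _ (Submodule.subset_span ?_)
          have hne : (i : A) ≠ (i₀ : A) :=
            Subtype.coe_injective.ne (Finset.mem_erase.mp hi).1
          exact Finset.mem_coe.mpr (Finset.mem_erase.mpr ⟨hne, i.2⟩)
        have h2 : c i₀ • (i₀ : A) = -(∑ i ∈ Finset.univ.erase i₀, c i • (i : A)) := by
          have h4 := Finset.sum_erase_add Finset.univ (fun i => c i • (i : A)) (Finset.mem_univ i₀)
          rw [hcrel] at h4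
          exact eq_neg_of_add_eq_zero_right h4
        have h3 : (i₀ : A) = (↑u⁻¹ : R) • (c i₀ • (i₀ : A)) := by
          rw [smul_smul, ← hu, Units.inv_mul, one_smul]
        have h5 := Submodule.smul_mem (Submodule.span R ((S.erase (i₀ : A)) : Set A))
          (↑u⁻¹ : R) (Submodule.neg_mem _ hsum)
        rw [← h2] at h5
        rw [← h3] at h5
        exact h5
      have hspan' : Submodule.span R ((S.erase (i₀ : A)) : Set A) = ⊤ := by
        rw [eq_top_iff, ← hspan, Submodule.span_le]
        intro x hx
        rw [Finset.mem_coe] at hx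
        by_cases hxx : x = (i₀ : A)
        · subst hxx; exact hmem
        · exact Submodule.subset_span (Finset.mem_coe.mpr (Finset.mem_erase.mpr ⟨hxx, hx⟩))
      have hcard' : (S.erase (i₀ : A)).card ≤ n := by
        rw [Finset.card_erase_of_mem i₀.2]
        omega
      obtain ⟨T, hT1, hT2, hT3⟩ := ih (S.erase (i₀ : A)) hcard'
        (fun x hx => hhom x (Finset.erase_subset _ _ hx)) hspan'
      exact ⟨T, hT1.trans (Finset.erase_subset _ _), hT2, hT3⟩

end GCSABasis

section GCSAInj

variable {Γ : Type*} [AddCommGroup Γ] [DecidableEq Γ]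
variable {R : Type*} [CommRing R] (ℛ : Γ → AddSubgroup R) [GradedRing ℛ]
variable {A : Type*} [Ring A] [Algebra R A] (𝒜 : Γ → AddSubgroup A) [GradedRing 𝒜]

lemma gcsa_comp_add (x y : A) (γ : Γ) :
    ((DirectSum.decompose 𝒜 (x + y)) γ : A)
      = ((DirectSum.decompose 𝒜 x) γ : A) + ((DirectSum.decompose 𝒜 y) γ : A) := by
  rw [DirectSum.decompose_add, DFinsupp.add_apply, AddSubgroup.coe_add]

/-- If a vector `u` satisfies the kernel condition `∀ x, ∑ i, u i * x * (b i) = 0`, then so does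
each of its "homogeneous components" (with shift `-d`). -/
lemma gcsa_heart_proj {n : ℕ} (e : Fin n → A) (d : Fin n → Γ) (hd : ∀ i, e i ∈ 𝒜 (d i))
    (u : Fin n → A) (hu : ∀ x : A, ∑ i, u i * x * e i = 0) (γ : Γ) :
    ∀ x : A, ∑ i, ((DirectSum.decompose 𝒜 (u i)) (γ - d i) : A) * x * e i = 0 := by
  classical
  have hhom : ∀ (δ : Γ) (y : A), y ∈ 𝒜 δ →
      ∑ i, ((DirectSum.decompose 𝒜 (u i)) (γ - d i) : A) * y * e i = 0 := by
    intro δ y hy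
    have h0 := congrArg (fun z => ((DirectSum.decompose 𝒜 z) (γ + δ) : A)) (hu y)
    simp only at h0
    rw [gcsa_comp_finsetSum 𝒜] at h0
    have hterm : ∀ i : Fin n, ((DirectSum.decompose 𝒜 (u i * y * e i)) (γ + δ) : A)
        = ((DirectSum.decompose 𝒜 (u i)) (γ - d i) : A) * y * e i := by
      intro i
      rw [mul_assoc, gcsa_comp_mul_right 𝒜 (γ + δ) (δ + d i) (u i)
        (SetLike.mul_mem_graded hy (hd i)),
        show γ + δ - (δ + d i) = γ - d i by abel, mul_assoc]
    rw [Finset.sum_congr rfl fun i _ => hterm i] at h0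
    simpa using h0
  intro x
  conv_lhs => rw [show x = ∑ δ ∈ (DirectSum.decompose 𝒜 x).support,
    ((DirectSum.decompose 𝒜 x) δ : A) from (DirectSum.sum_support_decompose 𝒜 x).symm]
  rw [Finset.sum_congr rfl fun i (_ : i ∈ Finset.univ) => by
    rw [Finset.mul_sum, Finset.sum_mul]]
  rw [Finset.sum_comm]
  rw [Finset.sum_congr rfl fun δ _ => hhom δ _ (SetLike.coe_mem _)]
  simp

lemma gcsa_heart [Nontrivial A]
    (hmap : ∀ γ : Γ, ∀ r ∈ ℛ γ, algebraMap R A r ∈ 𝒜 γ)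
    (hsimple : ∀ I : TwoSidedIdeal A,
      (∀ x ∈ I, ∀ γ : Γ, ((DirectSum.decompose 𝒜 x) γ : A) ∈ I) → I = ⊥ ∨ I = ⊤)
    (hcenter : Subring.center A = (algebraMap R A).range)
    {n : ℕ} (b : Module.Basis (Fin n) R A) (d : Fin n → Γ) (hd : ∀ i, b i ∈ 𝒜 (d i))
    (w : Fin n → A) (hw : ∀ x : A, ∑ i, w i * x * b i = 0) : w = 0 := by
  classical
  by_contra hw0
  -- the set of support sizes of nonzero "homogeneous" kernel vectors is nonempty
  have hPex : ∃ m : ℕ, ∃ u : Fin n → A, (∀ x : A, ∑ i, u i * x * b i = 0) ∧ u ≠ 0 ∧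
      (∃ γ : Γ, ∀ i, u i ∈ 𝒜 (γ - d i)) ∧
      (Finset.univ.filter fun i => u i ≠ 0).card = m := by
    obtain ⟨i0, hi0⟩ : ∃ i, w i ≠ 0 := by
      by_contra hc; push_neg at hc; exact hw0 (funext hc)
    obtain ⟨γ₀, hγ₀⟩ : ∃ γ₀, ((DirectSum.decompose 𝒜 (w i0)) γ₀ : A) ≠ 0 := by
      by_contra hcon
      push_neg at hcon
      apply hi0
      conv_lhs => rw [← DirectSum.sum_support_decompose 𝒜 (w i0)]
      rw [Finset.sum_congr rfl fun γ _ => hcon γ, Finset.sum_const_zero]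
    refine ⟨_, fun i => ((DirectSum.decompose 𝒜 (w i)) ((γ₀ + d i0) - d i) : A),
      gcsa_heart_proj 𝒜 (fun i => b i) d hd w hw _, ?_,
      ⟨γ₀ + d i0, fun i => SetLike.coe_mem _⟩, rfl⟩
    intro hzero
    apply hγ₀
    have h5 := congrFun hzero i0
    simp only [Pi.zero_apply] at h5
    rwa [show γ₀ + d i0 - d i0 = γ₀ by abel] at h5
  obtain ⟨u, huK, hu0, ⟨γ, huγ⟩, hucard⟩ := Nat.find_spec hPex
  obtain ⟨i₀, hi₀u⟩ : ∃ i, u i ≠ 0 := by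
    by_contra hc; push_neg at hc; exact hu0 (funext hc)
  -- the two-sided ideal generated by `u i₀`
  set gens : Set A := {y | ∃ c c' : A, c * u i₀ * c' = y} with hgens
  have hgen : ∀ c c' : A, c * u i₀ * c' ∈ Submodule.span R gens :=
    fun c c' => Submodule.subset_span ⟨c, c', rfl⟩
  have hIl : ∀ (z : A), ∀ y ∈ Submodule.span R gens, z * y ∈ Submodule.span R gens := by
    intro z y hy
    induction hy using Submodule.span_induction with
    | mem x h =>
      obtain ⟨c, c', rfl⟩ := h
      have h6 := hgen (z * c) c'
      simp only [mul_assoc] at h6 ⊢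
      exact h6
    | zero => rw [mul_zero]; exact Submodule.zero_mem _
    | add x y hx hy ihx ihy => rw [mul_add]; exact Submodule.add_mem _ ihx ihy
    | smul r x hx ih => rw [mul_smul_comm]; exact Submodule.smul_mem _ _ ih
  have hIr : ∀ (z : A), ∀ y ∈ Submodule.span R gens, y * z ∈ Submodule.span R gens := by
    intro z y hy
    induction hy using Submodule.span_induction with
    | mem x h =>
      obtain ⟨c, c', rfl⟩ := h
      have h6 := hgen c (c' * z)
      simp only [mul_assoc] at h6 ⊢
      exact h6
    | zero => rw [zero_mul]; exact Submodule.zero_mem _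
    | add x y hx hy ihx ihy => rw [add_mul]; exact Submodule.add_mem _ ihx ihy
    | smul r x hx ih => rw [smul_mul_assoc]; exact Submodule.smul_mem _ _ ih
  have hIcomp : ∀ y ∈ Submodule.span R gens, ∀ γ' : Γ,
      ((DirectSum.decompose 𝒜 y) γ' : A) ∈ Submodule.span R gens := by
    intro y hy
    induction hy using Submodule.span_induction with
    | mem x h =>
      obtain ⟨c, c', rfl⟩ := h
      intro γ'
      have hx : c * u i₀ * c' = ∑ μ ∈ (DirectSum.decompose 𝒜 c).support,
          ∑ ν ∈ (DirectSum.decompose 𝒜 c').support,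
          ((DirectSum.decompose 𝒜 c) μ : A) * u i₀ * ((DirectSum.decompose 𝒜 c') ν : A) := by
        conv_lhs => rw [← DirectSum.sum_support_decompose 𝒜 c,
          ← DirectSum.sum_support_decompose 𝒜 c']
        rw [Finset.sum_mul, Finset.sum_mul]
        exact Finset.sum_congr rfl fun μ _ => Finset.mul_sum _ _ _
      rw [hx, gcsa_comp_finsetSum 𝒜]
      refine Submodule.sum_mem _ fun μ _ => ?_
      rw [gcsa_comp_finsetSum 𝒜]
      refine Submodule.sum_mem _ fun ν _ => ?_
      have hmem𝒜 : ((DirectSum.decompose 𝒜 c) μ : A) * u i₀ * ((DirectSum.decompose 𝒜 c') ν : A)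
          ∈ 𝒜 (μ + (γ - d i₀) + ν) :=
        SetLike.mul_mem_graded (SetLike.mul_mem_graded (SetLike.coe_mem _) (huγ i₀))
          (SetLike.coe_mem _)
      by_cases hcase : μ + (γ - d i₀) + ν = γ'
      · rw [← hcase, DirectSum.decompose_of_mem_same 𝒜 hmem𝒜]
        exact hgen _ _
      · rw [DirectSum.decompose_of_mem_ne 𝒜 hmem𝒜 hcase]
        exact Submodule.zero_mem _
    | zero =>
      intro γ'
      rw [DirectSum.decompose_zero]
      simpa using Submodule.zero_mem (Submodule.span R gens)
    | add x y hx hy ihx ihy =>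
      intro γ'
      rw [gcsa_comp_add 𝒜]
      exact Submodule.add_mem _ (ihx γ') (ihy γ')
    | smul r x hx ih =>
      intro γ'
      rw [gcsa_comp_smul_sum 𝒜 ℛ hmap]
      exact Submodule.sum_mem _ fun μ _ => Submodule.smul_mem _ _ (ih _)
  set I2 : TwoSidedIdeal A := TwoSidedIdeal.mk' (Submodule.span R gens : Set A)
    (Submodule.zero_mem _) (fun hx hy => Submodule.add_mem _ hx hy)
    (fun hx => Submodule.neg_mem _ hx) (fun {x y} hy => hIl x y hy)
    (fun {x y} hx => hIr y x hx) with hI2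
  have hI2mem : ∀ z : A, z ∈ I2 ↔ z ∈ Submodule.span R gens := fun z => by
    rw [hI2, TwoSidedIdeal.mem_mk']; rfl
  rcases hsimple I2 (fun x hx γ' => (hI2mem _).mpr (hIcomp x ((hI2mem x).mp hx) γ'))
    with hbot | htop
  · exfalso
    apply hi₀u
    have h7 : u i₀ ∈ I2 := (hI2mem _).mpr (by simpa using hgen 1 1)
    rw [hbot] at h7
    exact h7
  · have h1I : (1 : A) ∈ Submodule.span R gens :=
      (hI2mem 1).mp (by rw [htop]; exact TwoSidedIdeal.mem_top _)
    rw [Submodule.mem_span_set'] at h1I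
    obtain ⟨m, f, g, hfg⟩ := h1I
    have hg : ∀ k, ∃ c c' : A, c * u i₀ * c' = (g k : A) := fun k => (g k).2
    choose cs cs' hcs using hg
    set w' : Fin n → A := fun j => ∑ k, (f k • cs k) * u j * cs' k with hw'
    have hw'K : ∀ x : A, ∑ j, w' j * x * b j = 0 := by
      intro x
      calc ∑ j, w' j * x * b j
          = ∑ j, ∑ k, (f k • cs k) * (u j * (cs' k * x) * b j) := by
            refine Finset.sum_congr rfl fun j _ => ?_
            simp only [hw']
            rw [Finset.sum_mul, Finset.sum_mul]
            exact Finset.sum_congr rfl fun k _ => by simp only [mul_assoc]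
        _ = ∑ k, (f k • cs k) * ∑ j, u j * (cs' k * x) * b j := by
            rw [Finset.sum_comm]
            exact Finset.sum_congr rfl fun k _ => (Finset.mul_sum _ _ _).symm
        _ = 0 := by
            rw [Finset.sum_congr rfl fun k _ => by rw [huK (cs' k * x), mul_zero]]
            exact Finset.sum_const_zero
    have hw'i₀ : w' i₀ = 1 := by
      simp only [hw']
      rw [← hfg]
      exact Finset.sum_congr rfl fun k _ => by
        rw [← hcs k, smul_mul_assoc, smul_mul_assoc]
    have hw'supp : ∀ j, u j = 0 → w' j = 0 := by
      intro j hj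
      simp only [hw']
      simp [hj]
    have hcomm : ∀ z : A, (fun j => z * w' j - w' j * z) = 0 := by
      intro z
      by_contra hne
      have hwcK : ∀ x : A, ∑ j, (z * w' j - w' j * z) * x * b j = 0 := by
        intro x
        have h1 : ∑ j, z * (w' j * x * b j) = 0 := by
          rw [← Finset.mul_sum, hw'K x, mul_zero]
        have h2 : ∑ j, w' j * (z * x) * b j = 0 := hw'K (z * x)
        calc ∑ j, (z * w' j - w' j * z) * x * b j
            = ∑ j, (z * (w' j * x * b j) - w' j * (z * x) * b j) := by
              refine Finset.sum_congr rfl fun j _ => ?_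
              simp only [sub_mul, mul_assoc]
          _ = 0 := by rw [Finset.sum_sub_distrib, h1, h2, sub_zero]
      obtain ⟨j1, hj1⟩ : ∃ j, z * w' j - w' j * z ≠ 0 := by
        by_contra hc; push_neg at hc; exact hne (funext hc)
      obtain ⟨γ₁, hγ₁⟩ : ∃ γ₁, ((DirectSum.decompose 𝒜 (z * w' j1 - w' j1 * z)) γ₁ : A) ≠ 0 := by
        by_contra hcon
        push_neg at hcon
        apply hj1
        conv_lhs => rw [← DirectSum.sum_support_decompose 𝒜 (z * w' j1 - w' j1 * z)]
        rw [Finset.sum_congr rfl fun γ' _ => hcon γ', Finset.sum_const_zero]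
      set u'' : Fin n → A := fun j =>
        ((DirectSum.decompose 𝒜 (z * w' j - w' j * z)) ((γ₁ + d j1) - d j) : A) with hu''
      have hu''K : ∀ x : A, ∑ j, u'' j * x * b j = 0 :=
        gcsa_heart_proj 𝒜 (fun i => b i) d hd _ hwcK (γ₁ + d j1)
      have hu''ne : u'' ≠ 0 := by
        intro h
        apply hγ₁
        have h8 := congrFun h j1
        simp only [hu''] at h8
        simp only [Pi.zero_apply] at h8
        rwa [show γ₁ + d j1 - d j1 = γ₁ by abel] at h8
      have hsub : (Finset.univ.filter fun j => u'' j ≠ 0)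
          ⊂ (Finset.univ.filter fun j => u j ≠ 0) := by
        constructor
        · intro j hj
          rw [Finset.mem_filter] at hj ⊢
          refine ⟨Finset.mem_univ _, ?_⟩
          intro huj
          apply hj.2
          simp only [hu'']
          rw [hw'supp j huj]
          simp
        · intro hsup
          have h9 := hsup (Finset.mem_filter.mpr ⟨Finset.mem_univ i₀, hi₀u⟩)
          rw [Finset.mem_filter] at h9
          apply h9.2
          simp only [hu'']
          rw [hw'i₀]
          simp
      have hlt : (Finset.univ.filter fun j => u'' j ≠ 0).card < Nat.find hPex := by
        rw [← hucard]
        exact Finset.card_lt_card hsub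
      exact Nat.find_min hPex hlt
        ⟨u'', hu''K, hu''ne, ⟨γ₁ + d j1, fun j => SetLike.coe_mem _⟩, rfl⟩
    have hcen : ∀ j, ∃ r : R, algebraMap R A r = w' j := by
      intro j
      have h10 : w' j ∈ Subring.center A := Subring.mem_center_iff.mpr fun z => by
        have h11 := congrFun (hcomm z) j
        simp only [Pi.zero_apply] at h11
        rw [sub_eq_zero] at h11
        exact h11
      rw [hcenter] at h10
      exact h10
    choose rr hrr using hcen
    have hrel : ∑ j, rr j • b j = 0 := by
      have h1 := hw'K 1
      calc ∑ j, rr j • b j = ∑ j, w' j * 1 * b j := Finset.sum_congr rfl fun j _ => by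
            rw [← hrr j, mul_one, Algebra.smul_def]
        _ = 0 := h1
    have hallz := Fintype.linearIndependent_iff.mp b.linearIndependent rr hrel
    apply one_ne_zero (α := A)
    rw [← hw'i₀, ← hrr i₀, hallz i₀, map_zero]

end GCSAInj

section GCSAWrap

variable {Γ : Type*} [AddCommGroup Γ] [DecidableEq Γ]
variable {R : Type*} [CommRing R] (ℛ : Γ → AddSubgroup R) [GradedRing ℛ]
variable {A : Type*} [Ring A] [Algebra R A] (𝒜 : Γ → AddSubgroup A) [GradedRing 𝒜]

lemma mulLeftRightHom_tmul_apply (a c x : A) :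
    mulLeftRightHom R A (a ⊗ₜ[R] MulOpposite.op c) x = a * x * c := by
  simp [mulLeftRightHom, mul_assoc]

lemma gcsa_repr {n : ℕ} (b : Module.Basis (Fin n) R A) (ξ : A ⊗[R] Aᵐᵒᵖ) :
    ∃ v : Fin n → A, ∑ i, v i ⊗ₜ[R] MulOpposite.op (b i) = ξ := by
  induction ξ using TensorProduct.induction_on with
  | zero => exact ⟨0, by simp⟩
  | tmul a bb =>
    refine ⟨fun i => b.equivFun (MulOpposite.unop bb) i • a, ?_⟩
    calc ∑ i, (b.equivFun (MulOpposite.unop bb) i • a) ⊗ₜ[R] MulOpposite.op (b i)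
        = ∑ i, a ⊗ₜ[R] (b.equivFun (MulOpposite.unop bb) i • MulOpposite.op (b i)) := by
          exact Finset.sum_congr rfl fun i _ => smul_tmul _ _ _
      _ = a ⊗ₜ[R] (∑ i, b.equivFun (MulOpposite.unop bb) i • MulOpposite.op (b i)) :=
          (TensorProduct.tmul_sum a _ _).symm
      _ = a ⊗ₜ[R] bb := by
        congr 1
        have h1 : ∀ i : Fin n, b.equivFun (MulOpposite.unop bb) i • MulOpposite.op (b i)
            = MulOpposite.op (b.equivFun (MulOpposite.unop bb) i • b i) := by
          intro i; rw [MulOpposite.op_smul]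
        rw [Finset.sum_congr rfl fun i _ => h1 i, ← Finset.op_sum]
        rw [show (∑ i, b.equivFun (MulOpposite.unop bb) i • b i) = MulOpposite.unop bb from
          b.sum_equivFun (MulOpposite.unop bb)]
        exact MulOpposite.op_unop bb
  | add x y hx hy =>
    obtain ⟨vx, hvx⟩ := hx
    obtain ⟨vy, hvy⟩ := hy
    refine ⟨vx + vy, ?_⟩
    rw [← hvx, ← hvy, ← Finset.sum_add_distrib]
    exact Finset.sum_congr rfl fun i _ => by
      rw [Pi.add_apply, TensorProduct.add_tmul]

lemma gcsa_inj [Nontrivial A]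
    (hmap : ∀ γ : Γ, ∀ r ∈ ℛ γ, algebraMap R A r ∈ 𝒜 γ)
    (hsimple : ∀ I : TwoSidedIdeal A,
      (∀ x ∈ I, ∀ γ : Γ, ((DirectSum.decompose 𝒜 x) γ : A) ∈ I) → I = ⊥ ∨ I = ⊤)
    (hcenter : Subring.center A = (algebraMap R A).range)
    {n : ℕ} (b : Module.Basis (Fin n) R A) (d : Fin n → Γ) (hd : ∀ i, b i ∈ 𝒜 (d i)) :
    Function.Injective (mulLeftRightHom R A) := by
  rw [injective_iff_map_eq_zero]
  intro ξ hξ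
  obtain ⟨v, rfl⟩ := gcsa_repr b ξ
  have hv : ∀ x : A, ∑ i, v i * x * b i = 0 := by
    intro x
    have h0 := congrFun (congrArg (fun f : Module.End R A => ⇑f) hξ) x
    simp only [map_sum, LinearMap.coe_sum, Finset.sum_apply, LinearMap.zero_apply,
      Pi.zero_apply] at h0
    rw [← h0]
    exact Finset.sum_congr rfl fun i _ => (mulLeftRightHom_tmul_apply (v i) (b i) x).symm
  have hz := gcsa_heart ℛ 𝒜 hmap hsimple hcenter b d hd v hv
  rw [hz]
  simp

end GCSAWrap

section GCSASurj

variable {Γ : Type*} [AddCommGroup Γ] [DecidableEq Γ]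
variable {R : Type*} [CommRing R] (ℛ : Γ → AddSubgroup R) [GradedRing ℛ]
variable {A : Type*} [Ring A] [Algebra R A] (𝒜 : Γ → AddSubgroup A) [GradedRing 𝒜]

/-- The sandwich operator on `Fin n → A`. -/
noncomputable def gcsaT (R : Type*) {A : Type*} [CommRing R] [Ring A] [Algebra R A]
    {n : ℕ} (a c : A) : (Fin n → A) →ₗ[R] (Fin n → A) where
  toFun v := fun i => a * v i * c
  map_add' u v := by funext i; simp [mul_add, add_mul]
  map_smul' r v := by funext i; simp [Pi.smul_apply, mul_smul_comm, smul_mul_assoc]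

@[simp] lemma gcsaT_apply {R A : Type*} [CommRing R] [Ring A] [Algebra R A]
    {n : ℕ} (a c : A) (v : Fin n → A) (i : Fin n) :
    gcsaT R a c v i = a * v i * c := rfl

lemma gcsa_surj [Nontrivial A]
    (hmap : ∀ γ : Γ, ∀ r ∈ ℛ γ, algebraMap R A r ∈ 𝒜 γ)
    (hsimple : ∀ I : TwoSidedIdeal A,
      (∀ x ∈ I, ∀ γ : Γ, ((DirectSum.decompose 𝒜 x) γ : A) ∈ I) → I = ⊥ ∨ I = ⊤)
    (hcenter : Subring.center A = (algebraMap R A).range)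
    {n : ℕ} (b : Module.Basis (Fin n) R A) (d : Fin n → Γ) (hd : ∀ i, b i ∈ 𝒜 (d i)) :
    Function.Surjective (mulLeftRightHom R A) := by
  classical
  intro f
  set Qv : Γ → (Fin n → A) → (Fin n → A) :=
    fun γ v i => ((DirectSum.decompose 𝒜 (v i)) (γ + d i) : A) with hQv
  have hQ0 : ∀ γ : Γ, Qv γ 0 = 0 := by
    intro γ; funext i; simp [hQv]
  have hQadd : ∀ (γ : Γ) (u v), Qv γ (u + v) = Qv γ u + Qv γ v := by
    intro γ u v; funext i
    simp only [hQv, Pi.add_apply]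
    exact gcsa_comp_add 𝒜 _ _ _
  set gens : Set (Fin n → A) := {v | ∃ a c : A, (fun i => a * b i * c) = v} with hgens
  have hgen : ∀ a c : A, (fun i => a * b i * c) ∈ Submodule.span R gens :=
    fun a c => Submodule.subset_span ⟨a, c, rfl⟩
  have hTN : ∀ (a c : A), ∀ v ∈ Submodule.span R gens,
      gcsaT R a c v ∈ Submodule.span R gens := by
    intro a c v hv
    induction hv using Submodule.span_induction with
    | mem x h =>
      obtain ⟨a', c', rfl⟩ := h
      have h1 := hgen (a * a') (c' * c)
      have h2 : gcsaT R a c (fun i => a' * b i * c') = fun i => (a * a') * b i * (c' * c) := by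
        funext i; simp [mul_assoc]
      rw [h2]; exact h1
    | zero => rw [map_zero]; exact Submodule.zero_mem _
    | add x y hx hy ihx ihy => rw [map_add]; exact Submodule.add_mem _ ihx ihy
    | smul r x hx ih => rw [map_smul]; exact Submodule.smul_mem _ _ ih
  have hQgen : ∀ (μ ν : Γ) (a c : A), a ∈ 𝒜 μ → c ∈ 𝒜 ν → ∀ γ : Γ,
      Qv γ (fun i => a * b i * c) ∈ Submodule.span R gens := by
    intro μ ν a c ha hc γ
    by_cases hcase : μ + ν = γ
    · have heq : Qv γ (fun i => a * b i * c) = fun i => a * b i * c := by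
        funext i
        simp only [hQv]
        have hmem : a * b i * c ∈ 𝒜 (γ + d i) := by
          have h1 := SetLike.mul_mem_graded (SetLike.mul_mem_graded ha (hd i)) hc
          rwa [show μ + d i + ν = γ + d i by rw [← hcase]; abel] at h1
        exact DirectSum.decompose_of_mem_same 𝒜 hmem
      rw [heq]; exact hgen a c
    · have heq : Qv γ (fun i => a * b i * c) = 0 := by
        funext i
        simp only [hQv, Pi.zero_apply]
        have h1 := SetLike.mul_mem_graded (SetLike.mul_mem_graded ha (hd i)) hc
        refine DirectSum.decompose_of_mem_ne 𝒜 h1 ?_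
        intro h2
        apply hcase
        have h3 : μ + ν + d i = γ + d i := by rw [← h2]; abel
        exact add_right_cancel h3
      rw [heq]; exact Submodule.zero_mem _
  have hNgr : ∀ v ∈ Submodule.span R gens, ∀ γ : Γ, Qv γ v ∈ Submodule.span R gens := by
    intro v hv
    induction hv using Submodule.span_induction with
    | mem x h =>
      obtain ⟨a, c, rfl⟩ := h
      intro γ
      have hQsum : ∀ (s : Finset Γ) (F : Γ → (Fin n → A)) (γ' : Γ),
          Qv γ' (∑ μ ∈ s, F μ) = ∑ μ ∈ s, Qv γ' (F μ) := by
        intro s F γ'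
        funext i
        simp only [hQv, Finset.sum_apply]
        rw [gcsa_comp_finsetSum 𝒜]
      have hx : (fun i => a * b i * c) = ∑ μ ∈ (DirectSum.decompose 𝒜 a).support,
          ∑ ν ∈ (DirectSum.decompose 𝒜 c).support,
          (fun i => ((DirectSum.decompose 𝒜 a) μ : A) * b i * ((DirectSum.decompose 𝒜 c) ν : A)) := by
        funext i
        simp only [Finset.sum_apply]
        conv_lhs => rw [← DirectSum.sum_support_decompose 𝒜 a,
          ← DirectSum.sum_support_decompose 𝒜 c]
        rw [Finset.sum_mul, Finset.sum_mul]
        exact Finset.sum_congr rfl fun μ _ => Finset.mul_sum _ _ _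
      rw [hx, hQsum]
      refine Submodule.sum_mem _ fun μ _ => ?_
      rw [hQsum]
      refine Submodule.sum_mem _ fun ν _ => ?_
      exact hQgen μ ν _ _ (SetLike.coe_mem _) (SetLike.coe_mem _) γ
    | zero =>
      intro γ; rw [hQ0]; exact Submodule.zero_mem _
    | add x y hx hy ihx ihy =>
      intro γ; rw [hQadd]; exact Submodule.add_mem _ (ihx γ) (ihy γ)
    | smul r x hx ih =>
      intro γ
      have heq : Qv γ (r • x) = ∑ μ ∈ (DirectSum.decompose ℛ r).support,
          ((DirectSum.decompose ℛ r) μ : R) • Qv (γ - μ) x := by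
        funext i
        simp only [hQv, Pi.smul_apply, Finset.sum_apply]
        rw [gcsa_comp_smul_sum 𝒜 ℛ hmap]
        exact Finset.sum_congr rfl fun μ _ => by
          rw [show γ + d i - μ = γ - μ + d i by abel]
      rw [heq]
      exact Submodule.sum_mem _ fun μ _ => Submodule.smul_mem _ _ (ih _)
  -- Zorn's lemma
  set 𝒮 : Set (Submodule R (Fin n → A)) := {C | (∀ a c : A, ∀ v ∈ C, gcsaT R a c v ∈ C) ∧
    (∀ v ∈ C, ∀ γ : Γ, Qv γ v ∈ C) ∧ C ⊓ Submodule.span R gens = ⊥} with h𝒮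
  have hbot𝒮 : (⊥ : Submodule R (Fin n → A)) ∈ 𝒮 := by
    refine ⟨?_, ?_, ?_⟩
    · intro a c v hv
      rw [Submodule.mem_bot] at hv ⊢
      rw [hv, map_zero]
    · intro v hv γ
      rw [Submodule.mem_bot] at hv ⊢
      rw [hv, hQ0]
    · simp
  obtain ⟨C, hC⟩ : ∃ C, Maximal (· ∈ 𝒮) C := by
    apply zorn_le₀
    intro ch hch𝒮 hchain
    by_cases hce : ch.Nonempty
    · refine ⟨sSup ch, ?_, fun z hz => le_sSup hz⟩
      have hmem : ∀ x : Fin n → A, x ∈ sSup ch ↔ ∃ C' ∈ ch, x ∈ C' :=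
        fun x => Submodule.mem_sSup_of_directed hce hchain.directedOn
      refine ⟨?_, ?_, ?_⟩
      · intro a c v hv
        obtain ⟨C', hC'c, hvC'⟩ := (hmem v).mp hv
        exact (hmem _).mpr ⟨C', hC'c, (hch𝒮 hC'c).1 a c v hvC'⟩
      · intro v hv γ
        obtain ⟨C', hC'c, hvC'⟩ := (hmem v).mp hv
        exact (hmem _).mpr ⟨C', hC'c, (hch𝒮 hC'c).2.1 v hvC' γ⟩
      · rw [eq_bot_iff]
        intro v hv
        obtain ⟨hv1, hv2⟩ := Submodule.mem_inf.mp hv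
        obtain ⟨C', hC'c, hvC'⟩ := (hmem v).mp hv1
        have h4 : v ∈ C' ⊓ Submodule.span R gens := Submodule.mem_inf.mpr ⟨hvC', hv2⟩
        rw [(hch𝒮 hC'c).2.2] at h4
        exact h4
    · exact ⟨⊥, hbot𝒮, fun z hz => absurd ⟨z, hz⟩ hce⟩
  obtain ⟨⟨hCT, hCQ, hCinf⟩, hCmax⟩ := hC
  -- coordinate submodules
  set Coord : Fin n → Submodule R (Fin n → A) :=
    fun i => LinearMap.range (LinearMap.single R (fun _ : Fin n => A) i) with hCoord
  have hsingle : ∀ (i : Fin n) (x : A), Pi.single i x ∈ Coord i := fun i x => ⟨x, rfl⟩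
  have hCoordMem : ∀ (i : Fin n) (v : Fin n → A), v ∈ Coord i → Pi.single i (v i) = v := by
    rintro i v ⟨x, rfl⟩
    have h5 : (LinearMap.single R (fun _ : Fin n => A) i) x = Pi.single i x := rfl
    rw [h5, Pi.single_eq_same]
  have hCoordT : ∀ (i : Fin n) (a c x : A),
      gcsaT R a c (Pi.single i x) = Pi.single i (a * x * c) := by
    intro i a c x
    funext j
    by_cases hji : j = i
    · subst hji; simp
    · simp [Pi.single_eq_of_ne hji]
  have hCoordQ : ∀ (i : Fin n) (x : A) (γ : Γ),
      Qv γ (Pi.single i x) = Pi.single i ((DirectSum.decompose 𝒜 x) (γ + d i) : A) := by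
    intro i x γ
    funext j
    by_cases hji : j = i
    · subst hji; simp [hQv]
    · simp [hQv, Pi.single_eq_of_ne hji]
  have hcoordSimple : ∀ (i : Fin n) (W : Submodule R (Fin n → A)),
      (∀ a c : A, ∀ v ∈ W, gcsaT R a c v ∈ W) → (∀ v ∈ W, ∀ γ : Γ, Qv γ v ∈ W) →
      W ≤ Coord i → W = ⊥ ∨ W = Coord i := by
    intro i W hWT hWQ hWle
    set J : TwoSidedIdeal A := TwoSidedIdeal.mk' {x : A | Pi.single i x ∈ W}
      (by simp only [Set.mem_setOf_eq, Pi.single_zero]; exact Submodule.zero_mem W)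
      (fun {x y} hx hy => by
        simp only [Set.mem_setOf_eq] at hx hy ⊢
        rw [Pi.single_add]; exact Submodule.add_mem W hx hy)
      (fun {x} hx => by
        simp only [Set.mem_setOf_eq] at hx ⊢
        rw [Pi.single_neg]; exact Submodule.neg_mem W hx)
      (fun {x y} hy => by
        simp only [Set.mem_setOf_eq] at hy ⊢
        have h6 := hWT x 1 _ hy
        rw [hCoordT] at h6
        rwa [mul_one] at h6)
      (fun {x y} hx => by
        simp only [Set.mem_setOf_eq] at hx ⊢
        have h6 := hWT 1 y _ hx
        rw [hCoordT] at h6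
        rwa [one_mul] at h6) with hJ
    have hJmem : ∀ x : A, x ∈ J ↔ Pi.single i x ∈ W := fun x => by
      rw [hJ, TwoSidedIdeal.mem_mk']; rfl
    rcases hsimple J (by
      intro x hx γ'
      rw [hJmem] at hx ⊢
      have h2 := hWQ _ hx (γ' - d i)
      rw [hCoordQ] at h2
      rwa [show γ' - d i + d i = γ' by abel] at h2) with hJbot | hJtop
    · left
      rw [eq_bot_iff]
      intro v hv
      have hv' := hCoordMem i v (hWle hv)
      have h7 : v i ∈ J := (hJmem _).mpr (by rw [hv']; exact hv)
      rw [hJbot] at h7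
      have h8 : v i = 0 := h7
      rw [Submodule.mem_bot, ← hv', h8, Pi.single_zero]
    · right
      refine le_antisymm hWle ?_
      intro v hv
      have hv' := hCoordMem i v hv
      have h7 : v i ∈ J := by rw [hJtop]; exact TwoSidedIdeal.mem_top _
      rw [← hv']
      exact (hJmem _).mp h7
  -- N ⊔ C = ⊤
  have hsup : Submodule.span R gens ⊔ C = ⊤ := by
    by_contra hne
    have hex : ∃ i : Fin n, ¬ Coord i ≤ Submodule.span R gens ⊔ C := by
      by_contra hall
      push_neg at hall
      apply hne
      rw [eq_top_iff]
      intro v _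
      rw [show v = ∑ i, Pi.single i (v i) from by
        funext j
        rw [Finset.sum_apply]
        exact (Fintype.sum_pi_single j v).symm]
      exact Submodule.sum_mem _ fun i _ => hall i (hsingle i (v i))
    obtain ⟨i, hi⟩ := hex
    have hsupT : ∀ a c : A, ∀ v ∈ Submodule.span R gens ⊔ C,
        gcsaT R a c v ∈ Submodule.span R gens ⊔ C := by
      intro a c v hv
      obtain ⟨x, hx, y, hy, rfl⟩ := Submodule.mem_sup.mp hv
      rw [map_add]
      exact Submodule.add_mem _ (Submodule.mem_sup_left (hTN a c x hx))
        (Submodule.mem_sup_right (hCT a c y hy))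
    have hsupQ : ∀ v ∈ Submodule.span R gens ⊔ C, ∀ γ : Γ,
        Qv γ v ∈ Submodule.span R gens ⊔ C := by
      intro v hv γ
      obtain ⟨x, hx, y, hy, rfl⟩ := Submodule.mem_sup.mp hv
      rw [hQadd]
      exact Submodule.add_mem _ (Submodule.mem_sup_left (hNgr x hx γ))
        (Submodule.mem_sup_right (hCQ y hy γ))
    rcases hcoordSimple i (Coord i ⊓ (Submodule.span R gens ⊔ C))
      (fun a c v hv => by
        obtain ⟨hv1, hv2⟩ := Submodule.mem_inf.mp hv
        refine Submodule.mem_inf.mpr ⟨?_, hsupT a c v hv2⟩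
        rw [← hCoordMem i v hv1, hCoordT]
        exact hsingle i _)
      (fun v hv γ => by
        obtain ⟨hv1, hv2⟩ := Submodule.mem_inf.mp hv
        refine Submodule.mem_inf.mpr ⟨?_, hsupQ v hv2 γ⟩
        rw [← hCoordMem i v hv1, hCoordQ]
        exact hsingle i _)
      inf_le_left with hW | hW
    · -- add Coord i to C
      have hC'𝒮 : (C ⊔ Coord i) ∈ 𝒮 := by
        refine ⟨?_, ?_, ?_⟩
        · intro a c v hv
          obtain ⟨x, hx, y, hy, rfl⟩ := Submodule.mem_sup.mp hv
          rw [map_add]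
          refine Submodule.add_mem _ (Submodule.mem_sup_left (hCT a c x hx))
            (Submodule.mem_sup_right ?_)
          rw [← hCoordMem i y hy, hCoordT]
          exact hsingle i _
        · intro v hv γ
          obtain ⟨x, hx, y, hy, rfl⟩ := Submodule.mem_sup.mp hv
          rw [hQadd]
          refine Submodule.add_mem _ (Submodule.mem_sup_left (hCQ x hx γ))
            (Submodule.mem_sup_right ?_)
          rw [← hCoordMem i y hy, hCoordQ]
          exact hsingle i _
        · rw [eq_bot_iff]
          intro v hv
          obtain ⟨hv1, hv2⟩ := Submodule.mem_inf.mp hv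
          obtain ⟨x, hx, y, hy, rfl⟩ := Submodule.mem_sup.mp hv1
          have hyW : y ∈ Coord i ⊓ (Submodule.span R gens ⊔ C) := by
            refine Submodule.mem_inf.mpr ⟨hy, ?_⟩
            have : y = (x + y) - x := by abel
            rw [this]
            exact Submodule.sub_mem _ (Submodule.mem_sup_left hv2)
              (Submodule.mem_sup_right hx)
          rw [hW] at hyW
          have hy0 : y = 0 := hyW
          rw [hy0, add_zero] at hv2 ⊢
          have : x ∈ C ⊓ Submodule.span R gens := Submodule.mem_inf.mpr ⟨hx, hv2⟩
          rw [hCinf] at this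
          exact this
      have hle := hCmax hC'𝒮 le_sup_left
      exact hi (le_trans (le_trans le_sup_right hle) le_sup_right)
    · exact hi (by rw [← hW]; exact inf_le_right)
  -- the projector onto N along C
  have hdisj : Disjoint (Submodule.span R gens) C := by
    rw [disjoint_iff, inf_comm]
    exact hCinf
  have hcompl : IsCompl (Submodule.span R gens) C := ⟨hdisj, codisjoint_iff.mpr hsup⟩
  set π : (Fin n → A) →ₗ[R] (Fin n → A) :=
    (Submodule.span R gens).subtype ∘ₗ Submodule.projectionOnto _ C hcompl with hπ
  have hπmemN : ∀ v, π v ∈ Submodule.span R gens := fun v => by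
    rw [hπ]; exact Submodule.coe_mem _
  have hπN : ∀ v ∈ Submodule.span R gens, π v = v := by
    intro v hv
    rw [hπ]
    have h9 := Submodule.projectionOnto_apply_left hcompl ⟨v, hv⟩
    simp only [LinearMap.coe_comp, Function.comp_apply]
    rw [show v = ((⟨v, hv⟩ : Submodule.span R gens) : Fin n → A) from rfl, h9]
    rfl
  have hπC : ∀ v ∈ C, π v = 0 := by
    intro v hv
    rw [hπ]
    simp only [LinearMap.coe_comp, Function.comp_apply]
    rw [(Submodule.projectionOnto_apply_eq_zero_iff hcompl).mpr hv]
    rfl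
  have hπchar : ∀ v w, w ∈ Submodule.span R gens → v - w ∈ C → π v = w := by
    intro v w hw hvw
    have h10 : π v = π w + π (v - w) := by
      rw [← map_add]
      congr 1
      abel
    rw [h10, hπN w hw, hπC _ hvw, add_zero]
  have hπv : ∀ v, v - π v ∈ C := by
    intro v
    have hvT : v ∈ Submodule.span R gens ⊔ C := by rw [hsup]; exact Submodule.mem_top
    obtain ⟨x, hx, y, hy, rfl⟩ := Submodule.mem_sup.mp hvT
    rw [hπchar (x + y) x hx (by simpa using hy)]
    simpa using hy
  have hπT : ∀ (a c : A) (v), π (gcsaT R a c v) = gcsaT R a c (π v) := by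
    intro a c v
    refine hπchar _ _ (hTN a c _ (hπmemN v)) ?_
    rw [← map_sub]
    exact hCT a c _ (hπv v)
  -- entries of the projector are scalars
  have hentries : ∀ i j : Fin n, ∃ r : R, ∀ x : A, π (Pi.single j x) i = r • x := by
    intro i j
    set q : A → A := fun x => π (Pi.single j x) i with hq
    have hq1 : ∀ a c x : A, q (a * x * c) = a * q x * c := by
      intro a c x
      simp only [hq]
      rw [← hCoordT j a c x, hπT]
      rfl
    have hcq : q 1 ∈ Subring.center A := by
      refine Subring.mem_center_iff.mpr fun g => ?_
      have h1 : q g = g * q 1 := by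
        simpa only [one_mul, mul_one] using hq1 g 1 1
      have h2 : q g = q 1 * g := by
        simpa only [one_mul, mul_one] using hq1 1 g 1
      rw [← h1, h2]
    rw [hcenter] at hcq
    obtain ⟨r, hr⟩ := hcq
    refine ⟨r, fun x => ?_⟩
    have h14 : q x = x * q 1 := by
      simpa only [one_mul, mul_one] using hq1 x 1 1
    rw [show π (Pi.single j x) i = q x from rfl, h14, ← hr, ← Algebra.commutes,
      ← Algebra.smul_def]
  choose rmat hrmat using hentries
  have hπmat : ∀ (v : Fin n → A) (i : Fin n), π v i = ∑ j, rmat i j • v j := by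
    intro v i
    conv_lhs => rw [show v = ∑ j, Pi.single j (v j) from by
      funext k
      rw [Finset.sum_apply]
      exact (Fintype.sum_pi_single k v).symm]
    rw [map_sum, Finset.sum_apply]
    exact Finset.sum_congr rfl fun j _ => hrmat i j (v j)
  -- conclude
  have hbN : (fun i => b i) ∈ Submodule.span R gens := by
    have h15 := hgen 1 1
    simpa using h15
  have hπb : π (fun i => b i) = fun i => b i := hπN _ hbN
  have hFN : (fun i => f (b i)) ∈ Submodule.span R gens := by
    have hkey : (fun i => f (b i)) = π (fun i => f (b i)) := by
      funext i
      calc f (b i) = f (∑ j, rmat i j • b j) := by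
            rw [← hπmat (fun k => b k) i, hπb]
        _ = ∑ j, rmat i j • f (b j) := by
            rw [map_sum]
            exact Finset.sum_congr rfl fun j _ => map_smul f _ _
        _ = π (fun k => f (b k)) i := (hπmat _ i).symm
    rw [hkey]
    exact hπmemN _
  have hreach : ∀ v ∈ Submodule.span R gens,
      ∃ ξ : A ⊗[R] Aᵐᵒᵖ, ∀ i, mulLeftRightHom R A ξ (b i) = v i := by
    intro v hv
    induction hv using Submodule.span_induction with
    | mem x h =>
      obtain ⟨a, c, rfl⟩ := h
      exact ⟨a ⊗ₜ[R] MulOpposite.op c, fun i => mulLeftRightHom_tmul_apply a c (b i)⟩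
    | zero => exact ⟨0, by simp⟩
    | add x y hx hy ihx ihy =>
      obtain ⟨ξ, hξ⟩ := ihx
      obtain ⟨η, hη⟩ := ihy
      exact ⟨ξ + η, fun i => by rw [map_add, LinearMap.add_apply, hξ i, hη i]; rfl⟩
    | smul r x hx ih =>
      obtain ⟨ξ, hξ⟩ := ih
      exact ⟨r • ξ, fun i => by rw [map_smul, LinearMap.smul_apply, hξ i]; rfl⟩
  obtain ⟨ξ, hξ⟩ := hreach _ hFN
  exact ⟨ξ, b.ext fun i => hξ i⟩

end GCSASurj

section GCSAFaithful

variable {Γ : Type*} [AddCommGroup Γ] [DecidableEq Γ]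
variable {R : Type*} [CommRing R] (ℛ : Γ → AddSubgroup R) [GradedRing ℛ]
variable {A : Type*} [Ring A] [Algebra R A] (𝒜 : Γ → AddSubgroup A) [GradedRing 𝒜]

lemma gcsa_algebraMap_inj [Nontrivial A]
    (hfield : Nontrivial R ∧ ∀ r : R, r ≠ 0 → (∃ γ : Γ, r ∈ ℛ γ) → IsUnit r)
    (hmap : ∀ γ : Γ, ∀ r ∈ ℛ γ, algebraMap R A r ∈ 𝒜 γ) :
    Function.Injective (algebraMap R A) := by
  classical
  intro r s hrs
  rw [← sub_eq_zero]
  by_contra ht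
  have h0 : algebraMap R A (r - s) = 0 := by rw [map_sub, hrs, sub_self]
  obtain ⟨γ, hγ⟩ : ∃ γ, ((DirectSum.decompose ℛ (r - s)) γ : R) ≠ 0 := by
    by_contra hcon
    push_neg at hcon
    apply ht
    conv_lhs => rw [← DirectSum.sum_support_decompose ℛ (r - s)]
    rw [Finset.sum_congr rfl fun γ _ => hcon γ, Finset.sum_const_zero]
  have h1 : algebraMap R A ((DirectSum.decompose ℛ (r - s)) γ : R) = 0 := by
    rw [← gcsa_comp_algebraMap 𝒜 ℛ hmap (r - s) γ, h0, DirectSum.decompose_zero]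
    simp
  obtain ⟨u, hu⟩ := hfield.2 _ hγ ⟨γ, SetLike.coe_mem _⟩
  have h2 : (1 : A) = 0 := by
    calc (1 : A) = algebraMap R A (↑u * ↑u⁻¹) := by rw [Units.mul_inv, map_one]
      _ = algebraMap R A ↑u * algebraMap R A ↑u⁻¹ := map_mul _ _ _
      _ = 0 := by rw [hu, h1, zero_mul]
  exact one_ne_zero h2

end GCSAFaithful


/-- A graded central simple algebra over a graded field is an Azumaya algebra:
if `R` is a graded field, `A` an `R`-algebra which is a finitely generated `R`-module, graded so
that the structure map is graded, graded simple, and with center exactly the image of `R`, then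
`A` is a faithful finitely generated projective `R`-module and the natural map
`A ⊗[R] Aᵐᵒᵖ → End_R(A)`, `a ⊗ b ↦ (x ↦ a x b)`, is bijective. -/
theorem azumaya_of_graded_central_simple
    {Γ : Type*} [AddCommGroup Γ] [DecidableEq Γ]
    {R : Type*} [CommRing R] (ℛ : Γ → AddSubgroup R) [GradedRing ℛ]
    (hfield : Nontrivial R ∧ ∀ r : R, r ≠ 0 → (∃ γ : Γ, r ∈ ℛ γ) → IsUnit r)
    {A : Type*} [Ring A] [Algebra R A] [Module.Finite R A]
    (𝒜 : Γ → AddSubgroup A) [GradedRing 𝒜]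
    (hmap : ∀ γ : Γ, ∀ r ∈ ℛ γ, algebraMap R A r ∈ 𝒜 γ)
    [Nontrivial A]
    (hsimple : ∀ I : TwoSidedIdeal A,
      (∀ x ∈ I, ∀ γ : Γ, ((DirectSum.decompose 𝒜 x) γ : A) ∈ I) → I = ⊥ ∨ I = ⊤)
    (hcenter : Subring.center A = (algebraMap R A).range) :
    FaithfulSMul R A ∧ Module.Finite R A ∧ Module.Projective R A ∧
      Function.Bijective (mulLeftRightHom R A) := by
  obtain ⟨n, b, d, hd⟩ := gcsa_exists_homog_basis ℛ 𝒜 hfield hmap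
  refine ⟨⟨fun {r s} h => gcsa_algebraMap_inj ℛ 𝒜 hfield hmap
      (by simpa [Algebra.smul_def] using h 1)⟩,
    ‹Module.Finite R A›, Module.Projective.of_basis b,
    gcsa_inj ℛ 𝒜 hmap hsimple hcenter b d hd,
    gcsa_surj ℛ 𝒜 hmap hsimple hcenter b d hd⟩
end

section
/- Let A be a strongly Γ-graded ring with grading 𝒜 and A₀ = 𝒜 0. Assume that A₀ is a simple ring, and assume that for every γ ∈ Γ with γ ≠ 0 there is no unit u of A such that u ∈ 𝒜 γ and u commutes with every element of A₀ (this hypothesis is the injectivity of the homomorphism ψ : Γ → Pic(A₀), γ ↦ [A_γ]). Then A is a simple ring. -/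
section Aux

variable {Γ : Type*} [AddCommGroup Γ] [DecidableEq Γ] {A : Type*} [Ring A]
  (𝒜 : Γ → AddSubgroup A) [GradedRing 𝒜]

/-- In a strongly graded ring, if `v` is annihilated by all of `𝒜 γ` on the left, `v = 0`. -/
lemma aux_left_ann (hstrong : IsStronglyGraded 𝒜) (γ : Γ) (v : A)
    (hv : ∀ b ∈ 𝒜 γ, b * v = 0) : v = 0 := by
  have h1 : (1 : A) ∈ gradedMulSubgroup 𝒜 (-γ) γ := by
    rw [hstrong, neg_add_cancel]
    exact SetLike.one_mem_graded 𝒜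
  have h : (1 : A) * v = 0 := by
    refine AddSubgroup.closure_induction
      (p := fun s _ => s * v = 0) ?_ (by simp) ?_ ?_ h1
    · rintro s ⟨c, hc, b, hb, rfl⟩
      rw [mul_assoc, hv b hb, mul_zero]
    · intro s t _ _ hs ht
      rw [add_mul, hs, ht, add_zero]
    · intro s _ hs
      rw [neg_mul, hs, neg_zero]
  simpa using h

lemma aux_exists_left (hstrong : IsStronglyGraded 𝒜) (γ : Γ) {v : A} (hv : v ≠ 0) :
    ∃ b ∈ 𝒜 γ, b * v ≠ 0 := by
  by_contra h
  push_neg at h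
  exact hv (aux_left_ann 𝒜 hstrong γ v h)

/-- Degree shift of components under left multiplication by a homogeneous element. -/
lemma aux_comp_mul_left {b : A} {δ : Γ} (hb : b ∈ 𝒜 δ) (x : A) (γ : Γ) :
    (DirectSum.decompose 𝒜 (b * x) γ : A) = b * (DirectSum.decompose 𝒜 x (-δ + γ) : A) := by
  have := DirectSum.coe_decompose_mul_add_of_left_mem 𝒜 (j := -δ + γ) hb (b := x)
  rwa [add_neg_cancel_left] at this

/-- Degree shift of components under right multiplication by a homogeneous element. -/
lemma aux_comp_mul_right {c : A} {δ : Γ} (hc : c ∈ 𝒜 δ) (x : A) (γ : Γ) :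
    (DirectSum.decompose 𝒜 (x * c) γ : A) = (DirectSum.decompose 𝒜 x (γ - δ) : A) * c := by
  have := DirectSum.coe_decompose_mul_add_of_right_mem 𝒜 (i := γ - δ) hc (a := x)
  rwa [sub_add_cancel] at this

end Aux

/-- Let `A` be a strongly graded ring whose degree-zero part `A₀ = 𝒜 0` is a
simple ring, and suppose that for every `γ ≠ 0` no unit of `A` lying in `𝒜 γ` centralizes `A₀`
(injectivity of `ψ : Γ → Pic(A₀)`).  Then `A` is a simple ring. -/
theorem isSimpleRing_of_stronglyGraded_of_simple_gradeZero
    {Γ : Type*} [AddCommGroup Γ] [DecidableEq Γ]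
    {A : Type*} [Ring A] (𝒜 : Γ → AddSubgroup A) [GradedRing 𝒜]
    (hstrong : IsStronglyGraded 𝒜)
    (hsimple : IsSimpleRing (𝒜 0))
    (hinj : ∀ γ : Γ, γ ≠ 0 →
      ¬∃ u : Aˣ, (u : A) ∈ 𝒜 γ ∧ ∀ a ∈ 𝒜 0, (u : A) * a = a * (u : A)) :
    IsSimpleRing A := by
  classical
  haveI := hsimple
  -- A is nontrivial
  haveI ntA : Nontrivial A := by
    by_contra h
    rw [not_nontrivial_iff_subsingleton] at h
    haveI : Subsingleton ↥(𝒜 0) := ⟨fun a b => Subtype.ext (Subsingleton.elim _ _)⟩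
    exact not_subsingleton ↥(𝒜 0) ‹_›
  -- an element all of whose components vanish is zero
  have hzero : ∀ z : A, (∀ γ : Γ, DirectSum.decompose 𝒜 z γ = 0) → z = 0 := by
    intro z h
    have hs : (DirectSum.decompose 𝒜 z).support = ∅ := by
      ext γ
      simp [DFinsupp.mem_support_iff, h γ]
    have hsum := DirectSum.sum_support_decompose 𝒜 z
    rw [hs, Finset.sum_empty] at hsum
    exact hsum.symm
  refine IsSimpleRing.of_eq_bot_or_eq_top fun I => ?_
  rcases eq_or_ne I ⊥ with hI | hI
  · exact Or.inl hI
  right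
  refine I.eq_top ?_
  -- a nonzero element of I
  obtain ⟨x₀, hx₀I, hx₀⟩ : ∃ x, x ∈ I ∧ x ≠ 0 := by
    by_contra h
    push_neg at h
    refine hI (eq_bot_iff.mpr fun x hx => ?_)
    rw [TwoSidedIdeal.mem_bot]
    exact h x hx
  -- minimal support cardinality
  have hPex : ∃ k : ℕ, ∃ x, x ∈ I ∧ x ≠ 0 ∧ (DirectSum.decompose 𝒜 x).support.card = k :=
    ⟨_, x₀, hx₀I, hx₀, rfl⟩
  obtain ⟨x, hxI, hx, hxcard⟩ := Nat.find_spec hPex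
  set n := Nat.find hPex with hn
  have hmin : ∀ z ∈ I, (DirectSum.decompose 𝒜 z).support.card < n → z = 0 := by
    intro z hz hcard
    by_contra hz0
    exact Nat.find_min hPex hcard ⟨z, hz, hz0, rfl⟩
  have hnpos : 0 < n := by
    rcases Nat.eq_zero_or_pos n with h0 | h
    · exfalso
      rw [h0, Finset.card_eq_zero] at hxcard
      refine hx (hzero x fun γ => ?_)
      by_contra hne
      have : γ ∈ (DirectSum.decompose 𝒜 x).support := DFinsupp.mem_support_iff.mpr hne
      simp [hxcard] at this
    · exact h
  -- pick a degree in the support of x and shift it to 0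
  obtain ⟨γ₁, hγ₁⟩ : ∃ γ₁, γ₁ ∈ (DirectSum.decompose 𝒜 x).support := by
    have : 0 < (DirectSum.decompose 𝒜 x).support.card := by rw [hxcard]; exact hnpos
    obtain ⟨γ₁, h⟩ := Finset.card_pos.mp this
    exact ⟨γ₁, h⟩
  have hvne : (DirectSum.decompose 𝒜 x γ₁ : A) ≠ 0 := by
    intro h
    exact DFinsupp.mem_support_iff.mp hγ₁ (Subtype.ext h)
  obtain ⟨b, hbmem, hbv⟩ := aux_exists_left 𝒜 hstrong (-γ₁) hvne
  set y := b * x with hy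
  have hyI : y ∈ I := I.mul_mem_left b x hxI
  have hycomp : ∀ γ : Γ,
      (DirectSum.decompose 𝒜 y γ : A) = b * (DirectSum.decompose 𝒜 x (γ₁ + γ) : A) := by
    intro γ
    have := aux_comp_mul_left 𝒜 hbmem x γ
    rwa [neg_neg] at this
  have hy0 : (DirectSum.decompose 𝒜 y 0 : A) = b * (DirectSum.decompose 𝒜 x γ₁ : A) := by
    rw [hycomp 0, add_zero]
  have hy0ne : DirectSum.decompose 𝒜 y 0 ≠ 0 := by
    intro h
    rw [h] at hy0
    exact hbv (by simpa using hy0.symm)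
  set S := (DirectSum.decompose 𝒜 y).support with hS
  have h0S : (0 : Γ) ∈ S := DFinsupp.mem_support_iff.mpr hy0ne
  have hyne : y ≠ 0 := by
    intro h
    apply hy0ne
    rw [h, DirectSum.decompose_zero]
    rfl
  have hSsub : S ⊆ (DirectSum.decompose 𝒜 x).support.image (fun μ => -γ₁ + μ) := by
    intro γ hγ
    have hne : (DirectSum.decompose 𝒜 y γ : A) ≠ 0 :=
      fun h => DFinsupp.mem_support_iff.mp hγ (Subtype.ext h)
    have hne2 : (DirectSum.decompose 𝒜 x (γ₁ + γ) : A) ≠ 0 := by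
      intro h
      rw [hycomp γ, h, mul_zero] at hne
      exact hne rfl
    refine Finset.mem_image.mpr ⟨γ₁ + γ, DFinsupp.mem_support_iff.mpr ?_, by abel⟩
    intro h
    exact hne2 (by rw [h]; rfl)
  have hScard : S.card = n := by
    have h1 : S.card ≤ n := by
      calc S.card ≤ ((DirectSum.decompose 𝒜 x).support.image (fun μ => -γ₁ + μ)).card :=
            Finset.card_le_card hSsub
        _ ≤ (DirectSum.decompose 𝒜 x).support.card := Finset.card_image_le
        _ = n := hxcard
    have h2 : ¬ S.card < n := fun h => hyne (hmin y hyI h)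
    omega
  -- the ideal J of A₀ of degree-0 components of elements of I supported in S
  set Jc : Set ↥(𝒜 0) :=
    {a | ∃ z, z ∈ I ∧ (DirectSum.decompose 𝒜 z).support ⊆ S ∧ DirectSum.decompose 𝒜 z 0 = a}
    with hJc
  have Jzero : (0 : ↥(𝒜 0)) ∈ Jc := by
    refine ⟨0, I.zero_mem, ?_, ?_⟩ <;> rw [DirectSum.decompose_zero] <;> simp
  have Jadd : ∀ {a a' : ↥(𝒜 0)}, a ∈ Jc → a' ∈ Jc → a + a' ∈ Jc := by
    rintro a a' ⟨z, hzI, hzS, hz0⟩ ⟨z', hzI', hzS', hz0'⟩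
    refine ⟨z + z', I.add_mem hzI hzI', ?_, ?_⟩
    · intro γ hγ
      have hne := DFinsupp.mem_support_iff.mp hγ
      by_contra hc
      have h1 : DirectSum.decompose 𝒜 z γ = 0 := by
        by_contra h1; exact hc (hzS (DFinsupp.mem_support_iff.mpr h1))
      have h2 : DirectSum.decompose 𝒜 z' γ = 0 := by
        by_contra h2; exact hc (hzS' (DFinsupp.mem_support_iff.mpr h2))
      apply hne
      rw [DirectSum.decompose_add, DirectSum.add_apply, h1, h2, add_zero]
    · rw [DirectSum.decompose_add, DirectSum.add_apply, hz0, hz0']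
  have Jneg : ∀ {a : ↥(𝒜 0)}, a ∈ Jc → -a ∈ Jc := by
    rintro a ⟨z, hzI, hzS, hz0⟩
    refine ⟨-z, I.neg_mem hzI, ?_, ?_⟩
    · intro γ hγ
      apply hzS
      have hne := DFinsupp.mem_support_iff.mp hγ
      refine DFinsupp.mem_support_iff.mpr fun h => hne ?_
      rw [DirectSum.decompose_neg, DFinsupp.neg_apply, h, neg_zero]
    · rw [DirectSum.decompose_neg, DFinsupp.neg_apply, hz0]
  have Jmull : ∀ {a a' : ↥(𝒜 0)}, a' ∈ Jc → a * a' ∈ Jc := by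
    rintro a a' ⟨z, hzI, hzS, hz0⟩
    have hcomp : ∀ γ : Γ,
        (DirectSum.decompose 𝒜 ((a : A) * z) γ : A) = (a : A) * (DirectSum.decompose 𝒜 z γ : A) := by
      intro γ
      have := aux_comp_mul_left 𝒜 a.2 z γ
      rwa [neg_zero, zero_add] at this
    refine ⟨(a : A) * z, I.mul_mem_left _ _ hzI, ?_, ?_⟩
    · intro γ hγ
      apply hzS
      have hne := DFinsupp.mem_support_iff.mp hγ
      refine DFinsupp.mem_support_iff.mpr fun h => hne (Subtype.ext ?_)
      rw [hcomp γ, show DirectSum.decompose 𝒜 z γ = 0 from h]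
      simp
    · refine Subtype.ext ?_
      rw [hcomp 0, show DirectSum.decompose 𝒜 z 0 = a' from hz0]
      rfl
  have Jmulr : ∀ {a a' : ↥(𝒜 0)}, a ∈ Jc → a * a' ∈ Jc := by
    rintro a a' ⟨z, hzI, hzS, hz0⟩
    have hcomp : ∀ γ : Γ,
        (DirectSum.decompose 𝒜 (z * (a' : A)) γ : A) = (DirectSum.decompose 𝒜 z γ : A) * (a' : A) := by
      intro γ
      have := aux_comp_mul_right 𝒜 a'.2 z γ
      rwa [sub_zero] at this
    refine ⟨z * (a' : A), I.mul_mem_right _ _ hzI, ?_, ?_⟩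
    · intro γ hγ
      apply hzS
      have hne := DFinsupp.mem_support_iff.mp hγ
      refine DFinsupp.mem_support_iff.mpr fun h => hne (Subtype.ext ?_)
      rw [hcomp γ, show DirectSum.decompose 𝒜 z γ = 0 from h]
      simp
    · refine Subtype.ext ?_
      rw [hcomp 0, show DirectSum.decompose 𝒜 z 0 = a from hz0]
      rfl
  set J : TwoSidedIdeal ↥(𝒜 0) :=
    TwoSidedIdeal.mk' Jc Jzero Jadd Jneg (fun h => Jmull h) (fun h => Jmulr h) with hJ
  have hy0J : DirectSum.decompose 𝒜 y 0 ∈ J := by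
    rw [hJ, TwoSidedIdeal.mem_mk']
    exact ⟨y, hyI, le_refl _, rfl⟩
  have h1J : (1 : ↥(𝒜 0)) ∈ J := IsSimpleRing.one_mem_of_ne_zero_mem J hy0ne hy0J
  rw [hJ, TwoSidedIdeal.mem_mk'] at h1J
  obtain ⟨z, hzI, hzS, hz0⟩ := h1J
  have hz0coe : (DirectSum.decompose 𝒜 z 0 : A) = 1 := by rw [hz0]; rfl
  -- z commutes with homogeneous elements
  have hcentral_hom : ∀ (δ : Γ) (a : A), a ∈ 𝒜 δ → a * z = z * a := by
    intro δ a ha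
    set w := a * z - z * a with hw
    have hwI : w ∈ I := I.sub_mem (I.mul_mem_left _ _ hzI) (I.mul_mem_right _ _ hzI)
    have hwcomp : ∀ γ : Γ, (DirectSum.decompose 𝒜 w γ : A)
        = a * (DirectSum.decompose 𝒜 z (γ - δ) : A)
          - (DirectSum.decompose 𝒜 z (γ - δ) : A) * a := by
      intro γ
      have h1 := aux_comp_mul_left 𝒜 ha z γ
      have h2 := aux_comp_mul_right 𝒜 ha z γ
      rw [neg_add_eq_sub] at h1
      rw [hw, DirectSum.decompose_sub, DirectSum.sub_apply, AddSubgroupClass.coe_sub, h1, h2]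
    have hwδ : DirectSum.decompose 𝒜 w δ = 0 := by
      refine Subtype.ext ?_
      rw [hwcomp δ, sub_self, hz0coe, mul_one, one_mul, sub_self]
      rfl
    have hsupp : (DirectSum.decompose 𝒜 w).support ⊆ (S.erase 0).image (fun μ => δ + μ) := by
      intro γ hγ
      have hne : DirectSum.decompose 𝒜 w γ ≠ 0 := DFinsupp.mem_support_iff.mp hγ
      have hγδ : γ ≠ δ := by
        intro h
        rw [h] at hne
        exact hne hwδ
      have hz' : DirectSum.decompose 𝒜 z (γ - δ) ≠ 0 := by
        intro h
        apply hne
        refine Subtype.ext ?_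
        rw [hwcomp γ, show DirectSum.decompose 𝒜 z (γ - δ) = 0 from h]
        simp
      have hmem : γ - δ ∈ S := hzS (DFinsupp.mem_support_iff.mpr hz')
      refine Finset.mem_image.mpr ⟨γ - δ, Finset.mem_erase.mpr ⟨sub_ne_zero.mpr hγδ, hmem⟩, ?_⟩
      abel
    have hcard : (DirectSum.decompose 𝒜 w).support.card < n := by
      calc (DirectSum.decompose 𝒜 w).support.card
          ≤ ((S.erase 0).image (fun μ => δ + μ)).card := Finset.card_le_card hsupp
        _ ≤ (S.erase 0).card := Finset.card_image_le
        _ = n - 1 := by rw [Finset.card_erase_of_mem h0S, hScard]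
        _ < n := by omega
    have hw0 := hmin w hwI hcard
    rw [hw] at hw0
    exact sub_eq_zero.mp hw0
  have hcentral : ∀ a : A, a * z = z * a := by
    intro a
    conv_lhs => rw [← DirectSum.sum_support_decompose 𝒜 a]
    conv_rhs => rw [← DirectSum.sum_support_decompose 𝒜 a]
    rw [Finset.sum_mul, Finset.mul_sum]
    exact Finset.sum_congr rfl fun i _ => hcentral_hom i _ (SetLike.coe_mem _)
  -- supp z = S
  have hzne : z ≠ 0 := by
    intro h
    apply one_ne_zero (α := A)
    rw [← hz0coe, h, DirectSum.decompose_zero]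
    rfl
  have hzScard : (DirectSum.decompose 𝒜 z).support = S := by
    refine Finset.eq_of_subset_of_card_le hzS ?_
    rw [hScard]
    by_contra h
    push_neg at h
    exact hzne (hmin z hzI h)
  by_cases hScase : ∀ γ ∈ S, γ = 0
  · -- n = 1 case : z = 1
    have hSsing : S = {0} := Finset.eq_singleton_iff_unique_mem.mpr ⟨h0S, hScase⟩
    have hz1 : z = 1 := by
      conv_lhs => rw [← DirectSum.sum_support_decompose 𝒜 z]
      rw [hzScard, hSsing, Finset.sum_singleton, hz0coe]
    rw [← hz1]
    exact hzI
  · push_neg at hScase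
    obtain ⟨γ, hγS, hγ0⟩ := hScase
    exfalso
    have hwmem : (DirectSum.decompose 𝒜 z γ : A) ∈ 𝒜 γ := (DirectSum.decompose 𝒜 z γ).2
    set w : A := (DirectSum.decompose 𝒜 z γ : A) with hwdef
    have hwne : w ≠ 0 := by
      intro h
      rw [← hzScard] at hγS
      exact DFinsupp.mem_support_iff.mp hγS (Subtype.ext h)
    -- w is central
    have hwcomm_hom : ∀ (δ : Γ) (a : A), a ∈ 𝒜 δ → a * w = w * a := by
      intro δ a ha
      have h1 := DirectSum.coe_decompose_mul_add_of_left_mem 𝒜 (j := γ) ha (b := z)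
      have h2 := DirectSum.coe_decompose_mul_add_of_right_mem 𝒜 (i := γ) ha (a := z)
      rw [hcentral_hom δ a ha, add_comm δ γ, h2] at h1
      exact h1.symm
    have hwcomm : ∀ a : A, a * w = w * a := by
      intro a
      conv_lhs => rw [← DirectSum.sum_support_decompose 𝒜 a]
      conv_rhs => rw [← DirectSum.sum_support_decompose 𝒜 a]
      rw [Finset.sum_mul, Finset.mul_sum]
      exact Finset.sum_congr rfl fun i _ => hwcomm_hom i _ (SetLike.coe_mem _)
    -- the left multiples 𝒜(-γ) * w form an ideal of A₀
    set Kc : Set ↥(𝒜 0) := {a | ∃ c ∈ 𝒜 (-γ), c * w = (a : A)} with hKc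
    have Kzero : (0 : ↥(𝒜 0)) ∈ Kc := ⟨0, (𝒜 (-γ)).zero_mem, by simp⟩
    have Kadd : ∀ {a a' : ↥(𝒜 0)}, a ∈ Kc → a' ∈ Kc → a + a' ∈ Kc := by
      rintro a a' ⟨c, hc, hcw⟩ ⟨c', hc', hcw'⟩
      exact ⟨c + c', (𝒜 (-γ)).add_mem hc hc', by rw [add_mul, hcw, hcw']; rfl⟩
    have Kneg : ∀ {a : ↥(𝒜 0)}, a ∈ Kc → -a ∈ Kc := by
      rintro a ⟨c, hc, hcw⟩
      exact ⟨-c, (𝒜 (-γ)).neg_mem hc, by rw [neg_mul, hcw]; simp⟩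
    have Kmull : ∀ {a a' : ↥(𝒜 0)}, a' ∈ Kc → a * a' ∈ Kc := by
      rintro a a' ⟨c, hc, hcw⟩
      refine ⟨(a : A) * c, ?_, ?_⟩
      · have := SetLike.mul_mem_graded a.2 hc
        rwa [zero_add] at this
      · rw [mul_assoc, hcw]
        rfl
    have Kmulr : ∀ {a a' : ↥(𝒜 0)}, a ∈ Kc → a * a' ∈ Kc := by
      rintro a a' ⟨c, hc, hcw⟩
      refine ⟨c * (a' : A), ?_, ?_⟩
      · have := SetLike.mul_mem_graded hc a'.2
        rwa [add_zero] at this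
      · rw [mul_assoc, hwcomm (a' : A), ← mul_assoc, hcw]
        rfl
    set K : TwoSidedIdeal ↥(𝒜 0) :=
      TwoSidedIdeal.mk' Kc Kzero Kadd Kneg (fun h => Kmull h) (fun h => Kmulr h) with hK
    obtain ⟨c₀, hc₀, hc₀w⟩ := aux_exists_left 𝒜 hstrong (-γ) hwne
    have hc₀mem : c₀ * w ∈ 𝒜 0 := by
      have := SetLike.mul_mem_graded hc₀ hwmem
      rwa [neg_add_cancel] at this
    have hKne : (⟨c₀ * w, hc₀mem⟩ : ↥(𝒜 0)) ≠ 0 := by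
      intro h
      exact hc₀w (by simpa using congrArg Subtype.val h)
    have hKmem : (⟨c₀ * w, hc₀mem⟩ : ↥(𝒜 0)) ∈ K := by
      rw [hK, TwoSidedIdeal.mem_mk']
      exact ⟨c₀, hc₀, rfl⟩
    have h1K : (1 : ↥(𝒜 0)) ∈ K := IsSimpleRing.one_mem_of_ne_zero_mem K hKne hKmem
    rw [hK, TwoSidedIdeal.mem_mk'] at h1K
    obtain ⟨c, hc, hcw⟩ := h1K
    have hcw1 : c * w = 1 := by rw [hcw]; rfl
    have hwc1 : w * c = 1 := by rw [← hwcomm c, hcw1]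
    exact hinj γ hγ0 ⟨⟨w, c, hwc1, hcw1⟩, hwmem, fun a _ => (hwcomm a).symm⟩
end
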